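/- arXiv:2102.12410 — 10 statements merged into one kernel-verified Lean document; each statement's English description precedes it below -/
import Mathlib

section
/- Let (F_i) be the Fibonacci sequence with F_1 = F_2 = 1 and F_{i+2} = F_{i+1} + F_i, and let S = Σ_{i=1}^∞ 1/F_i (this series converges). Then a real number x admits a Fibonacci expansion, i.e., there exists (c_i) ∈ {0,1}^ℕ with x = Σ_{i=1}^∞ c_i / F_i, if and only if x ∈ [0, S]. -/
open Filter

noncomputable def fr : ℕ → ℝ := fun n => 1 / (Nat.fib (n + 1) : ℝ)

lemma fr_pos (n : ℕ) : 0 < fr n := by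
  have h := Nat.fib_pos.2 n.succ_pos
  have : (0:ℝ) < Nat.fib (n+1) := by exact_mod_cast h
  simp only [fr]; positivity

lemma pow_two_le : ∀ n, 2 ^ n ≤ 2 * (Nat.fib (n+1))^2 := by
  have key : ∀ n, 2 ^ n ≤ 2 * (Nat.fib (n+1))^2 ∧ 2 ^ (n+1) ≤ 2 * (Nat.fib (n+2))^2 := by
    intro n
    induction n with
    | zero => simp
    | succ k ih =>
      refine ⟨ih.2, ?_⟩
      have h1 : Nat.fib (k+3) = Nat.fib (k+2) + Nat.fib (k+1) := by
        rw [Nat.fib_add_two]; ring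
      have h2 : Nat.fib (k+1) ≤ Nat.fib (k+2) := Nat.fib_le_fib_succ
      have h3 : 2 * Nat.fib (k+1) ≤ Nat.fib (k+3) := by omega
      have h4 := Nat.pow_le_pow_left h3 2
      have h5 : 2^(k+1+1) = 4 * 2^k := by ring
      nlinarith [ih.1]
  exact fun n => (key n).1

lemma summable_fr : Summable fr := by
  set s := Real.sqrt 2 with hs
  have hs1 : 1 < s := by
    rw [hs, show (1:ℝ) = Real.sqrt 1 from Real.sqrt_one.symm]
    exact Real.sqrt_lt_sqrt (by norm_num) (by norm_num)
  have hs0 : 0 < s := lt_trans one_pos hs1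
  have hbound : ∀ n, fr n ≤ s * (s⁻¹)^n := by
    intro n
    have hfib : (0:ℝ) < Nat.fib (n+1) := by
      exact_mod_cast Nat.fib_pos.2 n.succ_pos
    have hs2 : s^2 = 2 := Real.sq_sqrt (by norm_num)
    have hsq : s ^ n ≤ s * Nat.fib (n+1) := by
      have hc : ((2:ℝ))^n ≤ 2 * ((Nat.fib (n+1):ℝ))^2 := by exact_mod_cast pow_two_le n
      have h1 : (s^n)^2 ≤ (s * Nat.fib (n+1))^2 := by
        calc (s^n)^2 = (s^2)^n := by ring
        _ = 2^n := by rw [hs2]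
        _ ≤ 2 * (Nat.fib (n+1):ℝ)^2 := hc
        _ = (s * Nat.fib (n+1))^2 := by rw [mul_pow, hs2]
      have h2 : (0:ℝ) ≤ s^n := le_of_lt (pow_pos hs0 n)
      have h3 : (0:ℝ) ≤ s * Nat.fib (n+1) := by positivity
      calc s^n = Real.sqrt ((s^n)^2) := (Real.sqrt_sq h2).symm
      _ ≤ Real.sqrt ((s * Nat.fib (n+1))^2) := Real.sqrt_le_sqrt h1
      _ = s * Nat.fib (n+1) := Real.sqrt_sq h3
    have : s * (s⁻¹)^n = s / s^n := by rw [inv_pow]; ring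
    rw [fr, this, div_le_div_iff₀ hfib (pow_pos hs0 n)]
    nlinarith
  refine Summable.of_nonneg_of_le (fun n => (fr_pos n).le) hbound ?_
  exact (summable_geometric_of_lt_one (by positivity) (inv_lt_one_of_one_lt₀ hs1)).mul_left s

lemma fr_le (m : ℕ) : fr m ≤ fr (m+1) + fr (m+2) + fr (m+3) := by
  set A := (Nat.fib (m+1) : ℝ) with hA
  set B := (Nat.fib (m+2) : ℝ) with hB
  have hA1 : (1:ℝ) ≤ A := by rw [hA]; exact_mod_cast Nat.fib_pos.2 m.succ_pos
  have hAB : A ≤ B := by rw [hA, hB]; exact_mod_cast Nat.fib_le_fib_succ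
  have hB2A : B ≤ 2*A := by
    rw [hA, hB]
    have : Nat.fib (m+2) = Nat.fib m + Nat.fib (m+1) := Nat.fib_add_two
    have h2 : Nat.fib m ≤ Nat.fib (m+1) := Nat.fib_le_fib_succ
    push_cast [this]
    linarith [(Nat.cast_le (α := ℝ)).2 h2]
  have h3 : (Nat.fib (m+3) : ℝ) = A + B := by
    rw [hA, hB]; exact_mod_cast congrArg (Nat.cast (R := ℝ)) (Nat.fib_add_two (n := m+1))
  have h4 : (Nat.fib (m+4) : ℝ) = A + 2*B := by
    have : Nat.fib (m+4) = Nat.fib (m+2) + Nat.fib (m+3) := Nat.fib_add_two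
    rw [this]; push_cast [h3]; ring
  have hA0 : (0:ℝ) < A := by linarith
  have hB0 : (0:ℝ) < B := by linarith
  simp only [fr]
  rw [show m+1+1 = m+2 from rfl, show m+2+1 = m+3 from rfl, show m+3+1 = m+4 from rfl,
    h3, h4, ← hA, ← hB]
  rw [div_add_div _ _ (by positivity) (by positivity), div_add_div _ _ (by positivity) (by positivity),
    div_le_div_iff₀ (by positivity) (by positivity)]
  nlinarith [sq_nonneg A, sq_nonneg B, mul_pos hA0 hB0]


/-- A real number `x` has a Fibonacci expansion `x = Σ_{i=1}^∞ c_i / F_i` with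
digits `c_i ∈ {0,1}` if and only if `x ∈ [0, S]`, where `S = Σ_{i=1}^∞ 1/F_i`. -/
theorem stmt_1 (F : ℕ → ℕ) (h1 : F 1 = 1) (h2 : F 2 = 1)
    (hrec : ∀ i, 1 ≤ i → F (i + 2) = F (i + 1) + F i)
    (S : ℝ) (hS : S = ∑' i : ℕ, (1 : ℝ) / (F (i + 1) : ℝ)) (x : ℝ) :
    (∃ c : ℕ → Fin 2, x = ∑' i : ℕ, ((c i : ℕ) : ℝ) / (F (i + 1) : ℝ)) ↔
      x ∈ Set.Icc 0 S := by
  -- F (n+1) = fib (n+1)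
  have hF : ∀ n, F (n+1) = Nat.fib (n+1) := by
    have key : ∀ n, F (n+1) = Nat.fib (n+1) ∧ F (n+2) = Nat.fib (n+2) := by
      intro n
      induction n with
      | zero => exact ⟨h1, h2⟩
      | succ k ih =>
        refine ⟨ih.2, ?_⟩
        have := hrec (k+1) (by omega)
        rw [show k+1+2 = k+3 from rfl] at this
        rw [show k+1+2 = k+3 from rfl, this, ih.1, ih.2]
        have e1 : Nat.fib (k+3) = Nat.fib (k+1) + Nat.fib (k+2) := Nat.fib_add_two
        have e2 : Nat.fib (k+2) = Nat.fib k + Nat.fib (k+1) := Nat.fib_add_two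
        omega
    exact fun n => (key n).1
  have hFr : ∀ n:ℕ, (1 : ℝ) / (F (n + 1) : ℝ) = fr n := by
    intro n; rw [fr, hF]
  -- tail sums
  set t : ℕ → ℝ := fun m => ∑' k, fr (k + m) with ht
  have hsumm : ∀ m, Summable (fun k => fr (k + m)) := fun m =>
    (summable_nat_add_iff m).2 summable_fr
  have ht0 : t 0 = S := by
    rw [hS, ht]
    simp only [add_zero]
    exact (tsum_congr (fun n => (hFr n))).symm
  have htsucc : ∀ m, t m = fr m + t (m+1) := by
    intro m
    have h := Summable.tsum_eq_zero_add (hsumm m)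
    simp only [zero_add] at h
    have h2 : ∑' (b:ℕ), fr (b+1+m) = ∑' k, fr (k+(m+1)) :=
      tsum_congr (fun k => by congr 1; omega)
    simp only [ht]
    rw [h, h2]
  have htnonneg : ∀ m, 0 ≤ t m := fun m => tsum_nonneg (fun k => (fr_pos _).le)
  have hkey : ∀ m, fr m ≤ t (m+1) := by
    intro m
    have e : t (m+1) = fr (m+1) + (fr (m+2) + (fr (m+3) + t (m+4))) := by
      rw [htsucc (m+1), htsucc (m+2), htsucc (m+3)]
    have := fr_le m
    have := htnonneg (m+4)
    linarith
  have hSnonneg : 0 ≤ S := by rw [← ht0]; exact htnonneg 0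
  constructor
  · -- forward: expansion → x ∈ [0,S]
    rintro ⟨c, rfl⟩
    have hterm : ∀ i:ℕ, ((c i : ℕ) : ℝ) / (F (i + 1) : ℝ) = (c i : ℕ) * fr i := by
      intro i; rw [← hFr i]; ring
    have hle : ∀ i:ℕ, (c i : ℕ) * fr i ≤ fr i := by
      intro i
      have : ((c i : ℕ):ℝ) ≤ 1 := by
        have := (c i).is_lt
        have : (c i : ℕ) ≤ 1 := by omega
        exact_mod_cast this
      nlinarith [fr_pos i, this]
    have hnn : ∀ i:ℕ, (0:ℝ) ≤ (c i : ℕ) * fr i := fun i => mul_nonneg (by positivity) (fr_pos i).le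
    have hsummc : Summable (fun i => ((c i : ℕ):ℝ) * fr i) :=
      Summable.of_nonneg_of_le hnn hle summable_fr
    constructor
    · rw [tsum_congr hterm]; exact tsum_nonneg hnn
    · rw [tsum_congr hterm, hS, tsum_congr hFr]
      exact Summable.tsum_le_tsum hle hsummc summable_fr
  · -- reverse: greedy
    rintro ⟨hx0, hxS⟩
    set p : ℕ → ℝ := fun n => Nat.rec 0 (fun n pn => if pn + fr n ≤ x then pn + fr n else pn) n with hp
    have hpsucc : ∀ n, p (n+1) = if p n + fr n ≤ x then p n + fr n else p n := fun n => rfl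
    set c : ℕ → Fin 2 := fun n => if p n + fr n ≤ x then 1 else 0 with hc
    have hpsum : ∀ n, ∑ i ∈ Finset.range n, ((c i : ℕ):ℝ) * fr i = p n := by
      intro n
      induction n with
      | zero => simp [hp]
      | succ k ih =>
        rw [Finset.sum_range_succ, ih, hpsucc, hc]
        by_cases h : p k + fr k ≤ x <;> simp [h]
    have hinv : ∀ n, 0 ≤ x - p n ∧ x - p n ≤ t n := by
      intro n
      induction n with
      | zero =>
        constructor
        · simpa [hp] using hx0
        · rw [ht0]; simpa [hp] using hxS
      | succ k ih =>
        rw [hpsucc]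
        by_cases h : p k + fr k ≤ x
        · rw [if_pos h]
          refine ⟨by linarith, ?_⟩
          have := htsucc k
          linarith [ih.2]
        · rw [if_neg h]
          push_neg at h
          exact ⟨ih.1, le_trans (by linarith) (hkey k)⟩
    -- t n → 0
    have htend : Tendsto t atTop (nhds 0) := by
      rw [ht]
      exact tendsto_sum_nat_add fr
    -- p n → x
    have hptend : Tendsto p atTop (nhds x) := by
      have hub : ∀ n, p n ≤ x := fun n => by linarith [(hinv n).1]
      have hlb : ∀ n, x - t n ≤ p n := fun n => by linarith [(hinv n).2]
      have h1 : Tendsto (fun n => x - t n) atTop (nhds x) := by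
        simpa using (tendsto_const_nhds (x := x)).sub htend
      exact tendsto_of_tendsto_of_tendsto_of_le_of_le h1 tendsto_const_nhds hlb hub
    have hsummc : Summable (fun i => ((c i : ℕ):ℝ) * fr i) := by
      refine Summable.of_nonneg_of_le (fun i => mul_nonneg (by positivity) (fr_pos i).le) (fun i => ?_) summable_fr
      have : ((c i : ℕ):ℝ) ≤ 1 := by
        have := (c i).is_lt
        have : (c i : ℕ) ≤ 1 := by omega
        exact_mod_cast this
      nlinarith [fr_pos i]
    have := hsummc.hasSum.tendsto_sum_nat
    rw [show (fun n => ∑ i ∈ Finset.range n, ((c i : ℕ):ℝ) * fr i) = p from funext hpsum] at this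
    have hx : ∑' i, ((c i : ℕ):ℝ) * fr i = x := tendsto_nhds_unique this hptend
    refine ⟨c, ?_⟩
    rw [← hx]
    exact tsum_congr (fun i => by rw [← hFr i]; ring)
end

section
/- Let φ = (1+√5)/2 be the Golden ratio and let q ∈ (1, φ). Then for every real number x ∈ (0, 1/(q−1)), the set of sequences (c_i) ∈ {0,1}^ℕ satisfying x = Σ_{i=1}^∞ c_i q^{−i} has the cardinality of the continuum. -/
set_option linter.unusedSectionVars false

open scoped Classical

/-- The "overlap" region where both digits 0 and 1 can be chosen. -/
def ejkU (q y : ℝ) : Prop := 1/q < y ∧ y < 1/(q*(q-1))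

/-- One step of the expansion algorithm on a pair (current point, bits used). -/
noncomputable def ejkNext (q : ℝ) (b : ℕ → Bool) (p : ℝ × ℕ) : ℝ × ℕ :=
  if ejkU q p.1 then
    (q * p.1 - (if b p.2 then 1 else 0), p.2 + 1)
  else if p.1 ≤ 1/q then (q * p.1, p.2)
  else (q * p.1 - 1, p.2)

/-- The trajectory of the algorithm started at `x` with bit stream `b`. -/
noncomputable def ejkTraj (q : ℝ) (b : ℕ → Bool) (x : ℝ) : ℕ → ℝ × ℕ
  | 0 => (x, 0)
  | n + 1 => ejkNext q b (ejkTraj q b x n)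

/-- The digit sequence produced by the algorithm. -/
noncomputable def ejkDigit (q : ℝ) (b : ℕ → Bool) (x : ℝ) (n : ℕ) : Fin 2 :=
  if ejkU q (ejkTraj q b x n).1 then
    (if b (ejkTraj q b x n).2 then 1 else 0)
  else if (ejkTraj q b x n).1 ≤ 1/q then 0 else 1

lemma ejkTraj_succ (q : ℝ) (b : ℕ → Bool) (x : ℝ) (n : ℕ) :
    ejkTraj q b x (n+1) = ejkNext q b (ejkTraj q b x n) := rfl

lemma ejk_step (q : ℝ) (b : ℕ → Bool) (x : ℝ) (n : ℕ) :
    (ejkTraj q b x (n+1)).1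
      = q * (ejkTraj q b x n).1 - ((ejkDigit q b x n : ℕ) : ℝ) := by
  rw [ejkTraj_succ]
  unfold ejkNext ejkDigit
  split_ifs <;> simp

lemma ejk_k_succ (q : ℝ) (b : ℕ → Bool) (x : ℝ) (n : ℕ) :
    (ejkTraj q b x (n+1)).2 = (ejkTraj q b x n).2 ∨
      (ejkTraj q b x (n+1)).2 = (ejkTraj q b x n).2 + 1 := by
  rw [ejkTraj_succ]; unfold ejkNext; split_ifs <;> simp

lemma ejk_k_mono (q : ℝ) (b : ℕ → Bool) (x : ℝ) :
    Monotone fun n => (ejkTraj q b x n).2 := by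
  apply monotone_nat_of_le_succ
  intro n
  rcases ejk_k_succ q b x n with h | h <;> omega

lemma ejk_branch_k (q : ℝ) (b : ℕ → Bool) (x : ℝ) {n : ℕ}
    (h : ejkU q (ejkTraj q b x n).1) :
    (ejkTraj q b x (n+1)).2 = (ejkTraj q b x n).2 + 1 := by
  rw [ejkTraj_succ]; unfold ejkNext; rw [if_pos h]

lemma ejk_nonbranch_k (q : ℝ) (b : ℕ → Bool) (x : ℝ) {n : ℕ}
    (h : ¬ ejkU q (ejkTraj q b x n).1) :
    (ejkTraj q b x (n+1)).2 = (ejkTraj q b x n).2 := by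
  rw [ejkTraj_succ]; unfold ejkNext; rw [if_neg h]; split_ifs <;> rfl

lemma ejk_branch_of_k (q : ℝ) (b : ℕ → Bool) (x : ℝ) {n : ℕ}
    (h : (ejkTraj q b x (n+1)).2 ≠ (ejkTraj q b x n).2) :
    ejkU q (ejkTraj q b x n).1 := by
  by_contra hc; exact h (ejk_nonbranch_k q b x hc)

lemma ejk_low (q : ℝ) (b : ℕ → Bool) (x : ℝ) {n : ℕ}
    (h1 : ¬ ejkU q (ejkTraj q b x n).1) (h2 : (ejkTraj q b x n).1 ≤ 1/q) :
    (ejkTraj q b x (n+1)).1 = q * (ejkTraj q b x n).1 := by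
  rw [ejkTraj_succ]; unfold ejkNext; rw [if_neg h1, if_pos h2]

lemma ejk_high (q : ℝ) (b : ℕ → Bool) (x : ℝ) {n : ℕ}
    (h1 : ¬ ejkU q (ejkTraj q b x n).1) (h2 : ¬ (ejkTraj q b x n).1 ≤ 1/q) :
    (ejkTraj q b x (n+1)).1 = q * (ejkTraj q b x n).1 - 1 := by
  rw [ejkTraj_succ]; unfold ejkNext; rw [if_neg h1, if_neg h2]

lemma ejk_branch_digit (q : ℝ) (b : ℕ → Bool) (x : ℝ) {n : ℕ}
    (h : ejkU q (ejkTraj q b x n).1) :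
    ejkDigit q b x n = if b (ejkTraj q b x n).2 then 1 else 0 := by
  unfold ejkDigit; rw [if_pos h]

section Numeric
variable {q : ℝ} (hq1 : 1 < q) (hql : q^2 < q + 1)

include hq1 hql

lemma ejk_q2 : q < 2 := by nlinarith

lemma ejk_den_pos : 0 < q * (q - 1) := by nlinarith

lemma ejk_den_lt_one : q * (q - 1) < 1 := by nlinarith

/-- `1 < 1/(q(q-1))`. -/
lemma ejk_one_lt_v : 1 < 1/(q*(q-1)) :=
  (one_lt_div (ejk_den_pos hq1 hql)).mpr (ejk_den_lt_one hq1 hql)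

/-- `1/q < 1/(q(q-1))`. -/
lemma ejk_u_lt_v : 1/q < 1/(q*(q-1)) := by
  have h0 : (0:ℝ) < q := by linarith
  calc 1/q < 1 := by rw [div_lt_one h0]; exact hq1
  _ < 1/(q*(q-1)) := ejk_one_lt_v hq1 hql

/-- `1/(q-1) - 1 > 1/q`. -/
lemma ejk_wm1_gt_u : 1/q < 1/(q-1) - 1 := by
  have h0 : (0:ℝ) < q := by linarith
  have h1 : (0:ℝ) < q - 1 := by linarith
  rw [div_lt_iff₀ h0]
  rw [show 1/(q-1) - 1 = (2-q)/(q-1) by field_simp; ring]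
  rw [div_mul_eq_mul_div, lt_div_iff₀ h1]
  nlinarith

/-- `q * (1/(q(q-1))) = 1/(q-1)`. -/
lemma ejk_qv : q * (1/(q*(q-1))) = 1/(q-1) := by
  have h0 : q ≠ 0 := by linarith
  have h1 : q - 1 ≠ 0 := by intro h; nlinarith
  field_simp

/-- `q * (1/(q-1)) - 1 = 1/(q-1)`. -/
lemma ejk_qw : q * (1/(q-1)) - 1 = 1/(q-1) := by
  have h1 : q - 1 ≠ 0 := by intro h; nlinarith
  field_simp
  ring

lemma ejk_qu : q * (1/q) = 1 := by
  have h0 : q ≠ 0 := by linarith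
  field_simp

lemma ejk_one_lt_w : 1 < 1/(q-1) := by
  have h1 : (0:ℝ) < q - 1 := by linarith
  rw [lt_div_iff₀ h1]; nlinarith

end Numeric

/-- Invariant: the trajectory stays in the open interval `(0, 1/(q-1))`. -/
lemma ejk_inv {q : ℝ} (hq1 : 1 < q) (hql : q^2 < q + 1) (b : ℕ → Bool) {x : ℝ}
    (hx1 : 0 < x) (hx2 : x < 1/(q-1)) :
    ∀ n, 0 < (ejkTraj q b x n).1 ∧ (ejkTraj q b x n).1 < 1/(q-1) := by
  have hq0 : (0:ℝ) < q := by linarith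
  intro n
  induction n with
  | zero => exact ⟨hx1, hx2⟩
  | succ n ih =>
    obtain ⟨h1, h2⟩ := ih
    set y := (ejkTraj q b x n).1 with hy
    by_cases hU : ejkU q y
    · obtain ⟨hu, hv⟩ := hU
      have hval : (ejkTraj q b x (n+1)).1
          = q * y - (if b (ejkTraj q b x n).2 then 1 else 0) := by
        rw [ejkTraj_succ]; unfold ejkNext
        rw [if_pos (show ejkU q (ejkTraj q b x n).1 from ⟨hu, hv⟩)]
      have hqy1 : 1 < q * y := by
        have := (mul_lt_mul_iff_right₀ hq0).mpr hu
        rwa [ejk_qu hq1 hql] at this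
      have hqy2 : q * y < 1/(q-1) := by
        have := (mul_lt_mul_iff_right₀ hq0).mpr hv
        rwa [ejk_qv hq1 hql] at this
      rw [hval]
      split_ifs
      · constructor
        · linarith
        · have := ejk_one_lt_w hq1 hql; linarith
      · exact ⟨by linarith, by linarith⟩
    · by_cases hle : y ≤ 1/q
      · rw [ejk_low q b x hU hle]
        constructor
        · positivity
        · have : q * y ≤ 1 := by
            have := mul_le_mul_of_nonneg_left hle (le_of_lt hq0)
            rwa [ejk_qu hq1 hql] at this
          have := ejk_one_lt_w hq1 hql; linarith
      · push_neg at hle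
        have hge : 1/(q*(q-1)) ≤ y := by
          by_contra hc; push_neg at hc; exact hU ⟨hle, hc⟩
        rw [ejk_high q b x hU (not_le.mpr hle)]
        constructor
        · have : 1/(q-1) ≤ q * y := by
            have := mul_le_mul_of_nonneg_left hge (le_of_lt hq0)
            rwa [ejk_qv hq1 hql] at this
          have := ejk_one_lt_w hq1 hql; linarith
        · have : q * y < q * (1/(q-1)) := (mul_lt_mul_iff_right₀ hq0).mpr h2
          have h2' := ejk_qw hq1 hql
          linarith

/-- From any point of the interval, the trajectory reaches the overlap region. -/
lemma ejk_reach {q : ℝ} (hq1 : 1 < q) (hql : q^2 < q + 1) (b : ℕ → Bool) {x : ℝ}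
    (hx1 : 0 < x) (hx2 : x < 1/(q-1)) :
    ∀ n, ∃ m, n ≤ m ∧ ejkU q (ejkTraj q b x m).1 := by
  have hq0 : (0:ℝ) < q := by linarith
  have hinv := ejk_inv hq1 hql b hx1 hx2
  intro n
  by_cases hc : (ejkTraj q b x n).1 ≤ 1/q
  · -- low case : the point grows geometrically until it passes 1/q
    have hgrow : ∃ j, ¬ ((ejkTraj q b x (n+j)).1 ≤ 1/q) := by
      by_contra hall
      push_neg at hall
      have hpow : ∀ j, (ejkTraj q b x (n+j)).1 = q^j * (ejkTraj q b x n).1 := by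
        intro j
        induction j with
        | zero => simp
        | succ j ih =>
          have hnb : ¬ ejkU q (ejkTraj q b x (n+j)).1 := by
            intro h; exact absurd (hall j) (not_le.mpr h.1)
          have := ejk_low q b x hnb (hall j)
          rw [show n + (j+1) = (n+j)+1 from rfl, this, ih]; ring
      obtain ⟨j, hj⟩ := pow_unbounded_of_one_lt ((1/q) / (ejkTraj q b x n).1) hq1
      have hxn : 0 < (ejkTraj q b x n).1 := (hinv n).1
      rw [div_lt_iff₀ hxn] at hj
      have := hall j
      rw [hpow j] at this
      linarith
    have hj := Nat.find_spec hgrow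
    have hj0 : Nat.find hgrow ≠ 0 := by
      intro h; rw [h] at hj; simp only [Nat.add_zero] at hj; exact hj hc
    obtain ⟨i, hi⟩ := Nat.exists_eq_succ_of_ne_zero hj0
    rw [hi] at hj
    have hprev : (ejkTraj q b x (n+i)).1 ≤ 1/q := by
      by_contra h
      exact Nat.find_min hgrow (by omega) h
    have hnb : ¬ ejkU q (ejkTraj q b x (n+i)).1 := by
      intro h; exact absurd hprev (not_le.mpr h.1)
    have hval := ejk_low q b x hnb hprev
    refine ⟨n + (i+1), Nat.le_add_right _ _, ?_, ?_⟩
    · rw [show n + (i+1) = (n+i)+1 from rfl] at hj ⊢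
      exact not_le.mp hj
    · rw [show n + (i+1) = (n+i)+1 from rfl, hval]
      have h1 : q * (ejkTraj q b x (n+i)).1 ≤ 1 := by
        have := mul_le_mul_of_nonneg_left hprev (le_of_lt hq0)
        rwa [ejk_qu hq1 hql] at this
      exact lt_of_le_of_lt h1 (ejk_one_lt_v hq1 hql)
  · -- high case : distance to the fixed point 1/(q-1) grows geometrically
    push_neg at hc
    by_contra hnone
    push_neg at hnone
    have key : ∀ j, 1/(q*(q-1)) ≤ (ejkTraj q b x (n+j)).1 ∧
        1/(q-1) - (ejkTraj q b x (n+j)).1 = q^j * (1/(q-1) - (ejkTraj q b x n).1) := by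
      intro j
      induction j with
      | zero =>
        refine ⟨?_, by simp⟩
        have hnU := hnone n le_rfl
        by_contra h; push_neg at h; exact hnU ⟨hc, h⟩
      | succ j ih =>
        obtain ⟨hge, hgap⟩ := ih
        have hu : 1/q < (ejkTraj q b x (n+j)).1 := by
          have := ejk_u_lt_v hq1 hql; linarith
        have hnU : ¬ ejkU q (ejkTraj q b x (n+j)).1 := hnone _ (Nat.le_add_right _ _)
        have hval := ejk_high q b x hnU (not_le.mpr hu)
        have hval' : (ejkTraj q b x (n+(j+1))).1 = q * (ejkTraj q b x (n+j)).1 - 1 := by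
          rw [show n + (j+1) = (n+j)+1 from rfl]; exact hval
        constructor
        · -- next point stays ≥ v : it is > 1/q and not in U
          have hbig : 1/q < (ejkTraj q b x (n+(j+1))).1 := by
            rw [hval']
            have : q * (1/(q*(q-1))) ≤ q * (ejkTraj q b x (n+j)).1 :=
              mul_le_mul_of_nonneg_left hge (le_of_lt hq0)
            rw [ejk_qv hq1 hql] at this
            have := ejk_wm1_gt_u hq1 hql
            linarith
          have hnU' : ¬ ejkU q (ejkTraj q b x (n+(j+1))).1 :=
            hnone _ (Nat.le_add_right _ _)
          by_contra h; push_neg at h; exact hnU' ⟨hbig, h⟩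
        · rw [hval', pow_succ]
          linear_combination q * hgap - ejk_qw hq1 hql
    -- contradiction : the gap is bounded by 1/(q-1) but grows geometrically
    have hgap0 : 0 < 1/(q-1) - (ejkTraj q b x n).1 := by linarith [(hinv n).2]
    obtain ⟨j, hj⟩ := pow_unbounded_of_one_lt ((1/(q-1)) / (1/(q-1) - (ejkTraj q b x n).1)) hq1
    rw [div_lt_iff₀ hgap0] at hj
    have h1 := (key j).2
    have h2 := (hinv (n+j)).1
    nlinarith [h1, h2, hj]

/-- The number of consumed bits is unbounded. -/
lemma ejk_k_unbounded {q : ℝ} (hq1 : 1 < q) (hql : q^2 < q + 1) (b : ℕ → Bool) {x : ℝ}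
    (hx1 : 0 < x) (hx2 : x < 1/(q-1)) :
    ∀ v, ∃ m, v ≤ (ejkTraj q b x m).2 := by
  intro v
  induction v with
  | zero => exact ⟨0, Nat.zero_le _⟩
  | succ v ih =>
    obtain ⟨m, hm⟩ := ih
    obtain ⟨m', hm', hU⟩ := ejk_reach hq1 hql b hx1 hx2 m
    refine ⟨m' + 1, ?_⟩
    have h1 := ejk_branch_k q b x hU
    have h2 : (ejkTraj q b x m).2 ≤ (ejkTraj q b x m').2 := ejk_k_mono q b x hm'
    omega

/-- For every `v` there is a step at which the trajectory is in the overlap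
region and exactly `v` bits have been consumed. -/
lemma ejk_branch_at {q : ℝ} (hq1 : 1 < q) (hql : q^2 < q + 1) (b : ℕ → Bool) {x : ℝ}
    (hx1 : 0 < x) (hx2 : x < 1/(q-1)) (v : ℕ) :
    ∃ m, (ejkTraj q b x m).2 = v ∧ ejkU q (ejkTraj q b x m).1 := by
  have hex : ∃ m, v + 1 ≤ (ejkTraj q b x m).2 :=
    ejk_k_unbounded hq1 hql b hx1 hx2 (v+1)
  have hspec := Nat.find_spec hex
  have h0 : Nat.find hex ≠ 0 := by
    intro h; rw [h] at hspec; simp [ejkTraj] at hspec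
  obtain ⟨m, hm⟩ := Nat.exists_eq_succ_of_ne_zero h0
  have hspec2 : v + 1 ≤ (ejkTraj q b x (m+1)).2 := by
    rw [hm, Nat.succ_eq_add_one] at hspec; exact hspec
  have hlt : ¬ (v + 1 ≤ (ejkTraj q b x m).2) := Nat.find_min hex (by omega)
  push_neg at hlt
  have hk : (ejkTraj q b x (m+1)).2 ≠ (ejkTraj q b x m).2 := by
    intro h; rw [h] at hspec2; omega
  have hU := ejk_branch_of_k q b x hk
  have hk1 := ejk_branch_k q b x hU
  exact ⟨m, by omega, hU⟩

/-- If two bit streams agree below `n`, the trajectories agree as long as at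
most `n` bits have been consumed. -/
lemma ejk_agree (q : ℝ) (b b' : ℕ → Bool) (x : ℝ) (n : ℕ)
    (hbb : ∀ j < n, b j = b' j) :
    ∀ m, (ejkTraj q b x m).2 ≤ n → ejkTraj q b x m = ejkTraj q b' x m := by
  intro m
  induction m with
  | zero => intro _; rfl
  | succ m ih =>
    intro hk
    have hkm : (ejkTraj q b x m).2 ≤ n :=
      le_trans (ejk_k_mono q b x (Nat.le_succ m)) hk
    have heq := ih hkm
    rw [ejkTraj_succ, ejkTraj_succ, ← heq]
    unfold ejkNext
    by_cases hU : ejkU q (ejkTraj q b x m).1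
    · rw [if_pos hU, if_pos hU]
      have : (ejkTraj q b x (m+1)).2 = (ejkTraj q b x m).2 + 1 := ejk_branch_k q b x hU
      have hlt : (ejkTraj q b x m).2 < n := by omega
      rw [hbb _ hlt]
    · rw [if_neg hU, if_neg hU]

/-- partial sums: `x = Σ_{i<n} d_i/q^{i+1} + x_n/q^n`. -/
lemma ejk_partial (q : ℝ) (hq0 : 0 < q) (b : ℕ → Bool) (x : ℝ) :
    ∀ n, x = (∑ i ∈ Finset.range n, ((ejkDigit q b x i : ℕ) : ℝ) / q ^ (i+1))
      + (ejkTraj q b x n).1 / q ^ n := by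
  have hqne : q ≠ 0 := ne_of_gt hq0
  intro n
  induction n with
  | zero => simp [ejkTraj]
  | succ n ih =>
    rw [Finset.sum_range_succ]
    have hstep := ejk_step q b x n
    have hpow : (q:ℝ) ^ (n+1) ≠ 0 := pow_ne_zero _ hqne
    have hpown : (q:ℝ) ^ n ≠ 0 := pow_ne_zero _ hqne
    have key : (ejkTraj q b x n).1 / q ^ n
        = ((ejkDigit q b x n : ℕ) : ℝ) / q ^ (n+1) + (ejkTraj q b x (n+1)).1 / q ^ (n+1) := by
      rw [hstep]
      field_simp
      ring
    rw [key] at ih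
    linarith [ih]

set_option maxHeartbeats 1000000 in
/-- The digit sequence produced by the algorithm is an expansion of `x`. -/
lemma ejk_expansion {q : ℝ} (hq1 : 1 < q) (hql : q^2 < q + 1) (b : ℕ → Bool) {x : ℝ}
    (hx1 : 0 < x) (hx2 : x < 1/(q-1)) :
    x = ∑' i : ℕ, ((ejkDigit q b x i : ℕ) : ℝ) / q ^ (i + 1) := by
  have hq0 : (0:ℝ) < q := by linarith
  have hinv := ejk_inv hq1 hql b hx1 hx2
  set f : ℕ → ℝ := fun i => ((ejkDigit q b x i : ℕ) : ℝ) / q ^ (i+1) with hf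
  have hq1' : 1/q < 1 := by rw [div_lt_one hq0]; exact hq1
  have hq1'' : (0:ℝ) ≤ 1/q := by positivity
  -- summability
  have hnn : ∀ i, 0 ≤ f i := fun i => by positivity
  have hub : ∀ i, f i ≤ (1/q) * (1/q)^i := by
    intro i
    have hd : ((ejkDigit q b x i : ℕ) : ℝ) ≤ 1 := by
      have := (ejkDigit q b x i).is_le
      exact_mod_cast this
    have hle : f i ≤ 1 / q ^ (i+1) := by
      simp only [hf]
      gcongr
    calc f i ≤ 1 / q ^ (i+1) := hle
      _ = (1/q) * (1/q)^i := by rw [div_pow, one_pow, pow_succ]; ring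
  have hgs : Summable (fun i : ℕ => (1/q) * (1/q)^i) :=
    (summable_geometric_of_lt_one hq1'' hq1').mul_left _
  have hsummable : Summable f := Summable.of_nonneg_of_le hnn hub hgs
  -- the remainder tends to 0
  have hrem : Filter.Tendsto (fun n => (ejkTraj q b x n).1 / q ^ n)
      Filter.atTop (nhds 0) := by
    apply squeeze_zero
      (fun n => div_nonneg (le_of_lt (hinv n).1) (by positivity))
      (g := fun n => (1/(q-1)) * (1/q)^n)
    · intro n
      have h1 : (ejkTraj q b x n).1 ≤ 1/(q-1) := le_of_lt (hinv n).2
      have h2 : (0:ℝ) < q ^ n := by positivity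
      calc (ejkTraj q b x n).1 / q ^ n ≤ (1/(q-1)) / q ^ n := by gcongr
        _ = (1/(q-1)) * (1/q)^n := by rw [div_pow, one_pow]; ring
    · have := (tendsto_pow_atTop_nhds_zero_of_lt_one hq1'' hq1').const_mul (1/(q-1))
      simpa using this
  -- partial sums tend to x
  have hpartial : Filter.Tendsto (fun n => ∑ i ∈ Finset.range n, f i)
      Filter.atTop (nhds x) := by
    have heq : (fun n => ∑ i ∈ Finset.range n, f i)
        = fun n => x - (ejkTraj q b x n).1 / q ^ n := by
      funext n
      have := ejk_partial q hq0 b x n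
      simp only [hf]
      linarith
    rw [heq]
    have := Filter.Tendsto.sub (tendsto_const_nhds (x := x) (f := Filter.atTop)) hrem
    simpa using this
  have := hsummable.hasSum.tendsto_sum_nat
  exact tendsto_nhds_unique hpartial this

/-- Different bit streams give different digit sequences. -/
lemma ejk_injective {q : ℝ} (hq1 : 1 < q) (hql : q^2 < q + 1) {x : ℝ}
    (hx1 : 0 < x) (hx2 : x < 1/(q-1)) :
    Function.Injective (fun b : ℕ → Bool => ejkDigit q b x) := by
  intro b b' h
  by_contra hbb
  have hex : ∃ n, b n ≠ b' n := Function.ne_iff.mp hbb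
  have hn := Nat.find_spec hex
  have hlow : ∀ j < Nat.find hex, b j = b' j := fun j hj =>
    of_not_not (Nat.find_min hex hj)
  obtain ⟨m, hk, hU⟩ := ejk_branch_at hq1 hql b hx1 hx2 (Nat.find hex)
  have heq : ejkTraj q b x m = ejkTraj q b' x m :=
    ejk_agree q b b' x _ hlow m (le_of_eq hk)
  have hd1 : ejkDigit q b x m = if b (ejkTraj q b x m).2 then 1 else 0 :=
    ejk_branch_digit q b x hU
  have hU' : ejkU q (ejkTraj q b' x m).1 := heq ▸ hU
  have hd2 : ejkDigit q b' x m = if b' (ejkTraj q b' x m).2 then 1 else 0 :=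
    ejk_branch_digit q b' x hU'
  have hsame : ejkDigit q b x m = ejkDigit q b' x m := congrFun h m
  rw [hd1, hd2, ← heq, hk] at hsame
  cases hbn : b (Nat.find hex) <;> cases hbn' : b' (Nat.find hex) <;>
    simp_all

/-- If `1 < q < φ` (the Golden ratio), then every `x ∈ (0, 1/(q-1))` has a continuum
of expansions `x = Σ_{i=1}^∞ c_i q^{-i}` with digits `c_i ∈ {0,1}`. -/
theorem stmt_2 (q : ℝ) (hq1 : 1 < q) (hq2 : q < (1 + Real.sqrt 5) / 2)
    (x : ℝ) (hx1 : 0 < x) (hx2 : x < 1 / (q - 1)) :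
    Cardinal.mk {c : ℕ → Fin 2 // x = ∑' i : ℕ, ((c i : ℕ) : ℝ) / q ^ (i + 1)} =
      Cardinal.continuum := by
  have hql : q^2 < q + 1 := by
    have h5 : Real.sqrt 5 ^ 2 = 5 := Real.sq_sqrt (by norm_num)
    have h5' : 0 ≤ Real.sqrt 5 := Real.sqrt_nonneg 5
    nlinarith
  have hx2' : x < 1/(q-1) := hx2
  apply le_antisymm
  · calc Cardinal.mk {c : ℕ → Fin 2 // x = ∑' i : ℕ, ((c i : ℕ) : ℝ) / q ^ (i + 1)}
        ≤ Cardinal.mk (ℕ → Fin 2) := Cardinal.mk_le_of_injective Subtype.val_injective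
      _ = Cardinal.continuum := by
        rw [Cardinal.mk_arrow]
        simp [Cardinal.mk_fin, Cardinal.mk_nat, Cardinal.two_power_aleph0]
  · have hΦ : Function.Injective
        (fun b : ℕ → Bool =>
          (⟨ejkDigit q b x, ejk_expansion hq1 hql b hx1 hx2'⟩ :
            {c : ℕ → Fin 2 // x = ∑' i : ℕ, ((c i : ℕ) : ℝ) / q ^ (i + 1)})) := by
      intro b b' hb
      exact ejk_injective hq1 hql hx1 hx2' (congrArg Subtype.val hb)
    calc Cardinal.continuum = Cardinal.mk (ℕ → Bool) := by
          rw [Cardinal.mk_arrow]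
          simp [Cardinal.mk_bool, Cardinal.mk_nat, Cardinal.two_power_aleph0]
      _ ≤ _ := Cardinal.mk_le_of_injective hΦ
end

section
/- Let (p_i)_{i≥1} be a sequence of positive real numbers satisfying: (i) p_i → 0; (ii) p_n < Σ_{i=n+1}^∞ p_i for all n ≥ 1; (iii) p_{n−1} < Σ_{i=n+1}^∞ p_i for infinitely many n; (iv) p_n ≤ 2 p_{n+1} for all sufficiently large n. Assume the series converges and set S = Σ_{i=1}^∞ p_i. Then for every x with 0 < x < S, the set of sequences (c_i) ∈ {0,1}^ℕ satisfying x = Σ_{i=1}^∞ c_i p_i has the cardinality of the continuum. -/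
open Filter Finset Topology

namespace Stmt3Aux


lemma lemB (p : ℕ → ℝ) (z : ℕ) (h4 : ∀ m, z ≤ m → p m ≤ 2 * p (m + 1)) :
    ∀ t : ℕ, p z ≤ (∑ i ∈ Finset.range t, p (z + 1 + i)) + p (z + t) := by
  intro t
  induction t with
  | zero => simp
  | succ t ih =>
    have h := h4 (z + t) (Nat.le_add_right _ _)
    rw [Finset.sum_range_succ]
    have e1 : z + 1 + t = z + t + 1 := by omega
    have e2 : z + (t + 1) = z + t + 1 := by omega
    rw [e1, e2]
    linarith

lemma branch (p r : ℕ → ℝ)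
    (hp : ∀ m, 1 ≤ m → 0 < p m)
    (hplim : Tendsto p atTop (𝓝 0))
    (hrr : ∀ m, r m = p (m + 1) + r (m + 1))
    (hpr : ∀ m, 1 ≤ m → p m < r m)
    (hr0 : Tendsto r atTop (𝓝 0))
    (h3' : ∀ N, ∃ n₀, N ≤ n₀ ∧ 2 ≤ n₀ ∧ p (n₀ - 1) < r n₀)
    (N4 : ℕ) (h4' : ∀ m, N4 ≤ m → p m ≤ 2 * p (m + 1))
    (n : ℕ) (y : ℝ) (hy0 : 0 < y) (hyr : y < r n) :
    ∃ j : ℕ, ∃ d : ℕ → Fin 2,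
      p (n + j + 1) < y - ∑ i ∈ Finset.range j, ((d i : ℕ) : ℝ) * p (n + i + 1) ∧
      y - ∑ i ∈ Finset.range j, ((d i : ℕ) : ℝ) * p (n + i + 1) < r (n + j + 1) := by
  classical
  by_contra hno
  push_neg at hno
  -- lazy remainder sequence
  set Y : ℕ → ℝ := fun j => Nat.rec y
    (fun j yj => if r (n + j + 1) ≤ yj then yj - p (n + j + 1) else yj) j with hYdef
  have hY0 : Y 0 = y := rfl
  have hYs : ∀ j, Y (j + 1) =
      if r (n + j + 1) ≤ Y j then Y j - p (n + j + 1) else Y j := fun j => rfl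
  set d : ℕ → Fin 2 := fun j => if r (n + j + 1) ≤ Y j then 1 else 0 with hddef
  have hdsum : ∀ j, ∑ i ∈ Finset.range j, ((d i : ℕ) : ℝ) * p (n + i + 1) = y - Y j := by
    intro j
    induction j with
    | zero => simp [hY0]
    | succ j ih =>
      rw [Finset.sum_range_succ, ih, hYs j]
      by_cases hc : r (n + j + 1) ≤ Y j
      · simp only [hddef, if_pos hc]
        norm_num
        ring
      · simp only [hddef, if_neg hc]
        norm_num
  have noB : ∀ j, p (n + j + 1) < Y j → r (n + j + 1) ≤ Y j := by
    intro j hj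
    have := hno j d
    rw [hdsum j] at this
    have h' : y - (y - Y j) = Y j := by ring
    rw [h'] at this
    exact this hj
  -- invariant
  have inv : ∀ j, 0 < Y j ∧ Y j < r (n + j) := by
    intro j
    induction j with
    | zero => exact ⟨hy0, hyr⟩
    | succ j ih =>
      have e : n + (j + 1) = n + j + 1 := by omega
      rw [hYs j, e]
      by_cases hc : r (n + j + 1) ≤ Y j
      · rw [if_pos hc]
        have hpr' := hpr (n + j + 1) (by omega)
        constructor
        · linarith
        · have := hrr (n + j)
          have hup := ih.2
          linarith
      · rw [if_neg hc]
        exact ⟨ih.1, not_le.mp hc⟩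
  -- zero step keeps Y, and then Y j ≤ p (n+j+1)
  have hzero_le : ∀ j, ¬ r (n + j + 1) ≤ Y j → Y j ≤ p (n + j + 1) := by
    intro j hc
    by_contra hgt
    exact hc (noB j (not_le.mp hgt))
  -- ones unbounded
  have hones : ∀ J, ∃ j, J ≤ j ∧ r (n + j + 1) ≤ Y j := by
    intro J
    by_contra hcon
    push_neg at hcon
    have hfroz : ∀ j, J ≤ j → Y j = Y J := by
      intro j hj
      induction j, hj using Nat.le_induction with
      | base => rfl
      | succ j hJj ih =>
        rw [hYs j, if_neg (not_le.mpr (hcon j hJj))]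
        exact ih
    have hle : ∀ j, J ≤ j → Y J ≤ p (n + j + 1) := by
      intro j hj
      have h1 : ¬ r (n + j + 1) ≤ Y j := not_le.mpr (hcon j hj)
      have := hzero_le j h1
      rw [hfroz j hj] at this
      exact this
    have hptend : Tendsto (fun j : ℕ => p (n + j + 1)) atTop (𝓝 0) := by
      apply hplim.comp
      apply tendsto_atTop_mono (fun j => by omega : ∀ j : ℕ, j ≤ n + j + 1) tendsto_id
    have : Y J ≤ 0 := ge_of_tendsto hptend (eventually_atTop.2 ⟨J, hle⟩)
    exact absurd this (not_le.mpr (inv J).1)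
  -- zeros unbounded
  have hzeros : ∀ J, ∃ j, J ≤ j ∧ ¬ r (n + j + 1) ≤ Y j := by
    intro J
    by_contra hcon
    push_neg at hcon
    have hrun : ∀ t, Y (J + t) = Y J - (r (n + J) - r (n + J + t)) := by
      intro t
      induction t with
      | zero => simp
      | succ t ih =>
        have hd : r (n + (J + t) + 1) ≤ Y (J + t) := hcon (J + t) (by omega)
        have h1 : Y (J + t + 1) = Y (J + t) - p (n + (J + t) + 1) := by
          rw [hYs (J + t), if_pos hd]
        have e2 : J + (t + 1) = J + t + 1 := by omega
        have e4 : n + J + (t + 1) = n + (J + t) + 1 := by omega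
        rw [e2, e4, h1, ih]
        have h2 := hrr (n + (J + t))
        have e5 : n + (J + t) = n + J + t := by omega
        rw [e5] at h2
        rw [show n + (J + t) + 1 = n + J + t + 1 from by omega]
        linarith

    have hrt : Tendsto (fun t : ℕ => r (n + J + t)) atTop (𝓝 0) := by
      apply hr0.comp
      apply tendsto_atTop_mono (fun t => by omega : ∀ t : ℕ, t ≤ n + J + t) tendsto_id
    have hlb : ∀ t, r (n + J) - Y J ≤ r (n + J + t) := by
      intro t
      have := (inv (J + t)).1
      rw [hrun t] at this
      linarith
    have : r (n + J) - Y J ≤ 0 := ge_of_tendsto hrt (eventually_atTop.2 ⟨0, fun t _ => hlb t⟩)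
    exact absurd this (not_le.mpr (by linarith [(inv J).2]))
  -- invariant I : Y j ≥ r (n+j) - p (n+j) after a one-step beyond N4
  obtain ⟨j₀, hj₀N, hj₀D⟩ := hones N4
  have hI : ∀ j, j₀ + 1 ≤ j → r (n + j) - p (n + j) ≤ Y j := by
    intro j hj
    induction j, hj using Nat.le_induction with
    | base =>
      rw [hYs j₀, if_pos hj₀D, show n + (j₀ + 1) = n + j₀ + 1 from by omega]
      linarith
    | succ j hj ih =>
      rw [hYs j, show n + (j + 1) = n + j + 1 from by omega]
      by_cases hc : r (n + j + 1) ≤ Y j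
      · rw [if_pos hc]; linarith
      · rw [if_neg hc]
        have h4 := h4' (n + j) (by omega)
        have := hrr (n + j)
        linarith
  obtain ⟨jz, hjz_ge, hjzD⟩ := hzeros (j₀ + 1)
  obtain ⟨n₀, hn₀ge, hn₀2, hn₀iii⟩ := h3' (n + jz + 2)
  set j₁ := n₀ - n - 1 with hj₁def
  have hj₁ : n + j₁ + 1 = n₀ := by omega
  have hjzj₁ : jz + 1 ≤ j₁ := by omega
  have hIj₁ : r (n + j₁) - p (n + j₁) ≤ Y j₁ := hI j₁ (by omega)
  have hn₀1 : n + j₁ = n₀ - 1 := by omega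
  have hrn₀ : r (n₀ - 1) = p n₀ + r n₀ := by
    have h := hrr (n₀ - 1)
    rw [show n₀ - 1 + 1 = n₀ from by omega] at h
    exact h
  have hYj₁ : p n₀ < Y j₁ := by
    rw [hn₀1, hrn₀] at hIj₁
    linarith
  have hD1 : r (n + j₁ + 1) ≤ Y j₁ := by
    apply noB
    rw [hj₁]
    exact hYj₁
  set P : ℕ → Prop := fun j => Y j < r (n + j + 1) with hPdef
  have hPjz : P jz := not_le.mp hjzD
  set zj := Nat.findGreatest P (j₁ - 1) with hzjdef
  have hzj_ge : jz ≤ zj := Nat.le_findGreatest (by omega) hPjz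
  have hzj_le : zj ≤ j₁ - 1 := Nat.findGreatest_le _
  have hPzj : P zj := Nat.findGreatest_spec (m := jz) (by omega) hPjz
  have hgreat : ∀ j, zj < j → j ≤ j₁ - 1 → r (n + j + 1) ≤ Y j := by
    intro j h1 h2
    by_contra hcc
    exact Nat.findGreatest_is_greatest h1 h2 (not_le.mp hcc)
  have hYzj1 : Y (zj + 1) = Y zj := by rw [hYs zj, if_neg (not_le.mpr hPzj)]
  have hYzjle : Y zj ≤ p (n + zj + 1) := hzero_le zj (not_le.mpr hPzj)
  have hrun : ∀ s, zj + 1 + s ≤ j₁ →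
      Y (zj + 1 + s) = Y (zj + 1) - ∑ i ∈ Finset.range s, p (n + zj + 2 + i) := by
    intro s
    induction s with
    | zero => simp
    | succ s ih =>
      intro hs
      have hs' : zj + 1 + s ≤ j₁ := by omega
      have hone : r (n + (zj + 1 + s) + 1) ≤ Y (zj + 1 + s) := by
        apply hgreat <;> omega
      have h1 : Y (zj + 1 + s + 1) = Y (zj + 1 + s) - p (n + (zj + 1 + s) + 1) := by
        rw [hYs (zj + 1 + s), if_pos hone]
      rw [show zj + 1 + (s + 1) = zj + 1 + s + 1 from by omega, h1, ih hs',
        Finset.sum_range_succ, show n + (zj + 1 + s) + 1 = n + zj + 2 + s from by omega]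
      ring
  have hfin : Y j₁ = Y (zj + 1) - ∑ i ∈ Finset.range (j₁ - 1 - zj), p (n + zj + 2 + i) := by
    have h := hrun (j₁ - 1 - zj) (by omega)
    rw [show zj + 1 + (j₁ - 1 - zj) = j₁ from by omega] at h
    exact h
  have hBB := Stmt3Aux.lemB p (n + zj + 1) (fun m hm => h4' m (by omega)) (j₁ - 1 - zj)
  rw [show n + zj + 1 + (j₁ - 1 - zj) = n₀ - 1 from by omega] at hBB
  simp only [show ∀ i, n + zj + 1 + 1 + i = n + zj + 2 + i from fun i => by omega] at hBB
  have hD1' : r n₀ ≤ Y j₁ := by rw [hj₁] at hD1; exact hD1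
  linarith


def orbit {α : Type*} (step : α → Bool → α) (s0 : α) (ε : ℕ → Bool) : ℕ → α :=
  fun j => Nat.rec s0 (fun j sj => step sj (ε j)) j

end Stmt3Aux

/-- If `(p_i)_{i ≥ 1}` is a positive sequence with `p_i → 0`,
`p_n < Σ_{i=n+1}^∞ p_i` for all `n ≥ 1`, `p_{n-1} < Σ_{i=n+1}^∞ p_i` for infinitely
many `n`, and `p_n ≤ 2 p_{n+1}` for all sufficiently large `n`, with convergent sum `S`,
then every `x ∈ (0, S)` has a continuum of expansions `x = Σ c_i p_i`, `c_i ∈ {0,1}`. -/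
theorem stmt_3 (p : ℕ → ℝ) (S : ℝ)
    (hpos : ∀ i, 1 ≤ i → 0 < p i)
    (hlim : Filter.Tendsto p Filter.atTop (nhds 0))
    (hsum : Summable (fun i => p (i + 1)))
    (h2 : ∀ n, 1 ≤ n → p n < ∑' i : ℕ, p (n + 1 + i))
    (h3 : ∀ N, ∃ n, N ≤ n ∧ 2 ≤ n ∧ p (n - 1) < ∑' i : ℕ, p (n + 1 + i))
    (h4 : ∃ N, ∀ n, N ≤ n → p n ≤ 2 * p (n + 1))
    (hS : S = ∑' i : ℕ, p (i + 1))
    (x : ℝ) (hx1 : 0 < x) (hx2 : x < S) :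
    Cardinal.mk {c : ℕ → Fin 2 // x = ∑' i : ℕ, ((c i : ℕ) : ℝ) * p (i + 1)} =
      Cardinal.continuum := by
  classical
  obtain ⟨N4, h4'⟩ := h4
  set r : ℕ → ℝ := fun m => ∑' i : ℕ, p (m + 1 + i) with hrdef
  have hrm : ∀ m, r m = ∑' i : ℕ, p (m + 1 + i) := fun m => rfl
  have hsum' : ∀ m : ℕ, Summable fun i => p (m + 1 + i) := by
    intro m
    have h := (summable_nat_add_iff (f := fun i => p (i + 1)) m).mpr hsum
    exact h.congr (fun i => by rw [show i + m + 1 = m + 1 + i from by omega])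
  have hrr : ∀ m, r m = p (m + 1) + r (m + 1) := by
    intro m
    have h := Summable.tsum_eq_zero_add (hsum' m)
    rw [hrm m, h]
    have e0 : m + 1 + 0 = m + 1 := by omega
    have e1 : (∑' b : ℕ, p (m + 1 + (b + 1))) = r (m + 1) := by
      rw [hrm (m + 1)]
      exact tsum_congr fun i => by rw [show m + 1 + (i + 1) = m + 1 + 1 + i from by omega]
    rw [e0, e1]
  have hpart : Tendsto (fun m => ∑ i ∈ Finset.range m, p (i + 1)) atTop (𝓝 S) := by
    rw [hS]; exact hsum.hasSum.tendsto_sum_nat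
  have hrS : ∀ m, r m = S - ∑ i ∈ Finset.range m, p (i + 1) := by
    intro m
    have h := Summable.sum_add_tsum_nat_add m hsum
    rw [hrm m, ← hS] at *
    have e : ∑' i : ℕ, p (i + m + 1) = ∑' i : ℕ, p (m + 1 + i) :=
      tsum_congr fun i => by rw [show i + m + 1 = m + 1 + i from by omega]
    rw [e] at h
    linarith
  have hr0' : Tendsto r atTop (𝓝 0) := by
    have h : Tendsto (fun m => S - ∑ i ∈ Finset.range m, p (i + 1)) atTop (𝓝 (S - S)) :=
      tendsto_const_nhds.sub hpart
    rw [sub_self] at h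
    exact h.congr (fun m => (hrS m).symm)
  have hpr : ∀ m, 1 ≤ m → p m < r m := fun m hm => by rw [hrm m]; exact h2 m hm
  have h3' : ∀ N, ∃ n₀, N ≤ n₀ ∧ 2 ≤ n₀ ∧ p (n₀ - 1) < r n₀ := by
    intro N
    obtain ⟨n₀, ha, hb, hc⟩ := h3 N
    exact ⟨n₀, ha, hb, by rw [hrm n₀]; exact hc⟩
  have hr0S : r 0 = S := by
    rw [hrm 0, hS]
    exact tsum_congr fun i => by rw [show 0 + 1 + i = i + 1 from by omega]
  -- choice of branching data
  have key : ∀ k : ℕ, ∀ y : ℝ, ∃ jd : ℕ × (ℕ → Fin 2), 0 < y → y < r k →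
      (p (k + jd.1 + 1) < y - ∑ i ∈ Finset.range jd.1, ((jd.2 i : ℕ) : ℝ) * p (k + i + 1) ∧
       y - ∑ i ∈ Finset.range jd.1, ((jd.2 i : ℕ) : ℝ) * p (k + i + 1) < r (k + jd.1 + 1)) := by
    intro k y
    by_cases h : 0 < y ∧ y < r k
    · obtain ⟨j, d, ha, hb⟩ :=
        Stmt3Aux.branch p r hpos hlim hrr hpr hr0' h3' N4 h4' k y h.1 h.2
      exact ⟨⟨j, d⟩, fun _ _ => ⟨ha, hb⟩⟩
    · exact ⟨⟨0, fun _ => 0⟩, fun a b => absurd ⟨a, b⟩ h⟩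
  choose F hF using key
  set step : (ℕ × ℝ × (ℕ → Fin 2)) → Bool → (ℕ × ℝ × (ℕ → Fin 2)) := fun s b =>
    ⟨s.1 + (F s.1 s.2.1).1 + 1,
     s.2.1 - (∑ i ∈ Finset.range (F s.1 s.2.1).1, (((F s.1 s.2.1).2 i : ℕ) : ℝ) * p (s.1 + i + 1))
       - (if b then 1 else 0) * p (s.1 + (F s.1 s.2.1).1 + 1),
     fun m => if m ≤ s.1 then s.2.2 m
       else if m < s.1 + (F s.1 s.2.1).1 + 1 then (F s.1 s.2.1).2 (m - s.1 - 1)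
       else if m = s.1 + (F s.1 s.2.1).1 + 1 then (if b then 1 else 0) else 0⟩ with hstepdef
  set st : (ℕ → Bool) → ℕ → ℕ × ℝ × (ℕ → Fin 2) :=
    fun ε => Stmt3Aux.orbit step ⟨0, x, fun _ => 0⟩ ε with hstdef
  have hst0 : ∀ ε, st ε 0 = ⟨0, x, fun _ => 0⟩ := fun ε => rfl
  have hstS : ∀ ε j, st ε (j + 1) = step (st ε j) (ε j) := fun ε j => rfl
  have hk : ∀ s b, (step s b).1 = s.1 + (F s.1 s.2.1).1 + 1 := fun s b => rfl
  have hyv : ∀ s b, (step s b).2.1 =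
      s.2.1 - (∑ i ∈ Finset.range (F s.1 s.2.1).1, (((F s.1 s.2.1).2 i : ℕ) : ℝ) * p (s.1 + i + 1))
        - (if b then 1 else 0) * p (s.1 + (F s.1 s.2.1).1 + 1) := fun s b => rfl
  have hg : ∀ s b m, (step s b).2.2 m =
      (if m ≤ s.1 then s.2.2 m
       else if m < s.1 + (F s.1 s.2.1).1 + 1 then (F s.1 s.2.1).2 (m - s.1 - 1)
       else if m = s.1 + (F s.1 s.2.1).1 + 1 then (if b then 1 else 0) else 0) :=
    fun s b m => rfl
  -- state invariant
  have inv1 : ∀ ε j, 0 < (st ε j).2.1 ∧ (st ε j).2.1 < r (st ε j).1 := by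
    intro ε j
    induction j with
    | zero => rw [hst0]; exact ⟨hx1, by rw [hr0S]; exact hx2⟩
    | succ j ih =>
      obtain ⟨h0, h1⟩ := ih
      have hb := hF (st ε j).1 (st ε j).2.1 h0 h1
      have hppos : 0 < p ((st ε j).1 + (F (st ε j).1 (st ε j).2.1).1 + 1) :=
        hpos _ (by omega)
      rw [hstS, hyv, hk]
      cases hεj : ε j
      · simp only [if_neg (Bool.false_ne_true)]
        constructor
        · linarith [hb.1]
        · linarith [hb.2]
      · rw [if_pos rfl]
        constructor
        · linarith [hb.1]
        · linarith [hb.2]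
  have hkmono : ∀ ε j, (st ε j).1 < (st ε (j + 1)).1 := by
    intro ε j
    rw [hstS, hk]
    omega
  have hkge : ∀ ε j, j ≤ (st ε j).1 := by
    intro ε j
    induction j with
    | zero => omega
    | succ j ih => have := hkmono ε j; omega
  have hkle : ∀ ε a b, a ≤ b → (st ε a).1 ≤ (st ε b).1 := by
    intro ε a b hab
    induction b, hab using Nat.le_induction with
    | base => exact le_refl _
    | succ b hab ih => have := hkmono ε b; omega
  have hcoh1 : ∀ ε j b m, m ≤ (st ε j).1 → (step (st ε j) b).2.2 m = (st ε j).2.2 m := by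
    intro ε j b m hm
    rw [hg, if_pos hm]
  have hcoh : ∀ ε a b, a ≤ b → ∀ m, m ≤ (st ε a).1 → (st ε b).2.2 m = (st ε a).2.2 m := by
    intro ε a b hab
    induction b, hab using Nat.le_induction with
    | base => exact fun m _ => rfl
    | succ b hab ih =>
      intro m hm
      rw [hstS, hcoh1 ε b _ m (le_trans hm (hkle ε a b hab)), ih m hm]
  have hg0 : ∀ ε j, (st ε j).2.2 0 = 0 := by
    intro ε j
    induction j with
    | zero => rfl
    | succ j ih => rw [hstS, hcoh1 ε j _ 0 (Nat.zero_le _), ih]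
  have sumsplit : ∀ (f : ℕ → ℝ) (a b : ℕ), a < b → (∑ m ∈ Finset.range (b + 1), f m)
      = (∑ m ∈ Finset.range (a + 1), f m) + (∑ m ∈ Finset.Ico (a + 1) b, f m) + f b := by
    intro f a b hab
    rw [Finset.range_eq_Ico,
      ← Finset.sum_Ico_consecutive f (Nat.zero_le (a + 1)) (by omega : a + 1 ≤ b + 1),
      Finset.sum_Ico_succ_top (by omega : a + 1 ≤ b), ← Finset.range_eq_Ico]
    ring
  have inv4 : ∀ ε j, (∑ m ∈ Finset.range ((st ε j).1 + 1), (((st ε j).2.2 m : ℕ) : ℝ) * p m)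
      = x - (st ε j).2.1 := by
    intro ε j
    induction j with
    | zero =>
      rw [hst0]
      simp
    | succ j ih =>
      have hK : (st ε (j + 1)).1 = (st ε j).1 + (F (st ε j).1 (st ε j).2.1).1 + 1 := by
        rw [hstS, hk]
      have hlow : ∀ m, m ∈ Finset.range ((st ε j).1 + 1) →
          (st ε (j + 1)).2.2 m = (st ε j).2.2 m := by
        intro m hm
        rw [Finset.mem_range] at hm
        rw [hstS]
        exact hcoh1 ε j _ m (by omega)
      have hmid : ∀ m, m ∈ Finset.Ico ((st ε j).1 + 1)
            ((st ε j).1 + (F (st ε j).1 (st ε j).2.1).1 + 1) →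
          (st ε (j + 1)).2.2 m = (F (st ε j).1 (st ε j).2.1).2 (m - (st ε j).1 - 1) := by
        intro m hm
        rw [Finset.mem_Ico] at hm
        rw [hstS, hg, if_neg (by omega), if_pos (by omega)]
      have htop : (st ε (j + 1)).2.2 ((st ε j).1 + (F (st ε j).1 (st ε j).2.1).1 + 1)
          = (if ε j then 1 else 0) := by
        rw [hstS, hg, if_neg (by omega), if_neg (by omega), if_pos rfl]
      have hmid2 : (∑ m ∈ Finset.Ico ((st ε j).1 + 1)
            ((st ε j).1 + (F (st ε j).1 (st ε j).2.1).1 + 1),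
            (((st ε (j + 1)).2.2 m : ℕ) : ℝ) * p m)
          = ∑ i ∈ Finset.range (F (st ε j).1 (st ε j).2.1).1,
              (((F (st ε j).1 (st ε j).2.1).2 i : ℕ) : ℝ) * p ((st ε j).1 + i + 1) := by
        rw [Finset.sum_congr rfl (fun m hm => by rw [hmid m hm])]
        rw [Finset.sum_Ico_eq_sum_range]
        rw [show (st ε j).1 + (F (st ε j).1 (st ε j).2.1).1 + 1 - ((st ε j).1 + 1)
            = (F (st ε j).1 (st ε j).2.1).1 from by omega]
        apply Finset.sum_congr rfl
        intro i hi
        rw [show (st ε j).1 + 1 + i - (st ε j).1 - 1 = i from by omega,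
          show (st ε j).1 + 1 + i = (st ε j).1 + i + 1 from by omega]
      have htop2 : ((((st ε (j + 1)).2.2 ((st ε j).1 + (F (st ε j).1 (st ε j).2.1).1 + 1) : Fin 2) : ℕ) : ℝ)
          = (if ε j then 1 else 0) := by
        rw [htop]; cases ε j <;> simp
      have hnew : (st ε (j + 1)).2.1 = (st ε j).2.1
          - (∑ i ∈ Finset.range (F (st ε j).1 (st ε j).2.1).1,
              (((F (st ε j).1 (st ε j).2.1).2 i : ℕ) : ℝ) * p ((st ε j).1 + i + 1))
          - (if ε j then 1 else 0) * p ((st ε j).1 + (F (st ε j).1 (st ε j).2.1).1 + 1) := by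
        rw [hstS, hyv]
      have e := sumsplit (fun m => (((st ε (j + 1)).2.2 m : ℕ) : ℝ) * p m) (st ε j).1
        ((st ε j).1 + (F (st ε j).1 (st ε j).2.1).1 + 1) (by omega)
      have e2 : (∑ m ∈ Finset.range ((st ε j).1 + 1), (((st ε (j + 1)).2.2 m : ℕ) : ℝ) * p m)
          = ∑ m ∈ Finset.range ((st ε j).1 + 1), (((st ε j).2.2 m : ℕ) : ℝ) * p m :=
        Finset.sum_congr rfl (fun m hm => by rw [hlow m hm])
      rw [hK, e]
      beta_reduce
      rw [e2, hmid2, htop2, hnew, ih]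
      ring
  have inv5 : ∀ j (ε ε' : ℕ → Bool), (∀ i, i < j → ε i = ε' i) → st ε j = st ε' j := by
    intro j
    induction j with
    | zero => intro ε ε' _; rfl
    | succ j ih =>
      intro ε ε' h
      rw [hstS, hstS, ih ε ε' (fun i hi => h i (by omega)), h j (by omega)]
  set Φ : (ℕ → Bool) → ℕ → Fin 2 := fun ε i => (st ε (i + 1)).2.2 (i + 1) with hPhidef
  have hdig : ∀ ε j i, i + 1 ≤ (st ε j).1 → Φ ε i = (st ε j).2.2 (i + 1) := by
    intro ε j i him
    have hPhi : Φ ε i = (st ε (i + 1)).2.2 (i + 1) := rfl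
    rcases le_total (i + 1) j with h | h
    · rw [hPhi]
      exact (hcoh ε (i + 1) j h (i + 1) (hkge ε (i + 1))).symm
    · rw [hPhi]
      exact hcoh ε j (i + 1) h (i + 1) him
  have hnonneg : ∀ (ε : ℕ → Bool) (i : ℕ), 0 ≤ ((Φ ε i : ℕ) : ℝ) * p (i + 1) := by
    intro ε i
    exact mul_nonneg (Nat.cast_nonneg _) (le_of_lt (hpos _ (by omega)))
  have hAk : ∀ (ε : ℕ → Bool) (j : ℕ),
      (∑ i ∈ Finset.range ((st ε j).1), ((Φ ε i : ℕ) : ℝ) * p (i + 1)) = x - (st ε j).2.1 := by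
    intro ε j
    have e1 : ∀ i, i ∈ Finset.range ((st ε j).1) → ((Φ ε i : ℕ) : ℝ) * p (i + 1)
        = (((st ε j).2.2 (i + 1) : ℕ) : ℝ) * p (i + 1) := by
      intro i hi
      rw [Finset.mem_range] at hi
      rw [hdig ε j i (by omega)]
    rw [Finset.sum_congr rfl e1]
    have e2 := Finset.sum_range_succ' (fun m => (((st ε j).2.2 m : ℕ) : ℝ) * p m) ((st ε j).1)
    rw [inv4 ε j, hg0 ε j] at e2
    norm_num at e2
    rw [← e2]
  have hbound : ∀ (ε : ℕ → Bool) (N : ℕ),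
      (∑ i ∈ Finset.range N, ((Φ ε i : ℕ) : ℝ) * p (i + 1)) ≤ x := by
    intro ε N
    have h1 : (∑ i ∈ Finset.range N, ((Φ ε i : ℕ) : ℝ) * p (i + 1))
        ≤ ∑ i ∈ Finset.range ((st ε N).1), ((Φ ε i : ℕ) : ℝ) * p (i + 1) := by
      apply Finset.sum_le_sum_of_subset_of_nonneg (Finset.range_subset_range.mpr (hkge ε N))
      intro i _ _
      exact hnonneg ε i
    rw [hAk ε N] at h1
    linarith [(inv1 ε N).1]
  have hktop : ∀ ε : ℕ → Bool, Tendsto (fun j => (st ε j).1) atTop atTop := by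
    intro ε
    exact tendsto_atTop_mono (hkge ε) tendsto_id
  have hytend : ∀ ε : ℕ → Bool, Tendsto (fun j => (st ε j).2.1) atTop (𝓝 0) := by
    intro ε
    apply tendsto_of_tendsto_of_tendsto_of_le_of_le tendsto_const_nhds ((hr0').comp (hktop ε))
    · exact fun j => le_of_lt (inv1 ε j).1
    · exact fun j => le_of_lt (inv1 ε j).2
  have hAx : ∀ ε : ℕ → Bool,
      Tendsto (fun N => ∑ i ∈ Finset.range N, ((Φ ε i : ℕ) : ℝ) * p (i + 1)) atTop (𝓝 x) := by
    intro ε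
    set A := fun N => ∑ i ∈ Finset.range N, ((Φ ε i : ℕ) : ℝ) * p (i + 1) with hAdef
    have hmono : Monotone A := by
      intro a b hab
      apply Finset.sum_le_sum_of_subset_of_nonneg (Finset.range_subset_range.mpr hab)
      intro i _ _
      exact hnonneg ε i
    have hbdd : BddAbove (Set.range A) := by
      refine ⟨x, ?_⟩
      rintro v ⟨N, rfl⟩
      exact hbound ε N
    have hconv : Tendsto A atTop (𝓝 (⨆ N, A N)) := tendsto_atTop_ciSup hmono hbdd
    have hsub : Tendsto (fun j => A ((st ε j).1)) atTop (𝓝 x) := by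
      have h1 : (fun j => A ((st ε j).1)) = fun j => x - (st ε j).2.1 :=
        funext (fun j => hAk ε j)
      rw [h1]
      have h2' := (tendsto_const_nhds : Tendsto (fun _ : ℕ => x) atTop (𝓝 x)).sub (hytend ε)
      rw [sub_zero] at h2'
      exact h2'
    have hsub2 : Tendsto (fun j => A ((st ε j).1)) atTop (𝓝 (⨆ N, A N)) :=
      hconv.comp (hktop ε)
    have hux : (⨆ N, A N) = x := tendsto_nhds_unique hsub2 hsub
    rw [← hux]
    exact hconv
  have hval : ∀ ε : ℕ → Bool, x = ∑' i : ℕ, ((Φ ε i : ℕ) : ℝ) * p (i + 1) := by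
    intro ε
    have hsummable : Summable fun i => ((Φ ε i : ℕ) : ℝ) * p (i + 1) :=
      summable_of_sum_range_le (hnonneg ε) (hbound ε)
    exact (tendsto_nhds_unique hsummable.hasSum.tendsto_sum_nat (hAx ε)).symm
  have hbdigit : ∀ (s : ℕ × ℝ × (ℕ → Fin 2)) (b : Bool),
      (step s b).2.2 ((step s b).1) = (if b then 1 else 0) := by
    intro s b
    rw [hg, hk, if_neg (by omega), if_neg (lt_irrefl _), if_pos rfl]
  have hinj : ∀ ε ε' : ℕ → Bool, Φ ε = Φ ε' → ε = ε' := by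
    intro ε ε' h
    funext j
    induction j using Nat.strong_induction_on with
    | _ j ih =>
      have hstj : st ε j = st ε' j := inv5 j ε ε' (fun i hi => ih i hi)
      have hb1 : (st ε (j + 1)).2.2 ((st ε (j + 1)).1) = (if ε j then 1 else 0) := by
        rw [hstS]
        exact hbdigit (st ε j) (ε j)
      have hb2 : (st ε' (j + 1)).2.2 ((st ε' (j + 1)).1) = (if ε' j then 1 else 0) := by
        rw [hstS]
        exact hbdigit (st ε' j) (ε' j)
      have hkeq : (st ε (j + 1)).1 = (st ε' (j + 1)).1 := by
        rw [hstS, hstS, hk, hk, hstj]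
      have hK1 : 1 ≤ (st ε (j + 1)).1 := by
        have := hkge ε (j + 1)
        omega
      have hd1 : Φ ε ((st ε (j + 1)).1 - 1) = (if ε j then 1 else 0) := by
        have hh := hdig ε (j + 1) ((st ε (j + 1)).1 - 1) (by omega)
        rw [show (st ε (j + 1)).1 - 1 + 1 = (st ε (j + 1)).1 from by omega] at hh
        rw [hh, hb1]
      have hK1' : 1 ≤ (st ε' (j + 1)).1 := by rw [← hkeq]; exact hK1
      have hd2 : Φ ε' ((st ε' (j + 1)).1 - 1) = (if ε' j then 1 else 0) := by
        have hh := hdig ε' (j + 1) ((st ε' (j + 1)).1 - 1) (by omega)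
        rw [show (st ε' (j + 1)).1 - 1 + 1 = (st ε' (j + 1)).1 from by omega] at hh
        rw [hh, hb2]
      rw [h] at hd1
      rw [hkeq] at hd1
      rw [hd1] at hd2
      cases hε : ε j <;> cases hε' : ε' j <;> rw [hε, hε'] at hd2 <;> simp at hd2 ⊢ <;>
        exact absurd hd2 (by decide)
  apply le_antisymm
  · have h1 : Cardinal.mk {c : ℕ → Fin 2 // x = ∑' i : ℕ, ((c i : ℕ) : ℝ) * p (i + 1)}
        ≤ Cardinal.mk (ℕ → Fin 2) := Cardinal.mk_subtype_le _
    have h2' : Cardinal.mk (ℕ → Fin 2) = Cardinal.continuum := by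
      rw [← Cardinal.power_def, Cardinal.mk_fin, Cardinal.mk_nat]
      norm_num [Cardinal.two_power_aleph0]
    rw [h2'] at h1
    exact h1
  · have hΨ : Function.Injective (fun ε : ℕ → Bool =>
        (⟨Φ ε, hval ε⟩ : {c : ℕ → Fin 2 // x = ∑' i : ℕ, ((c i : ℕ) : ℝ) * p (i + 1)})) := by
      intro ε ε' he
      exact hinj ε ε' (congrArg Subtype.val he)
    have h1 := Cardinal.mk_le_of_injective hΨ
    have h2' : Cardinal.mk (ℕ → Bool) = Cardinal.continuum := by
      rw [← Cardinal.power_def, Cardinal.mk_bool, Cardinal.mk_nat]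
      exact Cardinal.two_power_aleph0
    rw [h2'] at h1
    exact h1
end

section
/- Let (F_i) be the Fibonacci sequence with F_1 = F_2 = 1 and F_{i+2} = F_{i+1} + F_i, and let S = Σ_{i=1}^∞ 1/F_i. Then for every x ∈ (0, S), the set of sequences (c_i) ∈ {0,1}^ℕ satisfying x = Σ_{i=1}^∞ c_i / F_i has the cardinality of the continuum. -/
namespace FibExp

def FibRec (F : ℕ → ℕ) : Prop :=
  F 1 = 1 ∧ F 2 = 1 ∧ ∀ i, 1 ≤ i → F (i + 2) = F (i + 1) + F i

variable {F : ℕ → ℕ}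

lemma FibRec.one (hF : FibRec F) : F 1 = 1 := hF.1
lemma FibRec.two (hF : FibRec F) : F 2 = 1 := hF.2.1
lemma FibRec.rec (hF : FibRec F) : ∀ i, 1 ≤ i → F (i + 2) = F (i + 1) + F i := hF.2.2

lemma FibRec.pair (hF : FibRec F) : ∀ n, 1 ≤ F (n + 1) ∧ 1 ≤ F (n + 2) := by
  intro n
  induction n with
  | zero => simp [hF.one, hF.two]
  | succ m ih =>
    refine ⟨ih.2, ?_⟩
    show 1 ≤ F (m + 3)
    have h : F (m + 3) = F (m + 2) + F (m + 1) := hF.rec (m + 1) (by omega)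
    have := ih.1; have := ih.2
    omega

lemma FibRec.pos (hF : FibRec F) {n : ℕ} (hn : 1 ≤ n) : 1 ≤ F n := by
  obtain ⟨m, rfl⟩ : ∃ m, n = m + 1 := ⟨n - 1, by omega⟩
  exact (hF.pair m).1

lemma FibRec.mono_succ (hF : FibRec F) {n : ℕ} (hn : 1 ≤ n) : F n ≤ F (n + 1) := by
  rcases Nat.lt_or_ge n 2 with h | h
  · have : n = 1 := by omega
    subst this; rw [hF.one, hF.two]
  · obtain ⟨m, rfl⟩ : ∃ m, n = m + 2 := ⟨n - 2, by omega⟩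
    show F (m + 2) ≤ F (m + 3)
    have hr : F (m + 3) = F (m + 2) + F (m + 1) := hF.rec (m + 1) (by omega)
    omega

lemma FibRec.mono (hF : FibRec F) {m n : ℕ} (hm : 1 ≤ m) (hmn : m ≤ n) : F m ≤ F n := by
  induction n, hmn using Nat.le_induction with
  | base => exact le_rfl
  | succ n hn ih => exact le_trans ih (hF.mono_succ (by omega))

lemma FibRec.double (hF : FibRec F) {n : ℕ} (hn : 1 ≤ n) : F (n + 1) ≤ 2 * F n := by
  rcases Nat.lt_or_ge n 2 with h | h
  · have : n = 1 := by omega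
    subst this
    show F 2 ≤ 2 * F 1
    rw [hF.one, hF.two]
    norm_num
  · obtain ⟨m, rfl⟩ : ∃ m, n = m + 2 := ⟨n - 2, by omega⟩
    show F (m + 3) ≤ 2 * F (m + 2)
    have hr : F (m + 3) = F (m + 2) + F (m + 1) := hF.rec (m + 1) (by omega)
    have h1 : F (m + 1) ≤ F (m + 2) := hF.mono_succ (by omega)
    omega

lemma FibRec.grow (hF : FibRec F) {n : ℕ} (hn : 1 ≤ n) : 2 * F n ≤ F (n + 2) := by
  rw [hF.rec n hn]
  have := hF.mono_succ hn
  omega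

lemma FibRec.b2 (hF : FibRec F) {n : ℕ} (hn : 1 ≤ n) : F (n + 2) ≤ 3 * F n := by
  rw [hF.rec n hn]; have := hF.double hn; omega

lemma FibRec.b3 (hF : FibRec F) {n : ℕ} (hn : 1 ≤ n) : F (n + 3) ≤ 5 * F n := by
  have h : F (n + 3) = F (n + 2) + F (n + 1) := hF.rec (n + 1) (by omega)
  have := hF.b2 hn; have := hF.double hn
  omega

lemma FibRec.s1 (hF : FibRec F) {n : ℕ} (hn : 3 ≤ n) : 3 * F (n + 1) ≤ 5 * F n := by
  obtain ⟨m, rfl⟩ : ∃ m, n = m + 3 := ⟨n - 3, by omega⟩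
  show 3 * F (m + 4) ≤ 5 * F (m + 3)
  have h1 : F (m + 4) = F (m + 3) + F (m + 2) := hF.rec (m + 2) (by omega)
  have h2 : F (m + 3) = F (m + 2) + F (m + 1) := hF.rec (m + 1) (by omega)
  have h3 : F (m + 2) ≤ 2 * F (m + 1) := hF.double (by omega)
  omega

lemma FibRec.s2 (hF : FibRec F) {n : ℕ} (hn : 3 ≤ n) : 3 * F (n + 2) ≤ 8 * F n := by
  have h1 : F (n + 2) = F (n + 1) + F n := hF.rec n (by omega)
  have := hF.s1 hn
  omega

lemma FibRec.s3 (hF : FibRec F) {n : ℕ} (hn : 3 ≤ n) : 3 * F (n + 3) ≤ 13 * F n := by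
  have h1 : F (n + 3) = F (n + 2) + F (n + 1) := hF.rec (n + 1) (by omega)
  have := hF.s1 hn; have := hF.s2 hn
  omega

lemma FibRec.s4 (hF : FibRec F) {n : ℕ} (hn : 3 ≤ n) : 3 * F (n + 4) ≤ 21 * F n := by
  have h1 : F (n + 4) = F (n + 3) + F (n + 2) := hF.rec (n + 2) (by omega)
  have := hF.s2 hn; have := hF.s3 hn
  omega

lemma FibRec.s5 (hF : FibRec F) {n : ℕ} (hn : 3 ≤ n) : 3 * F (n + 5) ≤ 34 * F n := by
  have h1 : F (n + 5) = F (n + 4) + F (n + 3) := hF.rec (n + 3) (by omega)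
  have := hF.s3 hn; have := hF.s4 hn
  omega

-- concrete values
lemma FibRec.v3 (hF : FibRec F) : F 3 = 2 := by
  have := hF.rec 1 le_rfl; rw [this, hF.one, hF.two]
lemma FibRec.v4 (hF : FibRec F) : F 4 = 3 := by
  have := hF.rec 2 (by omega); rw [this, hF.v3, hF.two]
lemma FibRec.v5 (hF : FibRec F) : F 5 = 5 := by
  have := hF.rec 3 (by omega); rw [this, hF.v4, hF.v3]
lemma FibRec.v6 (hF : FibRec F) : F 6 = 8 := by
  have := hF.rec 4 (by omega); rw [this, hF.v5, hF.v4]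
lemma FibRec.v7 (hF : FibRec F) : F 7 = 13 := by
  have := hF.rec 5 (by omega); rw [this, hF.v6, hF.v5]
lemma FibRec.v8 (hF : FibRec F) : F 8 = 21 := by
  have := hF.rec 6 (by omega); rw [this, hF.v7, hF.v6]
lemma FibRec.v9 (hF : FibRec F) : F 9 = 34 := by
  have := hF.rec 7 (by omega); rw [this, hF.v8, hF.v7]
lemma FibRec.v10 (hF : FibRec F) : F 10 = 55 := by
  have := hF.rec 8 (by omega); rw [this, hF.v9, hF.v8]
lemma FibRec.v11 (hF : FibRec F) : F 11 = 89 := by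
  have := hF.rec 9 (by omega); rw [this, hF.v10, hF.v9]

-- Catalan identity with parity, phrased via `% 2`
lemma FibRec.catalan_aux (hF : FibRec F) :
    ∀ n, ((n + 1) % 2 = 1 → F (n + 1) * F (n + 3) = F (n + 2) ^ 2 + 1) ∧
         ((n + 1) % 2 = 0 → F (n + 2) ^ 2 = F (n + 1) * F (n + 3) + 1) := by
  intro n
  induction n with
  | zero =>
    constructor
    · intro _
      show F 1 * F 3 = F 2 ^ 2 + 1
      rw [hF.v3, hF.one, hF.two]
      norm_num
    · omega
  | succ m ih =>
    have h3 : F (m + 4) = F (m + 3) + F (m + 2) := hF.rec (m + 2) (by omega)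
    have h2 : F (m + 3) = F (m + 2) + F (m + 1) := hF.rec (m + 1) (by omega)
    constructor
    · intro hodd
      have heven : (m + 1) % 2 = 0 := by omega
      have := ih.2 heven
      show F (m + 2) * F (m + 4) = F (m + 3) ^ 2 + 1
      nlinarith [this, h3, h2]
    · intro heven
      have hodd : (m + 1) % 2 = 1 := by omega
      have := ih.1 hodd
      show F (m + 3) ^ 2 = F (m + 2) * F (m + 4) + 1
      nlinarith [this, h3, h2]

lemma FibRec.catalan (hF : FibRec F) {n : ℕ} (hn : 1 ≤ n) :
    (n % 2 = 1 → F n * F (n + 2) = F (n + 1) ^ 2 + 1) ∧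
    (n % 2 = 0 → F (n + 1) ^ 2 = F n * F (n + 2) + 1) := by
  obtain ⟨m, rfl⟩ : ∃ m, n = m + 1 := ⟨n - 1, by omega⟩
  exact hF.catalan_aux m

-- Vajda: for odd m, F m * F (m+5) = F (m+2) * F (m+3) + 2
lemma FibRec.vajda (hF : FibRec F) {m : ℕ} (hm : 1 ≤ m) (hodd : m % 2 = 1) :
    F m * F (m + 5) = F (m + 2) * F (m + 3) + 2 := by
  have hcat := (hF.catalan hm).1 hodd
  have h2 : F (m + 2) = F (m + 1) + F m := hF.rec m hm
  have h3 : F (m + 3) = F (m + 2) + F (m + 1) := hF.rec (m + 1) (by omega)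
  have h4 : F (m + 4) = F (m + 3) + F (m + 2) := hF.rec (m + 2) (by omega)
  have h5 : F (m + 5) = F (m + 4) + F (m + 3) := hF.rec (m + 3) (by omega)
  nlinarith [hcat, h2, h3, h4, h5]

end FibExp
namespace FibExp

variable {F : ℕ → ℕ}

noncomputable def A (F : ℕ → ℕ) (n : ℕ) : ℝ := 1 / (F n : ℝ)

noncomputable def T (F : ℕ → ℕ) (n : ℕ) : ℝ := ∑' i : ℕ, A F (n + i)

lemma A_nonneg (F : ℕ → ℕ) (n : ℕ) : 0 ≤ A F n := by
  unfold A; positivity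

lemma FibRec.A_pos (hF : FibRec F) {n : ℕ} (hn : 1 ≤ n) : 0 < A F n := by
  unfold A
  have := hF.pos hn
  positivity

lemma FibRec.FposR (hF : FibRec F) {n : ℕ} (hn : 1 ≤ n) : (0 : ℝ) < (F n : ℝ) := by
  exact_mod_cast hF.pos hn

/-- from `q * F a ≤ p * F b` conclude `(q/p) * A F b ≤ A F a` -/
lemma FibRec.A_lower (hF : FibRec F) {a b p q : ℕ} (ha : 1 ≤ a) (hb : 1 ≤ b)
    (hp : 0 < p) (hq : 0 < q) (h : q * F a ≤ p * F b) :
    (q : ℝ) / p * A F b ≤ A F a := by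
  have hFa := hF.FposR ha
  have hFb := hF.FposR hb
  have hpR : (0:ℝ) < p := by exact_mod_cast hp
  have hqR : (0:ℝ) < q := by exact_mod_cast hq
  have hcast : (q : ℝ) * F a ≤ (p : ℝ) * F b := by exact_mod_cast h
  unfold A
  have e : (q:ℝ)/p * (1 / F b) = q / (p * F b) := by ring
  rw [e, div_le_div_iff₀ (by positivity) hFa]
  nlinarith

lemma FibRec.A_anti (hF : FibRec F) {m n : ℕ} (hm : 1 ≤ m) (hmn : m ≤ n) :
    A F n ≤ A F m := by
  unfold A
  have := hF.pos hm
  have h2 := hF.mono hm hmn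
  have h1 : (0:ℝ) < F m := hF.FposR hm
  apply one_div_le_one_div_of_le h1
  exact_mod_cast h2

lemma FibRec.A_half (hF : FibRec F) {n : ℕ} (hn : 1 ≤ n) :
    A F (n + 2) ≤ A F n / 2 := by
  have h := hF.A_lower (a := n) (b := n + 2) (p := 1) (q := 2) hn (by omega)
    (by omega) (by omega) (by have := hF.grow hn; omega)
  have hA := hF.A_pos (show 1 ≤ n + 2 by omega)
  linarith [h]

lemma FibRec.A_pow (hF : FibRec F) {n : ℕ} (hn : 1 ≤ n) (k : ℕ) :
    A F (n + 2 * k) ≤ A F n / 2 ^ k := by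
  induction k with
  | zero => simp
  | succ j ih =>
    have h1 : A F (n + 2 * (j + 1)) ≤ A F (n + 2 * j) / 2 := by
      have := hF.A_half (show 1 ≤ n + 2 * j by omega)
      calc A F (n + 2 * (j + 1)) = A F (n + 2 * j + 2) := by ring_nf
        _ ≤ A F (n + 2 * j) / 2 := this
    calc A F (n + 2 * (j + 1)) ≤ A F (n + 2 * j) / 2 := h1
      _ ≤ A F n / 2 ^ j / 2 := by linarith
      _ = A F n / 2 ^ (j + 1) := by ring

lemma FibRec.summable1 (hF : FibRec F) : Summable (fun i => A F (i + 1)) := by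
  have he : Summable (fun k : ℕ => A F (2 * k + 1)) := by
    refine Summable.of_nonneg_of_le (fun k => A_nonneg F _) (fun k => ?_) summable_geometric_two
    ·
      have h2 := hF.A_pow le_rfl k
      have h1 : A F 1 = 1 := by unfold A; rw [hF.one]; norm_num
      calc A F (2 * k + 1) = A F (1 + 2 * k) := by rw [show 2*k+1 = 1+2*k from by omega]
        _ ≤ A F 1 / 2 ^ k := h2
        _ = (1/2 : ℝ) ^ k := by rw [h1]; rw [div_pow]; norm_num
  have ho : Summable (fun k : ℕ => A F (2 * k + 1 + 1)) := by
    refine Summable.of_nonneg_of_le (fun k => A_nonneg F _) (fun k => ?_) summable_geometric_two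
    ·
      have h2 := hF.A_pow (show (1:ℕ) ≤ 2 by omega) k
      have h1 : A F 2 = 1 := by unfold A; rw [hF.two]; norm_num
      calc A F (2 * k + 1 + 1) = A F (2 + 2 * k) := by rw [show 2*k+1+1 = 2+2*k from by omega]
        _ ≤ A F 2 / 2 ^ k := h2
        _ = (1/2 : ℝ) ^ k := by rw [h1]; rw [div_pow]; norm_num
  exact Summable.even_add_odd (f := fun i => A F (i + 1)) he ho

lemma FibRec.summable_tail (hF : FibRec F) (n : ℕ) (hn : 1 ≤ n) :
    Summable (fun i => A F (n + i)) := by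
  obtain ⟨m, rfl⟩ : ∃ m, n = m + 1 := ⟨n - 1, by omega⟩
  have := (summable_nat_add_iff (f := fun i => A F (i + 1)) m).mpr hF.summable1
  apply this.congr
  intro i
  congr 1
  omega

lemma FibRec.T_succ (hF : FibRec F) {n : ℕ} (hn : 1 ≤ n) :
    T F n = A F n + T F (n + 1) := by
  unfold T
  have h1 : ∑' (b : ℕ), A F (n + (b + 1)) = ∑' (i : ℕ), A F (n + 1 + i) :=
    tsum_congr (fun i => by rw [show n + (i + 1) = n + 1 + i from by omega])
  rw [Summable.tsum_eq_zero_add (hF.summable_tail n hn), h1, Nat.add_zero]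

lemma FibRec.partial_le_T (hF : FibRec F) {n : ℕ} (hn : 1 ≤ n) (K : ℕ) :
    ∑ i ∈ Finset.range K, A F (n + i) ≤ T F n := by
  exact Summable.sum_le_tsum _ (fun i _ => A_nonneg F _) (hF.summable_tail n hn)

lemma FibRec.A_le_T (hF : FibRec F) {n : ℕ} (hn : 1 ≤ n) : A F n ≤ T F n := by
  have := hF.partial_le_T hn 1
  simpa using this

lemma FibRec.T_pos (hF : FibRec F) {n : ℕ} (hn : 1 ≤ n) : 0 < T F n :=
  lt_of_lt_of_le (hF.A_pos hn) (hF.A_le_T hn)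

lemma FibRec.T_nonneg (hF : FibRec F) {n : ℕ} (hn : 1 ≤ n) : 0 ≤ T F n :=
  le_of_lt (hF.T_pos hn)

lemma FibRec.T_anti_succ (hF : FibRec F) {n : ℕ} (hn : 1 ≤ n) : T F (n + 1) ≤ T F n := by
  rw [hF.T_succ hn]
  have := hF.A_pos hn
  linarith

lemma FibRec.T_anti (hF : FibRec F) {m n : ℕ} (hm : 1 ≤ m) (hmn : m ≤ n) :
    T F n ≤ T F m := by
  induction n, hmn using Nat.le_induction with
  | base => exact le_rfl
  | succ n hn ih => exact le_trans (hF.T_anti_succ (by omega)) ih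

lemma FibRec.T_tendsto (hF : FibRec F) :
    Filter.Tendsto (fun k => T F (k + 1)) Filter.atTop (nhds 0) := by
  have h := tendsto_sum_nat_add (fun i => A F (i + 1))
  apply h.congr
  intro k
  unfold T
  apply tsum_congr
  intro i
  congr 1
  omega

/-- telescoping: sum over Ico equals difference of tails -/
lemma FibRec.sum_Ico (hF : FibRec F) {m k : ℕ} (hm : 1 ≤ m) (hmk : m ≤ k) :
    ∑ i ∈ Finset.Ico m k, A F i = T F m - T F k := by
  induction k, hmk using Nat.le_induction with
  | base => simp
  | succ k hk ih =>
    rw [Finset.sum_Ico_succ_top hk, ih, hF.T_succ (show 1 ≤ k by omega)]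
    ring

/-- (R1) strict interval filling: `A n < T (n+1)` -/
lemma FibRec.R1 (hF : FibRec F) {n : ℕ} (hn : 1 ≤ n) : A F n < T F (n + 1) := by
  have h1 := hF.A_lower (a := n+1) (b := n) (p := 4) (q := 2) (by omega) hn (by omega) (by omega)
      (by have := hF.double hn; omega)
  have h2 := hF.A_lower (a := n+2) (b := n) (p := 3) (q := 1) (by omega) hn (by omega) (by omega)
      (by have := hF.b2 hn; omega)
  have h3 := hF.A_lower (a := n+3) (b := n) (p := 5) (q := 1) (by omega) hn (by omega) (by omega)
      (by have := hF.b3 hn; omega)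
  norm_num at h1 h2 h3
  have hsum := hF.partial_le_T (show 1 ≤ n + 1 by omega) 3
  have hexp : ∑ i ∈ Finset.range 3, A F (n + 1 + i) = A F (n+1) + A F (n+2) + A F (n+3) := by
    rw [Finset.sum_range_succ, Finset.sum_range_succ, Finset.sum_range_one]
  have hA := hF.A_pos hn
  rw [hexp] at hsum
  nlinarith

/-- (R2): `A n + A (n+2) < T (n+1)` for `n ≥ 1` -/
lemma FibRec.R2 (hF : FibRec F) {n : ℕ} (hn : 1 ≤ n) :
    A F n + A F (n + 2) < T F (n + 1) := by
  rcases Nat.lt_or_ge n 3 with h | h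
  · -- n = 1 or n = 2, concrete computations
    have hn12 : n = 1 ∨ n = 2 := by omega
    rcases hn12 with rfl | rfl
    · -- n = 1 : A 1 + A 3 = 3/2 < T 2 ; use 4 terms A2..A5
      have hsum := hF.partial_le_T (show 1 ≤ 2 by omega) 4
      have hexp : ∑ i ∈ Finset.range 4, A F (2 + i) = A F 2 + A F 3 + A F 4 + A F 5 := by
        rw [Finset.sum_range_succ, Finset.sum_range_succ, Finset.sum_range_succ,
          Finset.sum_range_one]
      rw [hexp] at hsum
      have e1 : A F 1 = 1 := by unfold A; rw [hF.one]; norm_num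
      have e2 : A F 2 = 1 := by unfold A; rw [hF.two]; norm_num
      have e3 : A F 3 = 1/2 := by unfold A; rw [hF.v3]; norm_num
      have e4 : A F 4 = 1/3 := by unfold A; rw [hF.v4]; norm_num
      have e5 : A F 5 = 1/5 := by unfold A; rw [hF.v5]; norm_num
      rw [e2, e3, e4, e5] at hsum
      rw [e1, e3]
      linarith
    · -- n = 2 : A 2 + A 4 = 4/3 < T 3 ; use 9 terms A3..A11
      have hsum := hF.partial_le_T (show 1 ≤ 3 by omega) 9
      have hexp : ∑ i ∈ Finset.range 9, A F (3 + i) =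
          A F 3 + A F 4 + A F 5 + A F 6 + A F 7 + A F 8 + A F 9 + A F 10 + A F 11 := by
        rw [Finset.sum_range_succ, Finset.sum_range_succ, Finset.sum_range_succ,
          Finset.sum_range_succ, Finset.sum_range_succ, Finset.sum_range_succ,
          Finset.sum_range_succ, Finset.sum_range_succ, Finset.sum_range_one]
      rw [hexp] at hsum
      have e2 : A F 2 = 1 := by unfold A; rw [hF.two]; norm_num
      have e3 : A F 3 = 1/2 := by unfold A; rw [hF.v3]; norm_num
      have e4 : A F 4 = 1/3 := by unfold A; rw [hF.v4]; norm_num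
      have e5 : A F 5 = 1/5 := by unfold A; rw [hF.v5]; norm_num
      have e6 : A F 6 = 1/8 := by unfold A; rw [hF.v6]; norm_num
      have e7 : A F 7 = 1/13 := by unfold A; rw [hF.v7]; norm_num
      have e8 : A F 8 = 1/21 := by unfold A; rw [hF.v8]; norm_num
      have e9 : A F 9 = 1/34 := by unfold A; rw [hF.v9]; norm_num
      have e10 : A F 10 = 1/55 := by unfold A; rw [hF.v10]; norm_num
      have e11 : A F 11 = 1/89 := by unfold A; rw [hF.v11]; norm_num
      rw [e3, e4, e5, e6, e7, e8, e9, e10, e11] at hsum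
      rw [e2, e4]
      linarith
  · -- n ≥ 3 : 5 terms with sharp constants
    have h1 := hF.A_lower (a := n+1) (b := n) (p := 5) (q := 3) (by omega) (by omega)
      (by omega) (by omega) (hF.s1 h)
    have h3 := hF.A_lower (a := n+3) (b := n) (p := 13) (q := 3) (by omega) (by omega)
      (by omega) (by omega) (hF.s3 h)
    have h4 := hF.A_lower (a := n+4) (b := n) (p := 21) (q := 3) (by omega) (by omega)
      (by omega) (by omega) (hF.s4 h)
    have h5 := hF.A_lower (a := n+5) (b := n) (p := 34) (q := 3) (by omega) (by omega)
      (by omega) (by omega) (hF.s5 h)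
    norm_num at h1 h3 h4 h5
    have hsum := hF.partial_le_T (show 1 ≤ n + 1 by omega) 5
    have hexp : ∑ i ∈ Finset.range 5, A F (n + 1 + i) =
        A F (n+1) + A F (n+2) + A F (n+3) + A F (n+4) + A F (n+5) := by
      rw [Finset.sum_range_succ, Finset.sum_range_succ, Finset.sum_range_succ,
        Finset.sum_range_succ, Finset.sum_range_one]
    rw [hexp] at hsum
    have hA := hF.A_pos (show 1 ≤ n by omega)
    nlinarith

/-- exact pair identity for odd m :
`F (m+2) * F (m+3) + 2 = 2 * (F m * F (m+3)) + F m * F (m+2)` -/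
lemma FibRec.pairNat (hF : FibRec F) {m : ℕ} (hm : 1 ≤ m) (hodd : m % 2 = 1) :
    F (m + 2) * F (m + 3) + 2 = 2 * (F m * F (m + 3)) + F m * F (m + 2) := by
  have hv := hF.vajda hm hodd
  have h5 : F (m + 5) = F (m + 4) + F (m + 3) := hF.rec (m + 3) (by omega)
  have h4 : F (m + 4) = F (m + 3) + F (m + 2) := hF.rec (m + 2) (by omega)
  calc F (m + 2) * F (m + 3) + 2 = F m * F (m + 5) := hv.symm
    _ = _ := by rw [h5, h4]; ring

/-- exact pair identity in ℝ: for odd m, `A m + beta m = 2 * A (m+2) + A (m+3)` with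
`beta m = 2 / (F m * F (m+2) * F (m+3))` -/
lemma FibRec.pairReal (hF : FibRec F) {m : ℕ} (hm : 1 ≤ m) (hodd : m % 2 = 1) :
    A F m + 2 / ((F m : ℝ) * F (m + 2) * F (m + 3)) = 2 * A F (m + 2) + A F (m + 3) := by
  have p0 := hF.FposR hm
  have p2 := hF.FposR (show 1 ≤ m + 2 by omega)
  have p3 := hF.FposR (show 1 ≤ m + 3 by omega)
  have hid := hF.pairNat hm hodd
  have hidR : (F (m+2) : ℝ) * F (m+3) + 2 = 2 * ((F m : ℝ) * F (m+3)) + (F m : ℝ) * F (m+2) := by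
    exact_mod_cast hid
  have key : ∀ a b c : ℝ, 0 < a → 0 < b → 0 < c →
      (b * c + 2 = 2 * (a * c) + a * b) →
      1 / a + 2 / (a * b * c) = 2 * (1 / b) + 1 / c := by
    intro a b c pa pb pc hid
    field_simp
    linear_combination hid
  unfold A
  exact key _ _ _ p0 p2 p3 hidR

/-- the unrolled chain: for odd m and K ≥ 1,
`A m + beta m ≤ (∑ i < 2K, A (m+2+i)) + A (m+2K)` -/
lemma FibRec.chain (hF : FibRec F) {m : ℕ} (hm : 1 ≤ m) (hodd : m % 2 = 1) :
    ∀ K, 1 ≤ K →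
      A F m + 2 / ((F m : ℝ) * F (m + 2) * F (m + 3)) ≤
        (∑ i ∈ Finset.range (2 * K), A F (m + 2 + i)) + A F (m + 2 * K) := by
  intro K
  induction K with
  | zero => omega
  | succ J ih =>
    intro _
    rcases Nat.eq_zero_or_pos J with rfl | hJ
    · -- K = 1 : equality from pairReal
      have := hF.pairReal hm hodd
      have hexp : ∑ i ∈ Finset.range 2, A F (m + 2 + i) = A F (m + 2) + A F (m + 3) := by
        rw [Finset.sum_range_succ, Finset.sum_range_one]
      rw [hexp]
      have e1 : m + 2 * 1 = m + 2 := by omega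
      rw [e1]
      linarith
    · have hih := ih hJ
      -- bound A (m + 2J) using pairReal at j = m + 2J (odd)
      have hj : (m + 2 * J) % 2 = 1 := by omega
      have hpj := hF.pairReal (show 1 ≤ m + 2 * J by omega) hj
      have hbpos : 0 < 2 / ((F (m + 2*J) : ℝ) * F (m + 2*J + 2) * F (m + 2*J + 3)) := by
        have := hF.FposR (show 1 ≤ m + 2*J by omega)
        have := hF.FposR (show 1 ≤ m + 2*J + 2 by omega)
        have := hF.FposR (show 1 ≤ m + 2*J + 3 by omega)
        positivity
      have hstep : A F (m + 2 * J) ≤ 2 * A F (m + 2*J + 2) + A F (m + 2*J + 3) := by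
        linarith
      have hexp : ∑ i ∈ Finset.range (2 * (J + 1)), A F (m + 2 + i) =
          (∑ i ∈ Finset.range (2 * J), A F (m + 2 + i))
            + A F (m + 2*J + 2) + A F (m + 2*J + 3) := by
        have e : 2 * (J + 1) = 2 * J + 1 + 1 := by omega
        rw [e, Finset.sum_range_succ, Finset.sum_range_succ]
        have e1 : m + 2 + 2 * J = m + 2*J + 2 := by omega
        have e2 : m + 2 + (2 * J + 1) = m + 2*J + 3 := by omega
        rw [e1, e2]
      rw [hexp]
      have e3 : m + 2 * (J + 1) = m + 2*J + 2 := by omega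
      rw [e3]
      linarith

/-- (ODD) sliver fact: for odd m, `A m < T (m+2)` -/
lemma FibRec.ODD (hF : FibRec F) {m : ℕ} (hm : 1 ≤ m) (hodd : m % 2 = 1) :
    A F m < T F (m + 2) := by
  set beta := 2 / ((F m : ℝ) * F (m + 2) * F (m + 3)) with hbeta
  have hbpos : 0 < beta := by
    have := hF.FposR hm
    have := hF.FposR (show 1 ≤ m + 2 by omega)
    have := hF.FposR (show 1 ≤ m + 3 by omega)
    positivity
  -- pick K with A (m + 2K) < beta
  obtain ⟨K0, hK0⟩ : ∃ K, A F m / 2 ^ K < beta := by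
    have hA := hF.A_pos hm
    obtain ⟨K, hK⟩ := exists_pow_lt_of_lt_one (show (0:ℝ) < beta / A F m by positivity)
      (show (1:ℝ)/2 < 1 by norm_num)
    refine ⟨K, ?_⟩
    have : (1/2 : ℝ)^K * A F m < beta := by
      rw [lt_div_iff₀ hA] at hK
      exact hK
    calc A F m / 2^K = (1/2:ℝ)^K * A F m := by rw [div_pow]; ring
      _ < beta := this
  set K := K0 + 1
  have hKA : A F (m + 2 * K) < beta := by
    calc A F (m + 2 * K) ≤ A F m / 2 ^ K := hF.A_pow hm K
      _ ≤ A F m / 2 ^ K0 := by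
          apply div_le_div_of_nonneg_left (le_of_lt (hF.A_pos hm)) (by positivity)
          apply pow_le_pow_right₀ (by norm_num)
          omega
      _ < beta := hK0
  have hchain := hF.chain hm hodd K (by omega)
  have hpartial := hF.partial_le_T (show 1 ≤ m + 2 by omega) (2 * K)
  rw [← hbeta] at hchain
  linarith

end FibExp
namespace FibExp

variable {F : ℕ → ℕ}

/-- a branchable state: both digit 0 and digit 1 keep the remainder strictly
inside the feasible interval -/
def Branch (F : ℕ → ℕ) (q : ℕ) (s : ℝ) : Prop := A F q < s ∧ s < T F (q + 1)

lemma FibRec.exists_small (hF : FibRec F) {n : ℕ} (hn : 1 ≤ n) {r : ℝ} (hr : 0 < r) :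
    ∃ q, n ≤ q ∧ A F q < r := by
  obtain ⟨k, hk⟩ := exists_pow_lt_of_lt_one (show (0:ℝ) < r / A F n by
    have := hF.A_pos hn; positivity) (show (1:ℝ)/2 < 1 by norm_num)
  refine ⟨n + 2 * k, by omega, ?_⟩
  have h1 := hF.A_pow hn k
  have hA := hF.A_pos hn
  rw [lt_div_iff₀ hA] at hk
  calc A F (n + 2 * k) ≤ A F n / 2 ^ k := h1
    _ = (1/2:ℝ)^k * A F n := by rw [div_pow]; ring_nf
    _ < r := hk

/-- least index `q ≥ n` with `A q < r`, with minimality -/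
lemma FibRec.least_small (hF : FibRec F) {n : ℕ} (hn : 1 ≤ n) {r : ℝ} (hr : 0 < r) :
    ∃ q, n ≤ q ∧ A F q < r ∧ ∀ j, n ≤ j → j < q → r ≤ A F j := by
  classical
  have hex : ∃ q, n ≤ q ∧ A F q < r := hF.exists_small hn hr
  refine ⟨Nat.find hex, (Nat.find_spec hex).1, (Nat.find_spec hex).2, ?_⟩
  intro j hj hjlt
  have := Nat.find_min hex hjlt
  push_neg at this
  exact this hj

/-- Core navigation lemma: from any valid state we can choose finitely many digits
leading to a branchable state. -/
lemma FibRec.reach (hF : FibRec F) {n : ℕ} {r : ℝ} (hn : 1 ≤ n)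
    (h0 : 0 < r) (hT : r < T F n) :
    ∃ (q : ℕ) (d : ℕ → Fin 2), n ≤ q ∧
      Branch F q (r - ∑ i ∈ Finset.Ico n q, ((d i : ℕ) : ℝ) * A F i) := by
  classical
  obtain ⟨q1, hnq1, hAq1, hmin1⟩ := hF.least_small hn h0
  have hq1ge : 1 ≤ q1 := le_trans hn hnq1
  have hrTq1 : r < T F q1 := by
    rcases Nat.eq_or_lt_of_le hnq1 with heq | hlt
    · rw [← heq]; exact hT
    · obtain ⟨j, rfl⟩ : ∃ j, q1 = j + 1 := ⟨q1 - 1, by omega⟩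
      have hj1 : 1 ≤ j := by omega
      calc r ≤ A F j := hmin1 j (by omega) (by omega)
        _ < T F (j + 1) := hF.R1 hj1
  by_cases hcaseA : r < T F (q1 + 1)
  · -- branch directly at q1 with zero digits
    refine ⟨q1, fun _ => 0, hnq1, ?_⟩
    have hz : ∑ i ∈ Finset.Ico n q1, (((0 : Fin 2) : ℕ) : ℝ) * A F i = 0 := by
      apply Finset.sum_eq_zero
      intro i _
      simp
    rw [hz, sub_zero]
    exact ⟨hAq1, hcaseA⟩
  · push_neg at hcaseA  -- T (q1+1) ≤ r
    have hTq1 := hF.T_succ hq1ge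
    set e := T F q1 - r with hedef
    have he0 : 0 < e := by simp only [hedef]; linarith
    have heA : e ≤ A F q1 := by simp only [hedef]; linarith
    obtain ⟨q2, hq1q2, hAq2, hmin2'⟩ := hF.least_small (show 1 ≤ q1 + 1 by omega) he0
    have hmin2 : ∀ j, q1 ≤ j → j < q2 → e ≤ A F j := by
      intro j hj hjlt
      rcases Nat.eq_or_lt_of_le hj with heq | hlt
      · rw [← heq]; exact heA
      · exact hmin2' j (by omega) hjlt
    have hq2ge : 1 ≤ q2 := by omega
    have hTq2 := hF.T_succ hq2ge
    -- digits : 1 on [q1, q2), 0 elsewhere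
    set d : ℕ → Fin 2 := fun i => if q1 ≤ i ∧ i < q2 then 1 else 0 with hddef
    have hsum : ∀ m, q2 ≤ m →
        ∑ i ∈ Finset.Ico n m, ((d i : ℕ) : ℝ) * A F i = T F q1 - T F q2 := by
      intro m hm
      have e1 : ∑ i ∈ Finset.Ico n m, ((d i : ℕ) : ℝ) * A F i =
          (∑ i ∈ Finset.Ico n q2, ((d i : ℕ) : ℝ) * A F i)
          + (∑ i ∈ Finset.Ico q2 m, ((d i : ℕ) : ℝ) * A F i) :=
        (Finset.sum_Ico_consecutive _ (by omega) hm).symm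
      have e2 : ∑ i ∈ Finset.Ico n q2, ((d i : ℕ) : ℝ) * A F i =
          (∑ i ∈ Finset.Ico n q1, ((d i : ℕ) : ℝ) * A F i)
          + (∑ i ∈ Finset.Ico q1 q2, ((d i : ℕ) : ℝ) * A F i) :=
        (Finset.sum_Ico_consecutive _ (by omega) (by omega)).symm
      rw [e1, e2]
      have h1 : ∑ i ∈ Finset.Ico n q1, ((d i : ℕ) : ℝ) * A F i = 0 := by
        apply Finset.sum_eq_zero
        intro i hi
        simp only [Finset.mem_Ico] at hi
        have : d i = 0 := by simp only [hddef]; rw [if_neg]; omega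
        rw [this]; simp
      have h3 : ∑ i ∈ Finset.Ico q2 m, ((d i : ℕ) : ℝ) * A F i = 0 := by
        apply Finset.sum_eq_zero
        intro i hi
        simp only [Finset.mem_Ico] at hi
        have : d i = 0 := by simp only [hddef]; rw [if_neg]; omega
        rw [this]; simp
      have h2 : ∑ i ∈ Finset.Ico q1 q2, ((d i : ℕ) : ℝ) * A F i =
          ∑ i ∈ Finset.Ico q1 q2, A F i := by
        apply Finset.sum_congr rfl
        intro i hi
        simp only [Finset.mem_Ico] at hi
        have : d i = 1 := by simp only [hddef]; rw [if_pos]; omega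
        rw [this]; simp
      rw [h1, h2, h3, hF.sum_Ico (by omega) (by omega)]
      ring
    have hrho : r - (T F q1 - T F q2) = T F q2 - e := by
      simp only [hedef]; ring
    by_cases hcaseB : e < T F (q2 + 1)
    · -- branch at q2
      refine ⟨q2, d, by omega, ?_⟩
      rw [hsum q2 le_rfl, hrho]
      constructor
      · linarith
      · linarith
    · push_neg at hcaseB  -- T (q2+1) ≤ e
      -- q2 must be odd
      have hq2odd : q2 % 2 = 1 := by
        by_contra hcon
        obtain ⟨j, hj⟩ : ∃ j, q2 = j + 1 := ⟨q2 - 1, by omega⟩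
        have hjodd : j % 2 = 1 := by omega
        have hjge : 1 ≤ j := by omega
        have hO := hF.ODD hjge hjodd
        have hle := hmin2 j (by omega) (by omega)
        have : T F (j + 2) ≤ e := by
          rw [show j + 2 = q2 + 1 from by omega]
          exact hcaseB
        linarith
      -- branch at q2 + 1
      obtain ⟨j, hj⟩ : ∃ j, q2 = j + 1 := ⟨q2 - 1, by omega⟩
      have hjge : 1 ≤ j := by omega
      refine ⟨q2 + 1, d, by omega, ?_⟩
      rw [hsum (q2 + 1) (by omega), hrho]
      have hR2 := hF.R2 hjge   -- A j + A (j+2) < T (j+1)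
      have hODD := hF.ODD hq2ge hq2odd  -- A q2 < T (q2+2)
      have hejm : e ≤ A F j := hmin2 j (by omega) (by omega)
      constructor
      · -- A (q2+1) < T q2 - e
        have hgoal : A F (q2 + 1) = A F (j + 2) := by rw [hj]
        have hTq2j : T F q2 = T F (j + 1) := by rw [hj]
        rw [hgoal, hTq2j]
        linarith
      · -- T q2 - e < T (q2+2)
        calc T F q2 - e ≤ T F q2 - T F (q2+1) := by linarith
          _ = A F q2 := by linarith
          _ < T F (q2 + 1 + 1) := by
              rw [show q2 + 1 + 1 = q2 + 2 from by omega]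
              exact hODD

end FibExp
namespace FibExp

variable {F : ℕ → ℕ}

open Classical in
/-- choose a branchable continuation -/
noncomputable def pick (F : ℕ → ℕ) (n : ℕ) (r : ℝ) : ℕ × (ℕ → Fin 2) :=
  if h : FibRec F ∧ 1 ≤ n ∧ 0 < r ∧ r < T F n then
    ⟨(FibRec.reach h.1 h.2.1 h.2.2.1 h.2.2.2).choose,
     (FibRec.reach h.1 h.2.1 h.2.2.1 h.2.2.2).choose_spec.choose⟩
  else ⟨n, fun _ => 0⟩

lemma pick_spec (hF : FibRec F) {n : ℕ} {r : ℝ} (hn : 1 ≤ n) (h0 : 0 < r) (hT : r < T F n) :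
    n ≤ (pick F n r).1 ∧
      Branch F (pick F n r).1
        (r - ∑ i ∈ Finset.Ico n (pick F n r).1, (((pick F n r).2 i : ℕ) : ℝ) * A F i) := by
  have hcond : FibRec F ∧ 1 ≤ n ∧ 0 < r ∧ r < T F n := ⟨hF, hn, h0, hT⟩
  unfold pick
  rw [dif_pos hcond]
  exact (FibRec.reach hcond.1 hcond.2.1 hcond.2.2.1 hcond.2.2.2).choose_spec.choose_spec

/-- start state: navigate from position 1 with remainder x -/
noncomputable def startS (F : ℕ → ℕ) (x : ℝ) : ℕ × ℝ × (ℕ → Fin 2) :=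
  ⟨(pick F 1 x).1,
   x - ∑ i ∈ Finset.Ico 1 (pick F 1 x).1, (((pick F 1 x).2 i : ℕ) : ℝ) * A F i,
   fun m => if 1 ≤ m ∧ m < (pick F 1 x).1 then (pick F 1 x).2 m else 0⟩

/-- one stage: use branch digit `bit` at the current branch position, then
navigate to the next branchable position -/
noncomputable def stepS (F : ℕ → ℕ) (s : ℕ × ℝ × (ℕ → Fin 2)) (bit : Bool) :
    ℕ × ℝ × (ℕ → Fin 2) :=
  ⟨(pick F (s.1 + 1) (s.2.1 - (if bit then A F s.1 else 0))).1,
   (s.2.1 - (if bit then A F s.1 else 0)) -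
     ∑ i ∈ Finset.Ico (s.1 + 1) (pick F (s.1 + 1) (s.2.1 - (if bit then A F s.1 else 0))).1,
       (((pick F (s.1 + 1) (s.2.1 - (if bit then A F s.1 else 0))).2 i : ℕ) : ℝ) * A F i,
   fun m =>
     if m = s.1 then (if bit then 1 else 0)
     else if s.1 + 1 ≤ m ∧ m < (pick F (s.1 + 1) (s.2.1 - (if bit then A F s.1 else 0))).1
       then (pick F (s.1 + 1) (s.2.1 - (if bit then A F s.1 else 0))).2 m
     else s.2.2 m⟩

noncomputable def stage (F : ℕ → ℕ) (x : ℝ) (b : ℕ → Bool) : ℕ → ℕ × ℝ × (ℕ → Fin 2)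
  | 0 => startS F x
  | k + 1 => stepS F (stage F x b k) (b k)

lemma stepS_good (hF : FibRec F) {s : ℕ × ℝ × (ℕ → Fin 2)}
    (h1 : 1 ≤ s.1) (hB : Branch F s.1 s.2.1) (bit : Bool) :
    (1 ≤ (stepS F s bit).1 ∧ Branch F (stepS F s bit).1 (stepS F s bit).2.1)
      ∧ s.1 < (stepS F s bit).1 := by
  obtain ⟨hA, hT⟩ := hB
  have hApos := hF.A_pos h1
  have h0' : 0 < s.2.1 - (if bit then A F s.1 else 0) := by
    rcases Bool.eq_false_or_eq_true bit with h | h <;> rw [h] <;> simp <;> linarith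
  have hT' : s.2.1 - (if bit then A F s.1 else 0) < T F (s.1 + 1) := by
    have hnn : 0 ≤ (if bit then A F s.1 else 0) := by
      rcases Bool.eq_false_or_eq_true bit with h | h <;> rw [h] <;> simp
      linarith
    linarith
  have hs := pick_spec hF (show 1 ≤ s.1 + 1 by omega) h0' hT'
  refine ⟨⟨?_, ?_⟩, ?_⟩
  · show 1 ≤ (pick F (s.1 + 1) (s.2.1 - (if bit then A F s.1 else 0))).1
    omega
  · exact hs.2
  · show s.1 < (pick F (s.1 + 1) (s.2.1 - (if bit then A F s.1 else 0))).1
    omega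

lemma stage_good (hF : FibRec F) {x : ℝ} (hx0 : 0 < x) (hxT : x < T F 1) (b : ℕ → Bool) :
    ∀ k, (1 ≤ (stage F x b k).1 ∧ Branch F (stage F x b k).1 (stage F x b k).2.1)
      ∧ (stage F x b k).1 < (stage F x b (k + 1)).1 := by
  have key : ∀ k, 1 ≤ (stage F x b k).1 ∧
      Branch F (stage F x b k).1 (stage F x b k).2.1 := by
    intro k
    induction k with
    | zero =>
      have hs := pick_spec hF (le_refl 1) hx0 hxT
      exact ⟨hs.1, hs.2⟩
    | succ k ih =>
      exact (stepS_good hF ih.1 ih.2 (b k)).1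
  intro k
  exact ⟨key k, (stepS_good hF (key k).1 (key k).2 (b k)).2⟩

end FibExp
namespace FibExp

variable {F : ℕ → ℕ}

lemma stepS_c_agree (s : ℕ × ℝ × (ℕ → Fin 2)) (bit : Bool) {m : ℕ} (hm : m < s.1) :
    (stepS F s bit).2.2 m = s.2.2 m := by
  show (if m = s.1 then _ else if s.1 + 1 ≤ m ∧ m < _ then _ else s.2.2 m) = s.2.2 m
  rw [if_neg (by omega), if_neg (by omega)]

lemma stepS_c_branch (s : ℕ × ℝ × (ℕ → Fin 2)) (bit : Bool) :
    (stepS F s bit).2.2 s.1 = (if bit then 1 else 0) := by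
  show (if s.1 = s.1 then (if bit then (1:Fin 2) else 0) else _) = _
  rw [if_pos rfl]

lemma stage_mono (hF : FibRec F) {x : ℝ} (hx0 : 0 < x) (hxT : x < T F 1) (b : ℕ → Bool)
    {k K : ℕ} (hkK : k ≤ K) : (stage F x b k).1 ≤ (stage F x b K).1 := by
  induction K, hkK using Nat.le_induction with
  | base => exact le_rfl
  | succ K hK ih =>
    have := (stage_good hF hx0 hxT b K).2
    omega

lemma stage_pos_ge (hF : FibRec F) {x : ℝ} (hx0 : 0 < x) (hxT : x < T F 1) (b : ℕ → Bool) :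
    ∀ k, k + 1 ≤ (stage F x b k).1 := by
  intro k
  induction k with
  | zero => exact ((stage_good hF hx0 hxT b 0).1).1
  | succ k ih =>
    have := (stage_good hF hx0 hxT b k).2
    omega

lemma stage_c_stable (hF : FibRec F) {x : ℝ} (hx0 : 0 < x) (hxT : x < T F 1) (b : ℕ → Bool)
    {k K : ℕ} (hkK : k ≤ K) {m : ℕ} (hm : m < (stage F x b k).1) :
    (stage F x b K).2.2 m = (stage F x b k).2.2 m := by
  induction K, hkK using Nat.le_induction with
  | base => rfl
  | succ K hK ih =>
    have hmono := stage_mono hF hx0 hxT b hK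
    have : (stage F x b (K + 1)).2.2 m = (stage F x b K).2.2 m :=
      stepS_c_agree (stage F x b K) (b K) (by omega)
    rw [this, ih]

/-- the remainder equals `x` minus the partial digit sum -/
lemma stage_sum (hF : FibRec F) {x : ℝ} (hx0 : 0 < x) (hxT : x < T F 1) (b : ℕ → Bool) :
    ∀ k, x - ∑ i ∈ Finset.Ico 1 (stage F x b k).1,
        (((stage F x b k).2.2 i : ℕ) : ℝ) * A F i = (stage F x b k).2.1 := by
  intro k
  induction k with
  | zero =>
    rw [show stage F x b 0 = startS F x from rfl]
    have hcongr : ∑ i ∈ Finset.Ico 1 (startS F x).1, (((startS F x).2.2 i : ℕ) : ℝ) * A F i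
        = ∑ i ∈ Finset.Ico 1 (pick F 1 x).1, (((pick F 1 x).2 i : ℕ) : ℝ) * A F i := by
      apply Finset.sum_congr rfl
      intro i hi
      simp only [Finset.mem_Ico] at hi
      have : (startS F x).2.2 i = (pick F 1 x).2 i := by
        show (if 1 ≤ i ∧ i < (pick F 1 x).1 then _ else _) = _
        rw [if_pos ⟨hi.1, hi.2⟩]
      rw [this]
    show x - _ = (startS F x).2.1
    rw [hcongr]
    rfl
  | succ k ih =>
    set s := stage F x b k with hsdef
    have hgood := (stage_good hF hx0 hxT b k).1
    have h1 : 1 ≤ s.1 := hgood.1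
    have hlt : s.1 < (stage F x b (k+1)).1 := (stage_good hF hx0 hxT b k).2
    -- abbreviations
    set r' := s.2.1 - (if b k then A F s.1 else 0) with hr'def
    have hQeq : (stage F x b (k+1)).1 = (pick F (s.1 + 1) r').1 := rfl
    have hsum_split :
        ∑ i ∈ Finset.Ico 1 (stage F x b (k+1)).1,
            (((stage F x b (k+1)).2.2 i : ℕ) : ℝ) * A F i
          = (∑ i ∈ Finset.Ico 1 s.1, ((s.2.2 i : ℕ) : ℝ) * A F i)
            + (if b k then A F s.1 else 0)
            + ∑ i ∈ Finset.Ico (s.1 + 1) (pick F (s.1 + 1) r').1,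
                (((pick F (s.1 + 1) r').2 i : ℕ) : ℝ) * A F i := by
      have e1 : ∑ i ∈ Finset.Ico 1 (stage F x b (k+1)).1,
            (((stage F x b (k+1)).2.2 i : ℕ) : ℝ) * A F i
          = (∑ i ∈ Finset.Ico 1 (s.1 + 1),
              (((stage F x b (k+1)).2.2 i : ℕ) : ℝ) * A F i)
            + ∑ i ∈ Finset.Ico (s.1 + 1) (stage F x b (k+1)).1,
              (((stage F x b (k+1)).2.2 i : ℕ) : ℝ) * A F i :=
        (Finset.sum_Ico_consecutive _ (by omega) (by omega)).symm
      have e2 : ∑ i ∈ Finset.Ico 1 (s.1 + 1),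
            (((stage F x b (k+1)).2.2 i : ℕ) : ℝ) * A F i
          = (∑ i ∈ Finset.Ico 1 s.1,
              (((stage F x b (k+1)).2.2 i : ℕ) : ℝ) * A F i)
            + (((stage F x b (k+1)).2.2 s.1 : ℕ) : ℝ) * A F s.1 :=
        Finset.sum_Ico_succ_top h1 _
      have e3 : ∑ i ∈ Finset.Ico 1 s.1, (((stage F x b (k+1)).2.2 i : ℕ) : ℝ) * A F i
          = ∑ i ∈ Finset.Ico 1 s.1, ((s.2.2 i : ℕ) : ℝ) * A F i := by
        apply Finset.sum_congr rfl
        intro i hi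
        simp only [Finset.mem_Ico] at hi
        rw [show (stage F x b (k+1)).2.2 i = s.2.2 i from
          stepS_c_agree s (b k) (by omega)]
      have e4 : (((stage F x b (k+1)).2.2 s.1 : ℕ) : ℝ) * A F s.1
          = (if b k then A F s.1 else 0) := by
        rw [show (stage F x b (k+1)).2.2 s.1 = (if b k then 1 else 0) from
          stepS_c_branch s (b k)]
        rcases Bool.eq_false_or_eq_true (b k) with h | h <;> rw [h] <;> simp
      have e5 : ∑ i ∈ Finset.Ico (s.1 + 1) (stage F x b (k+1)).1,
            (((stage F x b (k+1)).2.2 i : ℕ) : ℝ) * A F i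
          = ∑ i ∈ Finset.Ico (s.1 + 1) (pick F (s.1 + 1) r').1,
              (((pick F (s.1 + 1) r').2 i : ℕ) : ℝ) * A F i := by
        rw [← hQeq]
        apply Finset.sum_congr rfl
        intro i hi
        simp only [Finset.mem_Ico] at hi
        have hval : (stage F x b (k+1)).2.2 i = (pick F (s.1 + 1) r').2 i := by
          show (if i = s.1 then _ else if s.1 + 1 ≤ i ∧ i < (pick F (s.1+1) r').1
            then (pick F (s.1+1) r').2 i else _) = _
          rw [if_neg (by omega), if_pos (by rw [← hQeq]; exact ⟨hi.1, hi.2⟩)]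
        rw [hval]
      rw [e1, e2, e3, e4, e5]
    have hrem : (stage F x b (k+1)).2.1
        = r' - ∑ i ∈ Finset.Ico (s.1 + 1) (pick F (s.1 + 1) r').1,
            (((pick F (s.1 + 1) r').2 i : ℕ) : ℝ) * A F i := rfl
    rw [hsum_split, hrem, hr'def]
    have hih : x - ∑ i ∈ Finset.Ico 1 s.1, ((s.2.2 i : ℕ) : ℝ) * A F i = s.2.1 := ih
    linarith [hih]

end FibExp
namespace FibExp

variable {F : ℕ → ℕ}

lemma stage_congr {x : ℝ} : ∀ (k : ℕ) (b b' : ℕ → Bool), (∀ j, j < k → b j = b' j) →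
    stage F x b k = stage F x b' k := by
  intro k
  induction k with
  | zero => intro b b' _; rfl
  | succ k ih =>
    intro b b' h
    show stepS F (stage F x b k) (b k) = stepS F (stage F x b' k) (b' k)
    rw [ih b b' (fun j hj => h j (by omega)), h k (by omega)]

noncomputable def Cfin (F : ℕ → ℕ) (x : ℝ) (b : ℕ → Bool) (m : ℕ) : Fin 2 :=
  (stage F x b (m + 1)).2.2 m

lemma Cfin_eq_stage (hF : FibRec F) {x : ℝ} (hx0 : 0 < x) (hxT : x < T F 1) (b : ℕ → Bool)
    {k m : ℕ} (hm : m < (stage F x b k).1) :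
    Cfin F x b m = (stage F x b k).2.2 m := by
  unfold Cfin
  rcases le_total (m + 1) k with h | h
  · exact (stage_c_stable hF hx0 hxT b h
      (show m < (stage F x b (m+1)).1 from by have := stage_pos_ge hF hx0 hxT b (m+1); omega)).symm
  · exact stage_c_stable hF hx0 hxT b h hm

lemma sum_Cfin (hF : FibRec F) {x : ℝ} (hx0 : 0 < x) (hxT : x < T F 1) (b : ℕ → Bool)
    (k : ℕ) :
    ∑ i ∈ Finset.Ico 1 (stage F x b k).1, ((Cfin F x b i : ℕ) : ℝ) * A F i
      = x - (stage F x b k).2.1 := by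
  have h := stage_sum hF hx0 hxT b k
  have hcongr : ∑ i ∈ Finset.Ico 1 (stage F x b k).1, ((Cfin F x b i : ℕ) : ℝ) * A F i
      = ∑ i ∈ Finset.Ico 1 (stage F x b k).1, (((stage F x b k).2.2 i : ℕ) : ℝ) * A F i := by
    apply Finset.sum_congr rfl
    intro i hi
    simp only [Finset.mem_Ico] at hi
    rw [Cfin_eq_stage hF hx0 hxT b hi.2]
  rw [hcongr]
  linarith

/-- each branch sequence gives an expansion of x -/
lemma expansion (hF : FibRec F) {x : ℝ} (hx0 : 0 < x) (hxT : x < T F 1) (b : ℕ → Bool) :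
    x = ∑' i : ℕ, ((Cfin F x b (i + 1) : ℕ) : ℝ) * A F (i + 1) := by
  set f : ℕ → ℝ := fun i => ((Cfin F x b (i + 1) : ℕ) : ℝ) * A F (i + 1) with hfdef
  have hfnn : ∀ i, 0 ≤ f i := by
    intro i
    simp only [hfdef]
    have := A_nonneg F (i + 1)
    positivity
  have hfle : ∀ i, f i ≤ A F (i + 1) := by
    intro i
    simp only [hfdef]
    have h1 : ((Cfin F x b (i + 1) : ℕ) : ℝ) ≤ 1 := by
      have := (Cfin F x b (i + 1)).is_le
      exact_mod_cast this
    have := A_nonneg F (i + 1)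
    nlinarith
  have hsummable : Summable f := Summable.of_nonneg_of_le hfnn hfle hF.summable1
  have hG := hsummable.hasSum.tendsto_sum_nat
  -- subsequence along stage positions
  set M : ℕ → ℕ := fun k => (stage F x b k).1 - 1 with hMdef
  have hMk : ∀ k, k ≤ M k := by
    intro k
    have := stage_pos_ge hF hx0 hxT b k
    simp only [hMdef]
    omega
  have htendM : Filter.Tendsto M Filter.atTop Filter.atTop :=
    Filter.tendsto_atTop_mono hMk Filter.tendsto_id
  have hcomp : Filter.Tendsto (fun k => ∑ i ∈ Finset.range (M k), f i)
      Filter.atTop (nhds (∑' i, f i)) := hG.comp htendM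
  -- identify the subsequence partial sums
  have hident : ∀ k, ∑ i ∈ Finset.range (M k), f i = x - (stage F x b k).2.1 := by
    intro k
    have hpos := stage_pos_ge hF hx0 hxT b k
    have hM1 : M k + 1 = (stage F x b k).1 := by simp only [hMdef]; omega
    have hIco : ∑ i ∈ Finset.Ico 1 (stage F x b k).1, ((Cfin F x b i : ℕ) : ℝ) * A F i
        = ∑ i ∈ Finset.range (M k), f i := by
      rw [← hM1, Finset.sum_Ico_eq_sum_range]
      rw [show M k + 1 - 1 = M k from by omega]
      apply Finset.sum_congr rfl
      intro i _
      simp only [hfdef]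
      rw [show 1 + i = i + 1 from by omega]
    rw [← hIco, sum_Cfin hF hx0 hxT b k]
  -- remainders tend to 0
  have hr0 : Filter.Tendsto (fun k => (stage F x b k).2.1) Filter.atTop (nhds 0) := by
    apply tendsto_of_tendsto_of_tendsto_of_le_of_le (g := fun _ => (0:ℝ))
      (h := fun k => T F (k + 1)) tendsto_const_nhds (hF.T_tendsto)
    · intro k
      have hB := ((stage_good hF hx0 hxT b k).1).2
      have h1 := ((stage_good hF hx0 hxT b k).1).1
      exact le_of_lt (lt_trans (hF.A_pos h1) hB.1)
    · intro k
      have hB := ((stage_good hF hx0 hxT b k).1).2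
      have hq := stage_pos_ge hF hx0 hxT b k
      calc (stage F x b k).2.1 ≤ T F ((stage F x b k).1 + 1) := le_of_lt hB.2
        _ ≤ T F (k + 1) := hF.T_anti (by omega) (by omega)
  have hx' : Filter.Tendsto (fun k => x - (stage F x b k).2.1) Filter.atTop (nhds x) := by
    have := Filter.Tendsto.const_sub x hr0
    simpa using this
  have : Filter.Tendsto (fun k => ∑ i ∈ Finset.range (M k), f i) Filter.atTop (nhds x) := by
    apply hx'.congr
    intro k
    rw [hident k]
  exact (tendsto_nhds_unique hcomp this).symm

/-- distinct branch sequences give distinct digit sequences -/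
lemma inj (hF : FibRec F) {x : ℝ} (hx0 : 0 < x) (hxT : x < T F 1) :
    Function.Injective (fun (b : ℕ → Bool) => (fun i : ℕ => Cfin F x b (i + 1))) := by
  intro b b' heq
  by_contra hne
  have hex : ∃ k, b k ≠ b' k := by
    by_contra hc
    push_neg at hc
    exact hne (funext hc)
  classical
  set k0 := Nat.find hex with hk0
  have hspec : b k0 ≠ b' k0 := Nat.find_spec hex
  have hpre : ∀ j, j < k0 → b j = b' j := by
    intro j hj
    have := Nat.find_min hex hj
    push_neg at this
    exact this
  have hstg : stage F x b k0 = stage F x b' k0 := stage_congr k0 b b' hpre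
  set Q := (stage F x b k0).1 with hQ
  have hQ1 : k0 + 1 ≤ Q := stage_pos_ge hF hx0 hxT b k0
  have hQlt : Q < (stage F x b (k0 + 1)).1 := (stage_good hF hx0 hxT b k0).2
  have hQlt' : (stage F x b' k0).1 < (stage F x b' (k0 + 1)).1 :=
    (stage_good hF hx0 hxT b' k0).2
  have hv : Cfin F x b Q = (if b k0 then 1 else 0) := by
    rw [Cfin_eq_stage hF hx0 hxT b (k := k0 + 1) (by omega)]
    show (stepS F (stage F x b k0) (b k0)).2.2 (stage F x b k0).1 = _
    exact stepS_c_branch _ _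
  have hv' : Cfin F x b' Q = (if b' k0 then 1 else 0) := by
    have hQeq : Q = (stage F x b' k0).1 := by rw [hQ, hstg]
    rw [Cfin_eq_stage hF hx0 hxT b' (k := k0 + 1) (by rw [hQeq]; exact hQlt')]
    show (stepS F (stage F x b' k0) (b' k0)).2.2 Q = _
    rw [hQeq]
    exact stepS_c_branch _ _
  have hdiff : Cfin F x b Q ≠ Cfin F x b' Q := by
    rw [hv, hv']
    rcases Bool.eq_false_or_eq_true (b k0) with h | h <;>
      rcases Bool.eq_false_or_eq_true (b' k0) with h' | h' <;>
        rw [h, h'] <;> simp_all <;> try exact (hspec (by rw [h, h']))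
  have : Cfin F x b ((Q - 1) + 1) = Cfin F x b' ((Q - 1) + 1) := congrFun heq (Q - 1)
  rw [show Q - 1 + 1 = Q from by omega] at this
  exact hdiff this

end FibExp

/-- Every `x ∈ (0, S)`, where `S = Σ_{i=1}^∞ 1/F_i`, has a continuum of Fibonacci
expansions `x = Σ_{i=1}^∞ c_i / F_i` with digits `c_i ∈ {0,1}`. -/
theorem stmt_4 (F : ℕ → ℕ) (h1 : F 1 = 1) (h2 : F 2 = 1)
    (hrec : ∀ i, 1 ≤ i → F (i + 2) = F (i + 1) + F i)
    (S : ℝ) (hS : S = ∑' i : ℕ, (1 : ℝ) / (F (i + 1) : ℝ))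
    (x : ℝ) (hx1 : 0 < x) (hx2 : x < S) :
    Cardinal.mk {c : ℕ → Fin 2 // x = ∑' i : ℕ, ((c i : ℕ) : ℝ) / (F (i + 1) : ℝ)} =
      Cardinal.continuum := by
  have hF : FibExp.FibRec F := ⟨h1, h2, hrec⟩
  have hTS : FibExp.T F 1 = S := by
    rw [hS]
    unfold FibExp.T FibExp.A
    apply tsum_congr
    intro i
    rw [show 1 + i = i + 1 from by omega]
  have hxT : x < FibExp.T F 1 := by rw [hTS]; exact hx2
  apply le_antisymm
  · calc Cardinal.mk {c : ℕ → Fin 2 // x = ∑' i : ℕ, ((c i : ℕ) : ℝ) / (F (i + 1) : ℝ)}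
        ≤ Cardinal.mk (ℕ → Fin 2) := Cardinal.mk_subtype_le _
      _ = Cardinal.continuum := by
          rw [Cardinal.mk_arrow]
          simp [Cardinal.mk_fin, Cardinal.two_power_aleph0]
  · have hmap : ∀ b : ℕ → Bool,
        x = ∑' i : ℕ, ((FibExp.Cfin F x b (i + 1) : ℕ) : ℝ) / (F (i + 1) : ℝ) := by
      intro b
      have hpt : (fun i : ℕ => ((FibExp.Cfin F x b (i + 1) : ℕ) : ℝ) * FibExp.A F (i + 1))
          = (fun i : ℕ => ((FibExp.Cfin F x b (i + 1) : ℕ) : ℝ) / (F (i + 1) : ℝ)) := by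
        funext i
        show ((FibExp.Cfin F x b (i + 1) : ℕ) : ℝ) * (1 / ((F (i+1) : ℕ) : ℝ)) = _
        rw [mul_one_div]
      have hexp := FibExp.expansion hF hx1 hxT b
      rw [show (∑' i : ℕ, ((FibExp.Cfin F x b (i + 1) : ℕ) : ℝ) / (F (i + 1) : ℝ))
          = ∑' i : ℕ, ((FibExp.Cfin F x b (i + 1) : ℕ) : ℝ) * FibExp.A F (i + 1) from by
        rw [hpt]]
      exact hexp
    set Φ : (ℕ → Bool) → {c : ℕ → Fin 2 // x = ∑' i : ℕ, ((c i : ℕ) : ℝ) / (F (i + 1) : ℝ)} :=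
      fun b => ⟨fun i => FibExp.Cfin F x b (i + 1), hmap b⟩ with hΦ
    have hinj : Function.Injective Φ := by
      intro b b' h
      apply FibExp.inj hF hx1 hxT
      have : (Φ b).1 = (Φ b').1 := by rw [h]
      exact this
    calc Cardinal.continuum = Cardinal.mk (ℕ → Bool) := by
          rw [Cardinal.mk_arrow]
          simp [Cardinal.mk_bool, Cardinal.two_power_aleph0]
      _ ≤ _ := Cardinal.mk_le_of_injective hinj
end

section
/- Let (F_i) be the Fibonacci sequence with F_1 = F_2 = 1 and F_{i+2} = F_{i+1} + F_i. Then for every n ≥ 1, the strict inequality 1/F_n < Σ_{i=n+1}^∞ 1/F_i holds. Consequently, (1/F_i)_{i≥1} is a Kakeya sequence. -/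
open Nat Filter

lemma fib_step (m : ℕ) (hm : 2 ≤ m) : ((fib m : ℝ)) * (3/2) ≤ fib (m+1) := by
  obtain ⟨k, rfl⟩ := Nat.exists_eq_add_of_le' hm
  have h1 : fib (k + 2 + 1) = fib (k+1) + fib (k+2) := Nat.fib_add_two
  have h2 : fib (k + 2) = fib k + fib (k+1) := Nat.fib_add_two
  have h3 : fib k ≤ fib (k + 1) := Nat.fib_le_fib_succ
  have h4 : 3 * fib (k + 2) ≤ 2 * fib (k + 2 + 1) := by omega
  have := (Nat.cast_le (α := ℝ)).2 h4
  push_cast at this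
  linarith

lemma fib_geom (n : ℕ) (hn : 2 ≤ n) : ∀ i, (fib n : ℝ) * (3/2)^i ≤ fib (n + i) := by
  intro i
  induction i with
  | zero => simp
  | succ k ih =>
    have hstep := fib_step (n + k) (le_trans hn (Nat.le_add_right _ _))
    calc (fib n : ℝ) * (3/2)^(k+1) = ((fib n : ℝ) * (3/2)^k) * (3/2) := by ring
      _ ≤ (fib (n + k) : ℝ) * (3/2) := by nlinarith
      _ ≤ fib (n + k + 1) := hstep

lemma fib_summable (n : ℕ) (hn : 2 ≤ n) : Summable (fun i => (1:ℝ) / fib (n + i)) := by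
  have hfn : (0:ℝ) < fib n := by
    exact_mod_cast Nat.fib_pos.2 (by omega)
  have hg : Summable (fun i : ℕ => (1 / (fib n : ℝ)) * (2/3)^i) := by
    exact (summable_geometric_of_lt_one (by norm_num) (by norm_num)).mul_left _
  refine Summable.of_nonneg_of_le (fun i => by positivity) (fun i => ?_) hg
  have h := fib_geom n hn i
  have hpos : (0:ℝ) < fib (n + i) := by
    exact_mod_cast Nat.fib_pos.2 (by omega)
  have h23 : (0:ℝ) < (2/3:ℝ)^i := by positivity
  have hone : (2/3:ℝ)^i * (3/2:ℝ)^i = 1 := by rw [← mul_pow]; norm_num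
  rw [show (1/ (fib n:ℝ)) * (2/3)^i = (2/3)^i / fib n from by ring,
    div_le_div_iff₀ hpos hfn]
  have hmul := mul_le_mul_of_nonneg_left h h23.le
  rw [show (2/3:ℝ)^i * ((fib n:ℝ) * (3/2)^i) = ((2/3:ℝ)^i * (3/2)^i) * fib n from by ring,
    hone, one_mul] at hmul
  linarith

/-- For the Fibonacci sequence, `1/F_n < Σ_{i=n+1}^∞ 1/F_i` for every `n ≥ 1`;
consequently `(1/F_i)_{i ≥ 1}` is a Kakeya sequence (positive terms, tending to `0`,
with `p_n ≤ Σ_{i=n+1}^∞ p_i` for every `n ≥ 1`). -/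
theorem stmt_7 (F : ℕ → ℕ) (h1 : F 1 = 1) (h2 : F 2 = 1)
    (hrec : ∀ i, 1 ≤ i → F (i + 2) = F (i + 1) + F i) :
    (∀ n, 1 ≤ n → (1 : ℝ) / (F n : ℝ) < ∑' i : ℕ, (1 : ℝ) / (F (n + 1 + i) : ℝ)) ∧
      (∀ i, 1 ≤ i → 0 < (1 : ℝ) / (F i : ℝ)) ∧
      Filter.Tendsto (fun i => (1 : ℝ) / (F i : ℝ)) Filter.atTop (nhds 0) ∧
      (∀ n, 1 ≤ n → (1 : ℝ) / (F n : ℝ) ≤ ∑' i : ℕ, (1 : ℝ) / (F (n + 1 + i) : ℝ)) := by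
  -- F agrees with fib on positive indices
  have hF : ∀ i, 1 ≤ i → F i = fib i := by
    intro i
    induction i using Nat.twoStepInduction with
    | zero => omega
    | one => intro _; simpa using h1
    | more k ihk ihk1 =>
      intro _
      match k, ihk, ihk1 with
      | 0, _, _ => simpa using h2
      | (m+1), ihk, ihk1 =>
        have e : F (m+1+2) = F (m+1+1) + F (m+1) := hrec (m+1) (by omega)
        have g1 : F (m+1) = fib (m+1) := ihk (by omega)
        have g2 : F (m+1+1) = fib (m+1+1) := ihk1 (by omega)
        have g3 : fib (m+1+2) = fib (m+1) + fib (m+1+1) := Nat.fib_add_two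
        show F (m+1+2) = fib (m+1+2)
        omega
  have hFpos : ∀ i, 1 ≤ i → (0:ℝ) < F i := by
    intro i hi
    rw [hF i hi]
    exact_mod_cast Nat.fib_pos.2 hi
  have hsum : ∀ n, 1 ≤ n → Summable (fun i => (1:ℝ) / F (n + 1 + i)) := by
    intro n hn
    have := fib_summable (n+1) (by omega)
    refine this.congr fun i => ?_
    rw [hF (n+1+i) (by omega)]
  -- strict inequality
  have hstrict : ∀ n, 1 ≤ n → (1 : ℝ) / (F n : ℝ) < ∑' i : ℕ, (1 : ℝ) / (F (n + 1 + i) : ℝ) := by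
    intro n hn
    set a : ℝ := (F n : ℝ) with ha
    set b : ℝ := (F (n+1) : ℝ) with hb
    have hapos : 0 < a := hFpos n hn
    have hbpos : 0 < b := hFpos (n+1) (by omega)
    have hab : a ≤ b := by
      rw [ha, hb, hF n hn, hF (n+1) (by omega)]
      exact_mod_cast Nat.fib_le_fib_succ
    have hba : b ≤ 2 * a := by
      rw [ha, hb, hF n hn, hF (n+1) (by omega)]
      have : fib (n+1) ≤ 2 * fib n := by
        match n, hn with
        | 1, _ => simp
        | (j+2), _ =>
          have g3 : fib (j+1+1+1) = fib (j+1) + fib (j+1+1) := Nat.fib_add_two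
          have g4 : fib (j+1) ≤ fib (j+1+1) := Nat.fib_le_fib_succ
          show fib (j+1+1+1) ≤ 2 * fib (j+1+1)
          omega
      exact_mod_cast this
    have e2 : (F (n+2) : ℝ) = b + a := by
      rw [hrec n hn]; push_cast; rw [← ha, ← hb]
    have e3 : (F (n+3) : ℝ) = (b + a) + b := by
      have : n + 3 = (n+1) + 2 := by ring
      rw [this, hrec (n+1) (by omega)]
      push_cast
      rw [show n + 1 + 1 = n + 2 from rfl]
      rw [e2, ← hb]
    -- sum of first three terms
    have hsumm := hsum n hn
    have hle3 : ∑ i ∈ Finset.range 3, (1:ℝ) / F (n+1+i) ≤ ∑' i : ℕ, (1 : ℝ) / (F (n + 1 + i) : ℝ) :=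
      Summable.sum_le_tsum _ (fun i _ => by positivity) hsumm
    have hexp : ∑ i ∈ Finset.range 3, (1:ℝ) / F (n+1+i) = 1/b + 1/(b+a) + 1/((b+a)+b) := by
      rw [Finset.sum_range_succ, Finset.sum_range_succ, Finset.sum_range_one]
      rw [show n+1+0 = n+1 from rfl, show n+1+1 = n+2 from rfl, show n+1+2 = n+3 from rfl]
      rw [e2, e3, ← hb]
    have key : 1/a < 1/b + 1/(b+a) + 1/((b+a)+b) := by
      have k1 : 1/(2*a) ≤ 1/b := by
        apply one_div_le_one_div_of_le hbpos hba
      have k2 : 1/(3*a) ≤ 1/(b+a) := by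
        apply one_div_le_one_div_of_le (by linarith) (by linarith)
      have k3 : 1/(5*a) ≤ 1/((b+a)+b) := by
        apply one_div_le_one_div_of_le (by linarith) (by linarith)
      have ha1 : 0 < 1/a := by positivity
      have r1 : 1/(2*a) = (1/a)/2 := by rw [div_div]; ring
      have r2 : 1/(3*a) = (1/a)/3 := by rw [div_div]; ring
      have r3 : 1/(5*a) = (1/a)/5 := by rw [div_div]; ring
      rw [r1] at k1; rw [r2] at k2; rw [r3] at k3
      linarith
    calc (1:ℝ)/a < 1/b + 1/(b+a) + 1/((b+a)+b) := key
      _ = ∑ i ∈ Finset.range 3, (1:ℝ) / F (n+1+i) := hexp.symm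
      _ ≤ _ := hle3
  refine ⟨hstrict, fun i hi => one_div_pos.2 (hFpos i hi), ?_, fun n hn => (hstrict n hn).le⟩
  have hs := hsum 1 le_rfl
  have ht : Filter.Tendsto (fun i => (1:ℝ) / F (i + 2)) atTop (nhds 0) := by
    have := hs.tendsto_atTop_zero
    refine this.congr fun i => ?_
    norm_num [Nat.add_comm]
  exact (Filter.tendsto_add_atTop_iff_nat 2).mp ht
end

section
/- Let q ∈ (1,2) and let (ε_i)_{i≥1} be a bounded sequence of real numbers with ε_i > −1 for all i, inf_j ε_j > −1, and satisfying (1 + inf_j ε_j)/(1 + sup_j ε_j) ≥ q − 1. Then the sequence p_i = 1/(q^i (1+ε_i)) is a Kakeya sequence: p_i → 0 and p_n ≤ Σ_{i=n+1}^∞ p_i for every n ≥ 1. -/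
/-- If `1 < q < 2` and `(ε_i)_{i ≥ 1}` is a bounded sequence with `ε_i > -1` for all
`i ≥ 1`, `inf_j ε_j > -1`, and `(1 + inf_j ε_j)/(1 + sup_j ε_j) ≥ q - 1`, then
`p_i = 1/(q^i (1 + ε_i))` is a Kakeya sequence: `p_i → 0` and
`p_n ≤ Σ_{i=n+1}^∞ p_i` for every `n ≥ 1`. -/
theorem stmt_8 (q : ℝ) (hq1 : 1 < q) (hq2 : q < 2)
    (ε : ℕ → ℝ)
    (hbdd_above : BddAbove (Set.range fun j : ℕ => ε (j + 1)))
    (hbdd_below : BddBelow (Set.range fun j : ℕ => ε (j + 1)))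
    (hgt : ∀ i, 1 ≤ i → -1 < ε i)
    (hinf : -1 < ⨅ j : ℕ, ε (j + 1))
    (hmain : q - 1 ≤ (1 + ⨅ j : ℕ, ε (j + 1)) / (1 + ⨆ j : ℕ, ε (j + 1))) :
    Filter.Tendsto (fun i : ℕ => 1 / (q ^ i * (1 + ε i))) Filter.atTop (nhds 0) ∧
      ∀ n, 1 ≤ n →
        1 / (q ^ n * (1 + ε n)) ≤
          ∑' i : ℕ, 1 / (q ^ (n + 1 + i) * (1 + ε (n + 1 + i))) := by
  set m := ⨅ j : ℕ, ε (j + 1) with hmdef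
  set M := ⨆ j : ℕ, ε (j + 1) with hMdef
  have hq0 : (0:ℝ) < q := one_pos.trans hq1
  have hle : ∀ i, 1 ≤ i → m ≤ ε i ∧ ε i ≤ M := by
    intro i hi
    obtain ⟨j, rfl⟩ := Nat.exists_eq_add_of_le' hi
    exact ⟨ciInf_le hbdd_below j, le_ciSup hbdd_above j⟩
  have hm0 : (0:ℝ) < 1 + m := by linarith
  have hmM : m ≤ M := le_trans (hle 1 le_rfl).1 (hle 1 le_rfl).2
  have hM0 : (0:ℝ) < 1 + M := by linarith
  have hε : ∀ i, 1 ≤ i → 0 < 1 + ε i := fun i hi => by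
    have := (hle i hi).1; linarith
  have hqpow : ∀ k : ℕ, (0:ℝ) < q ^ k := fun k => pow_pos hq0 k
  have hqinv0 : (0:ℝ) ≤ 1 / q := by positivity
  have hqinv1 : 1 / q < 1 := by
    rw [div_lt_one hq0]; linarith
  constructor
  · have hgeo : Filter.Tendsto (fun i : ℕ => (1 / (1 + m)) * (1 / q) ^ i)
        Filter.atTop (nhds 0) := by
      have := (tendsto_pow_atTop_nhds_zero_of_lt_one hqinv0 hqinv1).const_mul
        (1 / (1 + m))
      simpa using this
    apply tendsto_of_tendsto_of_tendsto_of_le_of_le'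
      (tendsto_const_nhds (x := (0:ℝ))) hgeo
    · filter_upwards [Filter.eventually_ge_atTop 1] with i hi
      have := hε i hi
      positivity
    · filter_upwards [Filter.eventually_ge_atTop 1] with i hi
      have h1 : 0 < 1 + ε i := hε i hi
      have h2 : 1 + m ≤ 1 + ε i := by have := (hle i hi).1; linarith
      have : q ^ i * (1 + m) ≤ q ^ i * (1 + ε i) :=
        mul_le_mul_of_nonneg_left h2 (le_of_lt (hqpow i))
      calc 1 / (q ^ i * (1 + ε i)) ≤ 1 / (q ^ i * (1 + m)) := by
            apply one_div_le_one_div_of_le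
            · positivity
            · exact this
        _ = (1 / (1 + m)) * (1 / q) ^ i := by
            rw [div_pow, one_pow]
            field_simp
  · intro n hn
    have hεn : 0 < 1 + ε n := hε n hn
    have hkey : (q - 1) * (1 + M) ≤ 1 + ε n := by
      have h1 : (q - 1) * (1 + M) ≤ 1 + m := (le_div_iff₀ hM0).mp hmain
      have := (hle n hn).1
      linarith
    -- summable upper
    have hsumg : Summable (fun i : ℕ => 1 / (q ^ (n + 1 + i) * (1 + ε (n + 1 + i)))) := by
      apply Summable.of_nonneg_of_le
        (fun i => by have := hε (n + 1 + i) (by omega); positivity)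
        (fun i => ?_)
        (((summable_geometric_of_lt_one hqinv0 hqinv1).mul_left
          (1 / ((1 + m) * q ^ (n + 1)))))
      have h1 : 0 < 1 + ε (n + 1 + i) := hε (n + 1 + i) (by omega)
      have h2 : 1 + m ≤ 1 + ε (n + 1 + i) := by
        have := (hle (n + 1 + i) (by omega)).1; linarith
      have h3 : q ^ (n + 1 + i) * (1 + m) ≤ q ^ (n + 1 + i) * (1 + ε (n + 1 + i)) :=
        mul_le_mul_of_nonneg_left h2 (le_of_lt (hqpow _))
      calc 1 / (q ^ (n + 1 + i) * (1 + ε (n + 1 + i)))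
          ≤ 1 / (q ^ (n + 1 + i) * (1 + m)) := by
            apply one_div_le_one_div_of_le
            · positivity
            · exact h3
        _ = 1 / ((1 + m) * q ^ (n + 1)) * (1 / q) ^ i := by
            rw [div_pow, one_pow, pow_add]
            field_simp
    -- lower geometric series
    have hsuml : Summable (fun i : ℕ => 1 / ((1 + M) * q ^ (n + 1)) * (1 / q) ^ i) :=
      (summable_geometric_of_lt_one hqinv0 hqinv1).mul_left _
    have hterm : ∀ i : ℕ, 1 / ((1 + M) * q ^ (n + 1)) * (1 / q) ^ i
        ≤ 1 / (q ^ (n + 1 + i) * (1 + ε (n + 1 + i))) := by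
      intro i
      have h1 : 0 < 1 + ε (n + 1 + i) := hε (n + 1 + i) (by omega)
      have h2 : 1 + ε (n + 1 + i) ≤ 1 + M := by
        have := (hle (n + 1 + i) (by omega)).2; linarith
      have h3 : q ^ (n + 1 + i) * (1 + ε (n + 1 + i)) ≤ q ^ (n + 1 + i) * (1 + M) :=
        mul_le_mul_of_nonneg_left h2 (le_of_lt (hqpow _))
      calc 1 / ((1 + M) * q ^ (n + 1)) * (1 / q) ^ i
          = 1 / (q ^ (n + 1 + i) * (1 + M)) := by
            rw [div_pow, one_pow, pow_add]
            field_simp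
            ring
        _ ≤ 1 / (q ^ (n + 1 + i) * (1 + ε (n + 1 + i))) := by
            apply one_div_le_one_div_of_le
            · positivity
            · exact h3
    have htsum_le := Summable.tsum_le_tsum hterm hsuml hsumg
    have htsuml : (∑' i : ℕ, 1 / ((1 + M) * q ^ (n + 1)) * (1 / q) ^ i)
        = 1 / ((1 + M) * q ^ (n + 1)) * (1 - 1 / q)⁻¹ := by
      rw [tsum_mul_left, tsum_geometric_of_lt_one hqinv0 hqinv1]
    refine le_trans ?_ (htsuml ▸ htsum_le)
    have hq1' : (0:ℝ) < q - 1 := by linarith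
    have hp := hqpow n
    have hrhs : 1 / ((1 + M) * q ^ (n + 1)) * (1 - 1 / q)⁻¹
        = 1 / ((1 + M) * q ^ n * (q - 1)) := by
      rw [pow_succ]
      field_simp
    rw [hrhs]
    apply one_div_le_one_div_of_le
    · positivity
    · nlinarith [mul_le_mul_of_nonneg_left hkey (le_of_lt hp)]
end

section
/- Let (p_i)_{i≥1} be a sequence of positive real numbers satisfying: (i) p_i → 0; (ii) p_n < Σ_{i=n+1}^∞ p_i for all n ≥ 1; (iii) p_{n−1} < Σ_{i=n+1}^∞ p_i for infinitely many n; (iv) p_n ≤ 2 p_{n+1} for all sufficiently large n; and assume Σ p_i converges. Call an index k special if p_{k−1} < Σ_{i=k+1}^∞ p_i. Then there exists K ≥ 1 such that for every special index k > K, the sequence (q_i) obtained from (p_i) by removing the term p_k (i.e., q_i = p_i for i < k and q_i = p_{i+1} for i ≥ k) again satisfies conditions (i)–(iv). -/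
/-- Removal lemma: if `(p_i)_{i ≥ 1}` satisfies (i) `p_i → 0`, (ii) `p_n < Σ_{i=n+1}^∞ p_i`
for all `n ≥ 1`, (iii) `p_{n-1} < Σ_{i=n+1}^∞ p_i` for infinitely many `n`, and
(iv) `p_n ≤ 2 p_{n+1}` for all sufficiently large `n`, with convergent sum, then there is
`K ≥ 1` such that for every special index `k > K` (i.e. `p_{k-1} < Σ_{i=k+1}^∞ p_i`), the
sequence obtained by removing `p_k` still satisfies (i)–(iv). -/
theorem stmt_10 (p : ℕ → ℝ)
    (hpos : ∀ i, 1 ≤ i → 0 < p i)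
    (hlim : Filter.Tendsto p Filter.atTop (nhds 0))
    (hsum : Summable (fun i => p (i + 1)))
    (h2 : ∀ n, 1 ≤ n → p n < ∑' i : ℕ, p (n + 1 + i))
    (h3 : ∀ N, ∃ n, N ≤ n ∧ 2 ≤ n ∧ p (n - 1) < ∑' i : ℕ, p (n + 1 + i))
    (h4 : ∃ N, ∀ n, N ≤ n → p n ≤ 2 * p (n + 1)) :
    ∃ K, 1 ≤ K ∧ ∀ k, K < k → p (k - 1) < (∑' i : ℕ, p (k + 1 + i)) →
      ∀ q : ℕ → ℝ, (∀ i, q i = if i < k then p i else p (i + 1)) →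
        Filter.Tendsto q Filter.atTop (nhds 0) ∧
          (∀ n, 1 ≤ n → q n < ∑' i : ℕ, q (n + 1 + i)) ∧
          (∀ N, ∃ n, N ≤ n ∧ 2 ≤ n ∧ q (n - 1) < ∑' i : ℕ, q (n + 1 + i)) ∧
          (∃ N, ∀ n, N ≤ n → q n ≤ 2 * q (n + 1)) := by
  classical
  obtain ⟨N0, hN0⟩ := h4
  -- summability of all tails
  have hs : ∀ n : ℕ, Summable (fun i => p (n + 1 + i)) := by
    intro n
    exact ((summable_nat_add_iff n).2 hsum).congr (fun i => congrArg p (by omega))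
  -- tail recursion
  have hT : ∀ n : ℕ, (∑' i : ℕ, p (n + 1 + i)) = p (n + 1) + ∑' i : ℕ, p (n + 2 + i) := by
    intro n
    have h := Summable.tsum_eq_zero_add (hs n)
    have e : (∑' i : ℕ, p (n + 1 + (i + 1))) = ∑' i : ℕ, p (n + 2 + i) :=
      tsum_congr (fun i => congrArg p (by omega))
    have e0 : p (n + 1 + 0) = p (n + 1) := congrArg p (by omega)
    rw [h, e, e0]
  set M := max N0 1 with hM
  have hN0M : N0 ≤ M := le_max_left N0 1
  have hM1 : 1 ≤ M := le_max_right N0 1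
  -- the epsilon
  have hne : (Finset.Icc 1 M).Nonempty := ⟨1, Finset.mem_Icc.mpr ⟨le_refl 1, hM1⟩⟩
  set ε := (Finset.Icc 1 M).inf' hne (fun n => (∑' i : ℕ, p (n + 1 + i)) - p n) with hε
  have hεpos : 0 < ε := by
    rw [hε, Finset.lt_inf'_iff]
    intro n hn
    simp only [Finset.mem_Icc] at hn
    have := h2 n hn.1
    linarith
  obtain ⟨K0, hK0⟩ := Metric.tendsto_atTop.mp hlim ε hεpos
  refine ⟨max K0 M, le_trans hM1 (le_max_right K0 M), ?_⟩
  intro k hk hspec q hq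
  have hkM : M < k := lt_of_le_of_lt (le_max_right K0 M) hk
  have hkK0 : K0 < k := lt_of_le_of_lt (le_max_left K0 M) hk
  have hk1 : 1 ≤ k := le_trans hM1 (le_of_lt hkM)
  have hpkε : p k < ε := by
    have := hK0 k (le_of_lt hkK0)
    rw [Real.dist_eq, sub_zero] at this
    calc p k ≤ |p k| := le_abs_self _
    _ < ε := this
  -- removal sum identity for n < k
  have hrem : ∀ n, n < k → (∑' i : ℕ, q (n + 1 + i)) = (∑' i : ℕ, p (n + 1 + i)) - p k := by
    intro n hn
    set m := k - (n + 1) with hm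
    have htail : ∀ i, q (n + 1 + (i + m)) = p (k + 1 + i) := by
      intro i
      calc q (n + 1 + (i + m)) = p (n + 1 + (i + m) + 1) := by
            rw [hq, if_neg (by omega)]
      _ = p (k + 1 + i) := congrArg p (by omega)
    have hsq : Summable (fun i => q (n + 1 + i)) := by
      rw [← summable_nat_add_iff m]
      exact (hs k).congr (fun i => (htail i).symm)
    have h1 := Summable.sum_add_tsum_nat_add m hsq
    have h2' := Summable.sum_add_tsum_nat_add m (hs n)
    have hsk : Summable (fun i : ℕ => p (k + i)) :=
      (hs (k - 1)).congr (fun i => congrArg p (by omega))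
    have e1 : (∑' i : ℕ, q (n + 1 + i))
        = (∑ i ∈ Finset.range m, p (n + 1 + i)) + ∑' i : ℕ, p (k + 1 + i) := by
      rw [← h1]
      congr 1
      · refine Finset.sum_congr rfl (fun i hi => ?_)
        simp only [Finset.mem_range] at hi
        rw [hq, if_pos (by omega)]
      · exact tsum_congr htail
    have e2 : (∑' i : ℕ, p (n + 1 + i))
        = (∑ i ∈ Finset.range m, p (n + 1 + i)) + (p k + ∑' i : ℕ, p (k + 1 + i)) := by
      rw [← h2']
      have ea : (∑' i : ℕ, p (n + 1 + (i + m))) = ∑' i : ℕ, p (k + i) :=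
        tsum_congr (fun i => congrArg p (by omega))
      have eb : p (k + 0) = p k := congrArg p (by omega)
      have ec : (∑' i : ℕ, p (k + (i + 1))) = ∑' i : ℕ, p (k + 1 + i) :=
        tsum_congr (fun i => congrArg p (by omega))
      rw [ea, Summable.tsum_eq_zero_add hsk, eb, ec]
    rw [e1, e2]; ring
  -- downward induction: p n < T n - p k for M ≤ n ≤ k - 1
  have hdown : ∀ d n, M ≤ n → n + d = k - 1 → p n < (∑' i : ℕ, p (n + 1 + i)) - p k := by
    intro d
    induction d with
    | zero =>
      intro n hMn hnk
      have hn : n = k - 1 := by omega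
      subst hn
      have e1 : p (k - 1 + 1) = p k := congrArg p (by omega)
      have e2 : (∑' i : ℕ, p (k - 1 + 2 + i)) = ∑' i : ℕ, p (k + 1 + i) :=
        tsum_congr (fun i => congrArg p (by omega))
      have := hT (k - 1)
      rw [e1, e2] at this
      linarith
    | succ d ih =>
      intro n hMn hnk
      have hih := ih (n + 1) (le_trans hMn (Nat.le_succ n)) (by omega)
      have hdbl : p n ≤ 2 * p (n + 1) := hN0 n (le_trans hN0M hMn)
      have e : (∑' i : ℕ, p (n + 2 + i)) = ∑' i : ℕ, p (n + 1 + 1 + i) :=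
        tsum_congr (fun i => congrArg p (by omega))
      have hTn := hT n
      rw [e] at hTn
      linarith
  have hmain : ∀ n, 1 ≤ n → n < k → p n < (∑' i : ℕ, p (n + 1 + i)) - p k := by
    intro n h1n hnk
    rcases le_or_gt M n with h | h
    · exact hdown (k - 1 - n) n h (by omega)
    · have hεle : ε ≤ (∑' i : ℕ, p (n + 1 + i)) - p n := by
        rw [hε]
        exact Finset.inf'_le _ (Finset.mem_Icc.mpr ⟨h1n, le_of_lt h⟩)
      linarith
  -- tails of q above k
  have hqtail : ∀ n, k ≤ n → (∑' i : ℕ, q (n + 1 + i)) = ∑' i : ℕ, p (n + 2 + i) := by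
    intro n hn
    refine tsum_congr (fun i => ?_)
    calc q (n + 1 + i) = p (n + 1 + i + 1) := by rw [hq, if_neg (by omega)]
    _ = p (n + 2 + i) := congrArg p (by omega)
  refine ⟨?_, ?_, ?_, ?_⟩
  · -- (i) tendsto
    refine (hlim.comp (Filter.tendsto_add_atTop_nat 1)).congr' ?_
    filter_upwards [Filter.eventually_atTop.2 ⟨k, fun i hi => hi⟩] with i hi
    show p (i + 1) = q i
    rw [hq, if_neg (by omega)]
  · -- (ii)
    intro n hn1
    rcases lt_or_ge n k with hnk | hnk
    · rw [hq, if_pos hnk, hrem n hnk]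
      exact hmain n hn1 hnk
    · rw [hq, if_neg (by omega), hqtail n hnk]
      have h := h2 (n + 1) (by omega)
      have e : (∑' i : ℕ, p (n + 1 + 1 + i)) = ∑' i : ℕ, p (n + 2 + i) :=
        tsum_congr (fun i => congrArg p (by omega))
      rw [e] at h
      exact h
  · -- (iii)
    intro N
    obtain ⟨m, hmN, hm2, hmspec⟩ := h3 (max (N + 1) (max (k + 2) 3))
    have hA : N + 1 ≤ m := le_trans (le_max_left _ _) hmN
    have hB : k + 2 ≤ m := le_trans (le_trans (le_max_left _ _) (le_max_right _ _)) hmN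
    have hC : 3 ≤ m := le_trans (le_trans (le_max_right _ _) (le_max_right _ _)) hmN
    refine ⟨m - 1, by omega, by omega, ?_⟩
    have e1 : q (m - 1 - 1) = p (m - 1) := by
      calc q (m - 1 - 1) = p (m - 1 - 1 + 1) := by rw [hq, if_neg (by omega)]
      _ = p (m - 1) := congrArg p (by omega)
    have e2 : (∑' i : ℕ, q (m - 1 + 1 + i)) = ∑' i : ℕ, p (m + 1 + i) := by
      refine tsum_congr (fun i => ?_)
      calc q (m - 1 + 1 + i) = p (m - 1 + 1 + i + 1) := by rw [hq, if_neg (by omega)]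
      _ = p (m + 1 + i) := congrArg p (by omega)
    rw [e1, e2]
    exact hmspec
  · -- (iv)
    refine ⟨max N0 k, fun n hn => ?_⟩
    have hA : N0 ≤ n := le_trans (le_max_left _ _) hn
    have hB : k ≤ n := le_trans (le_max_right _ _) hn
    rw [hq n, if_neg (by omega), hq (n + 1), if_neg (by omega)]
    exact hN0 (n + 1) (by omega)
end

section
/- Let φ = (1+√5)/2 and let ρ > 1/φ. Let (p_i)_{i≥1} be a sequence of positive real numbers with p_{i+1} ≥ ρ p_i for all i and p_i → 0, and assume Σ p_i converges with sum S. Then for every x ∈ (0, S), the set of sequences (c_i) ∈ {0,1}^ℕ satisfying x = Σ_{i=1}^∞ c_i p_i has the cardinality of the continuum. -/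
open Filter Topology

/-- Tail sums of the sequence `p` starting after index `m`. -/
noncomputable def expT (p : ℕ → ℝ) (m : ℕ) : ℝ := ∑' k, p (k + m + 1)

open Classical in
/-- The state of the branching expansion process: remainder and bit counter. -/
noncomputable def expSt (p : ℕ → ℝ) (x : ℝ) (b : ℕ → Bool) : ℕ → ℝ × ℕ
  | 0 => (x, 0)
  | m + 1 =>
    let s := expSt p x b m
    if p (m + 1) < s.1 ∧ s.1 < expT p (m + 1) then
      (s.1 - (if b s.2 then p (m + 1) else 0), s.2 + 1)
    else if s.1 ≤ p (m + 1) then s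
    else (s.1 - p (m + 1), s.2)

open Classical in
/-- The digit produced at step `m`. -/
noncomputable def expDg (p : ℕ → ℝ) (x : ℝ) (b : ℕ → Bool) (m : ℕ) : Fin 2 :=
  let s := expSt p x b m
  if p (m + 1) < s.1 ∧ s.1 < expT p (m + 1) then (if b s.2 then 1 else 0)
  else if s.1 ≤ p (m + 1) then 0 else 1

set_option maxHeartbeats 1000000 in
/-- If `(p_i)_{i ≥ 1}` is a `ρ`-sequence (i.e. `p_{i+1} ≥ ρ p_i` for all `i ≥ 1`) of
positive reals with `ρ > 1/φ`, `p_i → 0`, and convergent sum `S`, then every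
`x ∈ (0, S)` has a continuum of expansions `x = Σ c_i p_i` with digits `c_i ∈ {0,1}`. -/
theorem stmt_11 (φ ρ : ℝ) (hφ : φ = (1 + Real.sqrt 5) / 2) (hρ : 1 / φ < ρ)
    (p : ℕ → ℝ) (hpos : ∀ i, 1 ≤ i → 0 < p i)
    (hρseq : ∀ i, 1 ≤ i → ρ * p i ≤ p (i + 1))
    (hlim : Filter.Tendsto p Filter.atTop (nhds 0))
    (hsum : Summable (fun i => p (i + 1)))
    (S : ℝ) (hS : S = ∑' i : ℕ, p (i + 1))
    (x : ℝ) (hx1 : 0 < x) (hx2 : x < S) :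
    Cardinal.mk {c : ℕ → Fin 2 // x = ∑' i : ℕ, ((c i : ℕ) : ℝ) * p (i + 1)} =
      Cardinal.continuum := by
  classical
  have hsq5 : Real.sqrt 5 ^ 2 = 5 := Real.sq_sqrt (by norm_num)
  have hs5nn : (0:ℝ) ≤ Real.sqrt 5 := Real.sqrt_nonneg 5
  have hs5lb : (2:ℝ) < Real.sqrt 5 := by nlinarith
  have hφpos : 0 < φ := by rw [hφ]; linarith
  have hρ0 : 0 < ρ := lt_trans (by positivity) hρ
  -- `ρ < 1` since otherwise `p` is bounded below and cannot tend to 0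
  have hρ1 : ρ < 1 := by
    by_contra h
    push_neg at h
    have hmono : ∀ k, p 1 ≤ p (1 + k) := by
      intro k
      induction k with
      | zero => exact le_rfl
      | succ k ih =>
        have h1 : ρ * p (1 + k) ≤ p (1 + k + 1) := hρseq (1 + k) (by omega)
        have h2 : p (1 + k) ≤ ρ * p (1 + k) := by
          nlinarith [lt_of_lt_of_le (hpos 1 le_rfl) ih]
        calc p 1 ≤ p (1 + k) := ih
          _ ≤ p (1 + k + 1) := le_trans h2 h1
    have hev : ∀ᶠ n in atTop, p n < p 1 :=
      hlim.eventually_lt_const (hpos 1 le_rfl)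
    obtain ⟨n, hlt, hn1⟩ := (hev.and (eventually_ge_atTop 1)).exists
    have := hmono (n - 1)
    rw [show 1 + (n - 1) = n from by omega] at this
    exact absurd this (not_le.mpr hlt)
  -- key inequality from `ρ > 1/φ`
  have hkey : 1 - ρ < ρ ^ 2 := by
    have hρφ : 1 < ρ * φ := (div_lt_iff₀ hφpos).mp hρ
    rw [hφ] at hρφ
    have h2 : 0 < 2 * ρ - (Real.sqrt 5 - 1) := by nlinarith
    nlinarith [h2, hs5lb, hsq5, hρ0]
  have h2ρ : 1 < 2 * ρ := by nlinarith
  -- the geometric lower bound on later terms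
  have hgeo : ∀ n k, ρ ^ k * p (n + 1) ≤ p (n + 1 + k) := by
    intro n k
    induction k with
    | zero => simp
    | succ k ih =>
      have h1 : ρ * p (n + 1 + k) ≤ p (n + 1 + k + 1) := hρseq _ (by omega)
      calc ρ ^ (k + 1) * p (n + 1) = ρ * (ρ ^ k * p (n + 1)) := by ring
        _ ≤ ρ * p (n + 1 + k) := by nlinarith
        _ ≤ p (n + 1 + (k + 1)) := by rw [show n + 1 + (k+1) = n + 1 + k + 1 from rfl]; exact h1
  -- tails are summable
  have hTsm : ∀ m, Summable (fun k => p (k + m + 1)) := fun m =>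
    (summable_nat_add_iff m).2 hsum
  have hTrec : ∀ m, expT p m = p (m + 1) + expT p (m + 1) := by
    intro m
    rw [expT, Summable.tsum_eq_zero_add (hTsm m)]
    rw [show (0:ℕ) + m + 1 = m + 1 from by omega]
    congr 1
    rw [expT]
    exact tsum_congr fun k => by rw [show k + 1 + m + 1 = k + (m + 1) + 1 from by omega]
  have hTnn : ∀ m, 0 ≤ expT p m := by
    intro m
    exact tsum_nonneg fun k => (hpos (k + m + 1) (by omega)).le
  -- geometric lower bound on tails
  have hgeoT : ∀ m j, ρ ^ (j + 1) / (1 - ρ) * p (m + 1) ≤ expT p (m + 1 + j) := by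
    intro m j
    have hsg : Summable (fun k : ℕ => ρ ^ k * (ρ ^ (j + 1) * p (m + 1))) :=
      (summable_geometric_of_lt_one hρ0.le hρ1).mul_right _
    have hle : ∀ k : ℕ, ρ ^ k * (ρ ^ (j + 1) * p (m + 1)) ≤ p (k + (m + 1 + j) + 1) := by
      intro k
      have := hgeo m (k + j + 1)
      calc ρ ^ k * (ρ ^ (j + 1) * p (m + 1)) = ρ ^ (k + j + 1) * p (m + 1) := by ring
        _ ≤ p (m + 1 + (k + j + 1)) := this
        _ = p (k + (m + 1 + j) + 1) := by congr 1; omega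
    have h1 : (∑' k : ℕ, ρ ^ k * (ρ ^ (j + 1) * p (m + 1))) ≤ expT p (m + 1 + j) :=
      Summable.tsum_le_tsum hle hsg (hTsm _)
    rwa [tsum_mul_right, tsum_geometric_of_lt_one hρ0.le hρ1,
      show (1 - ρ)⁻¹ * (ρ ^ (j + 1) * p (m + 1)) = ρ ^ (j + 1) / (1 - ρ) * p (m + 1) from by
        ring] at h1
  have h1ρ : 0 < 1 - ρ := by linarith
  have hA : ∀ m, p (m + 1) < expT p (m + 1) := by
    intro m
    have h1 := hgeoT m 0
    norm_num at h1
    have hp := hpos (m + 1) (by omega : 1 ≤ m + 1)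
    have h2 : 1 < ρ / (1 - ρ) := by
      rw [lt_div_iff₀ h1ρ]
      nlinarith
    calc p (m + 1) = 1 * p (m + 1) := (one_mul _).symm
      _ < ρ / (1 - ρ) * p (m + 1) := mul_lt_mul_of_pos_right h2 hp
      _ ≤ expT p (m + 1) := h1
  have hB : ∀ m, p (m + 1) < expT p (m + 2) := by
    intro m
    have h1 := hgeoT m 1
    norm_num at h1
    have hp := hpos (m + 1) (by omega : 1 ≤ m + 1)
    have h2 : 1 < ρ ^ 2 / (1 - ρ) := by
      rw [lt_div_iff₀ h1ρ]
      nlinarith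
    calc p (m + 1) = 1 * p (m + 1) := (one_mul _).symm
      _ < ρ ^ 2 / (1 - ρ) * p (m + 1) := mul_lt_mul_of_pos_right h2 hp
      _ ≤ expT p (m + 2) := h1
  have hTpos : ∀ m, 0 < expT p m := by
    intro m
    rw [hTrec m]
    have := hpos (m + 1) (by omega : 1 ≤ m + 1)
    linarith [hTnn (m + 1)]
  have hT0 : expT p 0 = S := by
    rw [hS, expT]
  -- the invariant of the process
  have hinv : ∀ (b : ℕ → Bool) (m : ℕ),
      0 < (expSt p x b m).1 ∧ (expSt p x b m).1 < expT p m := by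
    intro b m
    induction m with
    | zero =>
      simp only [expSt]
      rw [hT0]
      exact ⟨hx1, hx2⟩
    | succ m ih =>
      obtain ⟨ih1, ih2⟩ := ih
      have hrec := hTrec m
      have hAm := hA m
      simp only [expSt]
      split_ifs with h1 h2 h3
      · constructor
        · simp only []
          linarith [h1.1]
        · simp only []
          linarith [h1.2, hpos (m + 1) (by omega : 1 ≤ m + 1)]
      · constructor
        · simp only []
          linarith
        · simp only []
          linarith [h1.2]
      · exact ⟨ih1, by linarith⟩
      · push_neg at h1 h3
        have hTle : expT p (m + 1) ≤ (expSt p x b m).1 := h1 (by linarith)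
        constructor
        · simp only []
          linarith
        · simp only []
          linarith
  -- the step equation for remainders
  have hstep : ∀ (b : ℕ → Bool) (m : ℕ), (expSt p x b (m + 1)).1 =
      (expSt p x b m).1 - ((expDg p x b m : ℕ) : ℝ) * p (m + 1) := by
    intro b m
    simp only [expSt, expDg]
    split_ifs with h1 h2 <;> simp
  -- counter step bounds
  have hctrle : ∀ (b : ℕ → Bool) (m : ℕ),
      (expSt p x b m).2 ≤ (expSt p x b (m + 1)).2 ∧
      (expSt p x b (m + 1)).2 ≤ (expSt p x b m).2 + 1 := by
    intro b m
    simp only [expSt]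
    split_ifs <;> simp
  have hmono0 : ∀ (b : ℕ → Bool) (m k : ℕ),
      (expSt p x b m).2 ≤ (expSt p x b (m + k)).2 := by
    intro b m k
    induction k with
    | zero => exact le_rfl
    | succ k ihk => exact le_trans ihk (hctrle b (m + k)).1
  have hmono : ∀ (b : ℕ → Bool) (m n : ℕ), m ≤ n →
      (expSt p x b m).2 ≤ (expSt p x b n).2 := by
    intro b m n hmn
    have := hmono0 b m (n - m)
    rwa [show m + (n - m) = n from by omega] at this
  -- branch increments the counter
  have hctr_br : ∀ (b : ℕ → Bool) (m : ℕ),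
      (p (m + 1) < (expSt p x b m).1 ∧ (expSt p x b m).1 < expT p (m + 1)) →
      (expSt p x b (m + 1)).2 = (expSt p x b m).2 + 1 := by
    intro b m hbr
    simp only [expSt]
    rw [if_pos hbr]
  have hctr_nbr : ∀ (b : ℕ → Bool) (m : ℕ),
      ¬(p (m + 1) < (expSt p x b m).1 ∧ (expSt p x b m).1 < expT p (m + 1)) →
      (expSt p x b (m + 1)).2 = (expSt p x b m).2 := by
    intro b m hbr
    simp only [expSt]
    rw [if_neg hbr]
    split_ifs <;> rfl
  -- step characterizations
  have hstepA : ∀ (b : ℕ → Bool) (m : ℕ), (expSt p x b m).1 ≤ p (m + 1) →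
      expSt p x b (m + 1) = expSt p x b m := by
    intro b m hle
    have hnbr : ¬(p (m + 1) < (expSt p x b m).1 ∧ (expSt p x b m).1 < expT p (m + 1)) :=
      fun hh => absurd hh.1 (not_lt.mpr hle)
    simp only [expSt]
    rw [if_neg hnbr, if_pos hle]
  have hstepB : ∀ (b : ℕ → Bool) (m : ℕ), expT p (m + 1) ≤ (expSt p x b m).1 →
      expSt p x b (m + 1) = ((expSt p x b m).1 - p (m + 1), (expSt p x b m).2) := by
    intro b m hge
    have hnbr : ¬(p (m + 1) < (expSt p x b m).1 ∧ (expSt p x b m).1 < expT p (m + 1)) :=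
      fun hh => absurd hh.2 (not_lt.mpr hge)
    have hnle : ¬((expSt p x b m).1 ≤ p (m + 1)) :=
      not_le.mpr (lt_of_lt_of_le (hA m) hge)
    simp only [expSt]
    rw [if_neg hnbr, if_neg hnle]
  -- a branch always eventually occurs
  have hnb : ∀ (b : ℕ → Bool) (M : ℕ), ∃ m, M ≤ m ∧
      (p (m + 1) < (expSt p x b m).1 ∧ (expSt p x b m).1 < expT p (m + 1)) := by
    intro b M
    by_contra hcon
    push_neg at hcon
    by_cases hc : ∃ m, M ≤ m ∧ (expSt p x b m).1 ≤ p (m + 1)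
    · obtain ⟨m, hm, hle⟩ := hc
      have hconst : ∀ k, (expSt p x b (m + k)).1 = (expSt p x b m).1 ∧
          (expSt p x b m).1 ≤ p (m + k + 1) := by
        intro k
        induction k with
        | zero => exact ⟨rfl, hle⟩
        | succ k ihk =>
          obtain ⟨ihe, ihle⟩ := ihk
          have hle' : (expSt p x b (m + k)).1 ≤ p (m + k + 1) := by rw [ihe]; exact ihle
          have hstY : expSt p x b (m + k + 1) = expSt p x b (m + k) := hstepA b (m + k) hle'
          have he1 : (expSt p x b (m + (k + 1))).1 = (expSt p x b m).1 := by
            rw [show m + (k + 1) = m + k + 1 from by omega, hstY, ihe]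
          refine ⟨he1, ?_⟩
          -- not a branch at m + k + 1, but remainder is below the tail, so it is below next term
          have hnbr := hcon (m + k + 1) (by omega)
          have hltT : (expSt p x b (m + k + 1)).1 < expT p (m + k + 1 + 1) := by
            rw [hstY, ihe, show m + k + 1 + 1 = m + k + 2 from by omega]
            calc (expSt p x b m).1 ≤ p (m + k + 1) := ihle
              _ < expT p (m + k + 2) := hB (m + k)
          by_contra hcon2
          push_neg at hcon2
          have h3 : p (m + k + 1 + 1) < (expSt p x b (m + k + 1)).1 := by
            rw [hstY, ihe]
            rw [show m + k + 1 + 1 = m + (k + 1) + 1 from by omega]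
            exact hcon2
          exact absurd hltT (not_lt.mpr (hnbr h3))
      have htend : Tendsto (fun k => p (m + k + 1)) atTop (𝓝 0) := by
        have h1 : Tendsto (fun k : ℕ => k + (m + 1)) atTop atTop := tendsto_add_atTop_nat (m + 1)
        refine (hlim.comp h1).congr fun k => ?_
        simp only [Function.comp_apply]
        congr 1
        omega
      have hle0 : (expSt p x b m).1 ≤ 0 :=
        ge_of_tendsto' htend fun k => (hconst k).2
      exact absurd hle0 (not_le.mpr (hinv b m).1)
    · push_neg at hc
      have hsub : ∀ k, (expSt p x b (M + k)).1 =
          (expSt p x b M).1 - ∑ i ∈ Finset.range k, p (M + i + 1) := by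
        intro k
        induction k with
        | zero => simp
        | succ k ihk =>
          have hgt : p (M + k + 1) < (expSt p x b (M + k)).1 := hc (M + k) (by omega)
          have hge : expT p (M + k + 1) ≤ (expSt p x b (M + k)).1 := hcon (M + k) (by omega) hgt
          have hstY := hstepB b (M + k) hge
          rw [show M + (k + 1) = M + k + 1 from by omega, hstY]
          simp only []
          rw [ihk, Finset.sum_range_succ]
          ring
      have hbound : ∀ k, ∑ i ∈ Finset.range k, p (i + M + 1) ≤ (expSt p x b M).1 := by
        intro k
        have h1 := (hinv b (M + k)).1
        rw [hsub k] at h1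
        have h2 : ∑ i ∈ Finset.range k, p (i + M + 1) = ∑ i ∈ Finset.range k, p (M + i + 1) :=
          Finset.sum_congr rfl fun i _ => by rw [show i + M + 1 = M + i + 1 from by omega]
        rw [h2]
        linarith
      have hTle : expT p M ≤ (expSt p x b M).1 := by
        rw [expT]
        exact Real.tsum_le_of_sum_range_le
          (fun k => (hpos (k + M + 1) (by omega)).le) hbound
      exact absurd hTle (not_le.mpr (hinv b M).2)
  -- the counter is unbounded
  have hub : ∀ (b : ℕ → Bool) (j : ℕ), ∃ m, j ≤ (expSt p x b m).2 := by
    intro b j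
    induction j with
    | zero => exact ⟨0, Nat.zero_le _⟩
    | succ j ihj =>
      obtain ⟨m, hm⟩ := ihj
      obtain ⟨m', hmm', hbr⟩ := hnb b m
      refine ⟨m' + 1, ?_⟩
      rw [hctr_br b m' hbr]
      have := hmono b m m' hmm'
      omega
  -- the counter takes every value at a branching step
  have hhit : ∀ (b : ℕ → Bool) (j : ℕ), ∃ m, (expSt p x b m).2 = j ∧
      (p (m + 1) < (expSt p x b m).1 ∧ (expSt p x b m).1 < expT p (m + 1)) := by
    intro b j
    have hex : ∃ m, j + 1 ≤ (expSt p x b m).2 := hub b (j + 1)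
    classical
    have hne : Nat.find hex ≠ 0 := by
      intro h0
      have hspec := Nat.find_spec hex
      rw [h0] at hspec
      simp only [expSt] at hspec
      omega
    obtain ⟨n, hn⟩ : ∃ n, Nat.find hex = n + 1 := ⟨Nat.find hex - 1, by omega⟩
    have hspec := Nat.find_spec hex
    rw [hn] at hspec
    have hmin : ¬ (j + 1 ≤ (expSt p x b n).2) := Nat.find_min hex (by omega)
    push_neg at hmin
    have hctr := (hctrle b n).2
    have hcn : (expSt p x b n).2 = j := by omega
    refine ⟨n, hcn, ?_⟩
    by_contra hnbr
    rw [hctr_nbr b n hnbr] at hspec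
    omega
  -- states agree as long as only common bits have been consumed
  have hpre : ∀ (b b' : ℕ → Bool) (j : ℕ), (∀ k, k < j → b k = b' k) →
      ∀ m, (expSt p x b m).2 ≤ j → expSt p x b m = expSt p x b' m := by
    intro b b' j hag m
    induction m with
    | zero => intro _; rfl
    | succ m ih =>
      intro hle
      have hmle : (expSt p x b m).2 ≤ j := le_trans (hctrle b m).1 hle
      have heq := ih hmle
      by_cases hbr : p (m + 1) < (expSt p x b m).1 ∧ (expSt p x b m).1 < expT p (m + 1)
      · have hc2 : (expSt p x b m).2 < j := by
          have := hctr_br b m hbr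
          omega
        have hbb : b (expSt p x b m).2 = b' (expSt p x b m).2 := hag _ hc2
        simp only [expSt]
        rw [← heq, if_pos hbr, if_pos hbr, hbb]
      · simp only [expSt]
        rw [← heq, if_neg hbr, if_neg hbr]
  -- the digits of `b` sum to `x`
  have hps : ∀ (b : ℕ → Bool) (m : ℕ),
      ∑ i ∈ Finset.range m, ((expDg p x b i : ℕ) : ℝ) * p (i + 1) = x - (expSt p x b m).1 := by
    intro b m
    induction m with
    | zero => simp [expSt]
    | succ m ih =>
      rw [Finset.sum_range_succ, ih, hstep b m]
      ring
  have hTlim : Tendsto (expT p) atTop (𝓝 0) := by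
    have := tendsto_sum_nat_add (f := fun n => p (n + 1))
    exact this
  have hrlim : ∀ b : ℕ → Bool, Tendsto (fun m => (expSt p x b m).1) atTop (𝓝 0) :=
    fun b => tendsto_of_tendsto_of_tendsto_of_le_of_le tendsto_const_nhds hTlim
      (fun m => (hinv b m).1.le) (fun m => (hinv b m).2.le)
  have htsum : ∀ b : ℕ → Bool, x = ∑' i : ℕ, ((expDg p x b i : ℕ) : ℝ) * p (i + 1) := by
    intro b
    have hpt : Tendsto (fun m => ∑ i ∈ Finset.range m, ((expDg p x b i : ℕ) : ℝ) * p (i + 1))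
        atTop (𝓝 x) := by
      have h1 : Tendsto (fun m => x - (expSt p x b m).1) atTop (𝓝 (x - 0)) :=
        tendsto_const_nhds.sub (hrlim b)
      rw [sub_zero] at h1
      exact h1.congr fun m => (hps b m).symm
    have hsm : Summable (fun i => ((expDg p x b i : ℕ) : ℝ) * p (i + 1)) := by
      apply summable_of_sum_range_le (c := x)
      · intro n
        exact mul_nonneg (by positivity) (hpos (n + 1) (by omega)).le
      · intro n
        rw [hps b n]
        linarith [(hinv b n).1]
    exact tendsto_nhds_unique hpt hsm.hasSum.tendsto_sum_nat
  -- the injection from bit sequences to expansions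
  set G : (ℕ → Bool) → {c : ℕ → Fin 2 // x = ∑' i : ℕ, ((c i : ℕ) : ℝ) * p (i + 1)} :=
    fun b => ⟨expDg p x b, htsum b⟩ with hG
  have hGinj : Function.Injective G := by
    intro b b' hGe
    by_contra hne
    have hex : ∃ k, b k ≠ b' k := Function.ne_iff.mp hne
    classical
    have hj : b (Nat.find hex) ≠ b' (Nat.find hex) := Nat.find_spec hex
    have hag : ∀ k, k < Nat.find hex → b k = b' k := fun k hk =>
      not_not.mp (Nat.find_min hex hk)
    obtain ⟨m, hm2, hmbr⟩ := hhit b (Nat.find hex)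
    have heq : expSt p x b m = expSt p x b' m := hpre b b' (Nat.find hex) hag m (le_of_eq hm2)
    have hbr' : p (m + 1) < (expSt p x b' m).1 ∧ (expSt p x b' m).1 < expT p (m + 1) := by
      rw [← heq]; exact hmbr
    have hd : expDg p x b m ≠ expDg p x b' m := by
      simp only [expDg]
      rw [if_pos hmbr, if_pos hbr', ← heq, hm2]
      rcases Bool.eq_false_or_eq_true (b (Nat.find hex)) with h | h <;>
        rcases Bool.eq_false_or_eq_true (b' (Nat.find hex)) with h' | h' <;>
          simp [h, h'] <;> simp [h, h'] at hj
    have hde : expDg p x b = expDg p x b' := congrArg Subtype.val hGe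
    exact hd (congrFun hde m)
  -- conclude by antisymmetry of cardinals
  apply le_antisymm
  · have h1 : Cardinal.mk (ℕ → Fin 2) = Cardinal.continuum := by
      rw [← Cardinal.power_def, Cardinal.mk_fin, Cardinal.mk_nat]
      norm_num
    exact h1 ▸ Cardinal.mk_subtype_le _
  · have h1 : Cardinal.mk (ℕ → Bool) = Cardinal.continuum := by
      rw [← Cardinal.power_def, Cardinal.mk_bool, Cardinal.mk_nat, Cardinal.two_power_aleph0]
    exact h1 ▸ Cardinal.mk_le_of_injective hGinj
end

section
/- Let (F_i) be the Fibonacci sequence with F_1 = F_2 = 1 and F_{i+2} = F_{i+1} + F_i. Then for every positive odd integer k, the strict inequality 1/F_k < Σ_{i=k+2}^∞ 1/F_i holds. -/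
set_option maxHeartbeats 1000000

open Nat Filter Finset

-- Catalan identity
lemma catalan_fib (n : ℕ) : (fib (n+1) : ℤ)^2 - fib n * fib (n+2) = (-1)^n := by
  induction n with
  | zero => simp
  | succ m ih =>
    have h2 : (fib (m+3) : ℤ) = fib (m+2) + fib (m+1) := by
      have := Nat.fib_add_two (n := m+1); push_cast [this]; ring
    have h1 : (fib (m+2) : ℤ) = fib (m+1) + fib m := by
      have := Nat.fib_add_two (n := m); push_cast [this]; ring
    rw [h2]
    have : (fib (m+2):ℤ)^2 - fib (m+1) * (fib (m+2) + fib (m+1))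
        = -((fib (m+1):ℤ)^2 - fib m * fib (m+2)) := by rw [h1]; ring
    rw [this, ih]; ring

lemma fib_pos' {n : ℕ} (h : 1 ≤ n) : 0 < (fib n : ℝ) := by
  exact_mod_cast Nat.fib_pos.mpr h

-- key inequality: for odd n ≥ 1, 1/fib n < 2/fib(n+2) + 1/fib(n+3)
lemma key (n : ℕ) (hn : 1 ≤ n) (hodd : Odd n) :
    (1:ℝ)/fib n - 1/fib (n+2) < 1/fib (n+2) + 1/fib (n+3) := by
  have ha := fib_pos' hn
  have hc := fib_pos' (show 1 ≤ n+2 by omega)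
  have hd := fib_pos' (show 1 ≤ n+3 by omega)
  have hb := fib_pos' (show 1 ≤ n+1 by omega)
  have hcat : (fib n : ℝ) * fib (n+2) = fib (n+1)^2 + 1 := by
    have := catalan_fib n
    rw [Odd.neg_one_pow hodd] at this
    have : (fib n : ℤ) * fib (n+2) = fib (n+1)^2 + 1 := by linarith
    exact_mod_cast this
  have hc' : (fib (n+2) : ℝ) = fib n + fib (n+1) := by
    have := Nat.fib_add_two (n := n); push_cast [this]; ring
  have hd' : (fib (n+3) : ℝ) = fib (n+1) + fib (n+2) := by
    have := Nat.fib_add_two (n := n+1); push_cast [this]; ring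
  rw [div_sub_div _ _ ha.ne' hc.ne', div_add_div _ _ hc.ne' hd.ne',
    div_lt_div_iff₀ (by positivity) (by positivity)]
  nlinarith [mul_pos ha hb, mul_pos hb hc, mul_pos hc hd, mul_pos ha hd,
    mul_pos (mul_pos ha hb) hc]

lemma le_fib_succ (n : ℕ) : (n : ℕ) ≤ fib (n+1) := by
  induction n with
  | zero => simp
  | succ m ih =>
    rcases Nat.eq_zero_or_pos m with h | h
    · subst h; simp
    · have h1 : 1 ≤ fib m := Nat.fib_pos.mpr h
      have h2 := Nat.fib_add_two (n := m)
      have h3 : fib (m+1+1) = fib (m+2) := rfl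
      omega

lemma fib_ge_geom (i : ℕ) : (3/2 : ℝ)^i ≤ fib (i+2) := by
  induction i using Nat.twoStepInduction with
  | zero => norm_num
  | one => norm_num
  | more m ih2 ih1 =>
    have h : fib (m+4) = fib (m+3) + fib (m+2) := by
      have h2 := Nat.fib_add_two (n := m+2)
      have h3 : fib (m+2+2) = fib (m+4) := rfl
      have h4 : fib (m+2+1) = fib (m+3) := rfl
      omega
    have : (fib (m+4):ℝ) = fib (m+3) + fib (m+2) := by exact_mod_cast h
    rw [this]
    have h32 : (3/2:ℝ)^(m+2) = (3/2)^m * (9/4) := by ring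
    have h31 : (3/2:ℝ)^(m+1) = (3/2)^m * (3/2) := by ring
    nlinarith [pow_pos (show (0:ℝ) < 3/2 by norm_num) m]

/-- For the Fibonacci sequence, if `k` is a positive odd integer then
`1/F_k < Σ_{i=k+2}^∞ 1/F_i`. -/
theorem stmt_12 (F : ℕ → ℕ) (h1 : F 1 = 1) (h2 : F 2 = 1)
    (hrec : ∀ i, 1 ≤ i → F (i + 2) = F (i + 1) + F i)
    (k : ℕ) (hk : 1 ≤ k) (hodd : Odd k) :
    (1 : ℝ) / (F k : ℝ) < ∑' i : ℕ, (1 : ℝ) / (F (k + 2 + i) : ℝ) := by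
  -- F agrees with fib on positive indices
  have hF : ∀ n, F (n+1) = fib (n+1) ∧ F (n+2) = fib (n+2) := by
    intro n
    induction n with
    | zero => simp [h1, h2]
    | succ m ih =>
      refine ⟨ih.2, ?_⟩
      rw [hrec (m+1) (by omega), ih.1, ih.2]
      have h2 := Nat.fib_add_two (n := m+1)
      have h3 : fib (m+1+2) = fib (m+3) := rfl
      have h4 : fib (m+2+1) = fib (m+3) := rfl
      have h5 : fib (m+1+1) = fib (m+2) := rfl
      omega
  have hFe : ∀ n, 1 ≤ n → F n = fib n := by
    intro n hn
    obtain ⟨m, rfl⟩ := Nat.exists_eq_add_of_le hn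
    have := (hF m).1
    rwa [show 1 + m = m + 1 by omega]
  rw [hFe k hk]
  have hsum_eq : ∀ i : ℕ, (1:ℝ) / (F (k+2+i)) = 1 / fib (k+2+i) := by
    intro i; rw [hFe _ (by omega)]
  simp only [hsum_eq]
  -- summability of the tail
  have hh_nonneg : ∀ i : ℕ, (0:ℝ) ≤ 1 / fib (k+2+i) := fun i => by positivity
  have hS : Summable (fun i : ℕ => (1:ℝ) / fib (k+2+i)) := by
    have hle : ∀ i : ℕ, (1:ℝ) / fib (k+2+i) ≤ (2/3:ℝ)^i := by
      intro i
      have h1 : (3/2:ℝ)^i ≤ fib (i+2) := fib_ge_geom i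
      have h2 : (fib (i+2):ℝ) ≤ fib (k+2+i) := by
        exact_mod_cast Nat.fib_mono (by omega)
      have hp : (0:ℝ) < (3/2)^i := by positivity
      rw [div_le_iff₀ (by linarith), ← div_le_iff₀' (by positivity)]
      calc (1:ℝ)/(2/3)^i = (3/2)^i := by
            rw [one_div, ← inv_pow]; norm_num
        _ ≤ fib (k+2+i) := le_trans h1 h2
    exact Summable.of_nonneg_of_le hh_nonneg hle
      (summable_geometric_of_lt_one (by norm_num) (by norm_num))
  -- telescoping sum equals 1/fib k
  set g : ℕ → ℝ := fun j => 1 / fib (k + 2*j) with hg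
  have hg0 : g 0 = 1 / fib k := by simp [hg]
  have hgmono : ∀ j, g (j+1) ≤ g j := by
    intro j
    apply div_le_div_of_nonneg_left one_pos.le (fib_pos' (by omega))
    exact_mod_cast Nat.fib_mono (by omega)
  have hgtendsto : Tendsto g atTop (nhds 0) := by
    have h1 : Tendsto (fun j : ℕ => ((fib (k+2*j) : ℝ))) atTop atTop := by
      apply tendsto_atTop_mono (f := fun j : ℕ => (j:ℝ))
      · intro j
        have : j ≤ fib (k + 2*j) := le_trans (le_fib_succ j) (Nat.fib_mono (by omega))
        exact_mod_cast this
      · exact tendsto_natCast_atTop_atTop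
    simpa [hg, one_div, Pi.inv_def] using h1.inv_tendsto_atTop
  have htel : HasSum (fun j => g j - g (j+1)) (1 / fib k) := by
    rw [← hg0]
    rw [hasSum_iff_tendsto_nat_of_nonneg (fun j => by linarith [hgmono j])]
    have : ∀ n, ∑ i ∈ range n, (g i - g (i+1)) = g 0 - g n :=
      fun n => Finset.sum_range_sub' g n
    simp only [this]
    simpa using (tendsto_const_nhds (x := g 0)).sub hgtendsto
  -- pair grouping of the tail
  have hSe : Summable (fun j : ℕ => (1:ℝ) / fib (k+2+2*j)) := by
    have := hS.comp_injective (i := fun j : ℕ => 2*j)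
      (fun a b h => by simpa using h)
    simpa [Function.comp_def] using this
  have hSo : Summable (fun j : ℕ => (1:ℝ) / fib (k+2+(2*j+1))) := by
    have := hS.comp_injective (i := fun j : ℕ => 2*j+1)
      (fun a b h => by simpa using h)
    simpa [Function.comp_def] using this
  have hpair : (∑' j : ℕ, ((1:ℝ) / fib (k+2+2*j) + 1 / fib (k+2+(2*j+1))))
      = ∑' i : ℕ, (1:ℝ) / fib (k+2+i) := by
    rw [Summable.tsum_add hSe hSo]
    exact tsum_even_add_odd (f := fun i => (1:ℝ)/fib (k+2+i)) hSe hSo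
  rw [← hpair, ← htel.tsum_eq]
  apply Summable.tsum_lt_tsum (i := 0) _ _ htel.summable (hSe.add hSo)
  · intro j
    have hkey := key (k+2*j) (by omega) (by
      obtain ⟨m, rfl⟩ := hodd; exact ⟨m + j, by ring⟩)
    have e1 : k + 2*(j+1) = k + 2*j + 2 := by ring
    have e2 : k + 2 + 2*j = k + 2*j + 2 := by ring
    have e3 : k + 2 + (2*j+1) = k + 2*j + 3 := by ring
    simp only [hg, e1, e2, e3]
    linarith
  · have hkey := key k hk hodd
    have e2 : k + 2 + 2*0 = k + 2 := by ring
    have e3 : k + 2 + (2*0+1) = k + 3 := by ring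
    simp only [hg, e2, e3]
    norm_num
    simp only [one_div] at hkey
    linarith
end

section
/- Let (p_i)_{i≥1} be a Kakeya sequence (positive, p_i → 0, and p_n ≤ Σ_{i=n+1}^∞ p_i for all n) with convergent sum S = Σ_{i=1}^∞ p_i. Then for every x ∈ [0, S] there exists a subset A ⊆ ℕ such that Σ_{i∈A} p_i = x (and Σ_{i∈ℕ∖A} p_i = S − x). -/
open Classical in
/-- Greedy partial sums: at step `n`, add `q n` if it keeps the sum `≤ x`. -/
noncomputable def kakGreedy (q : ℕ → ℝ) (x : ℝ) : ℕ → ℝ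
  | 0 => 0
  | n + 1 => kakGreedy q x n + (if kakGreedy q x n + q n ≤ x then q n else 0)

open Classical in
theorem kak_core (q : ℕ → ℝ) (hqpos : ∀ i, 0 < q i) (hq : Summable q)
    (hkak : ∀ n, q n ≤ ∑' i : ℕ, q (n + 1 + i))
    (x : ℝ) (hx0 : 0 ≤ x) (hxS : x ≤ ∑' i, q i) :
    ∃ B : Set ℕ, (∑' i : B, q i) = x := by
  set s := kakGreedy q x with hs
  set g : ℕ → ℝ := fun n => if s n + q n ≤ x then q n else 0 with hg
  have hstep : ∀ n, s (n + 1) = s n + g n := fun n => rfl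
  have hsrange : ∀ n, s n = ∑ i ∈ Finset.range n, g i := by
    intro n
    induction n with
    | zero => rfl
    | succ n ih => rw [hstep, Finset.sum_range_succ, ih]
  have hsle : ∀ n, s n ≤ x := by
    intro n
    induction n with
    | zero => exact hx0
    | succ n ih =>
      rw [hstep]
      by_cases h : s n + q n ≤ x
      · simp [hg, h]
      · simpa [hg, h] using ih
  set T : ℕ → ℝ := fun n => ∑' i, q (i + n) with hT
  have hinv : ∀ n, x - s n ≤ T n := by
    intro n
    induction n with
    | zero =>
      have h0 : s 0 = 0 := rfl
      simp only [hT, h0, sub_zero, Nat.add_zero]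
      exact hxS
    | succ n ih =>
      have hTn : T n = q n + T (n + 1) := by
        have hsum' : Summable (fun i => q (i + n)) := (summable_nat_add_iff n).2 hq
        have h := Summable.tsum_eq_zero_add hsum'
        simp only [hT, zero_add] at h ⊢
        rw [h]
        congr 1
        apply tsum_congr; intro i; congr 1; omega
      rw [hstep]
      by_cases h : s n + q n ≤ x
      · have : x - (s n + q n) ≤ T n - q n := by linarith
        simp only [hg, if_pos h]
        linarith [hTn]
      · have h1 : x - s n < q n := by linarith [not_le.mp h]
        have h2 : q n ≤ T (n + 1) := by
          have := hkak n
          calc q n ≤ ∑' i : ℕ, q (n + 1 + i) := hkak n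
            _ = T (n + 1) := by
              apply tsum_congr; intro i; ring_nf
        simp only [hg, if_neg h]
        linarith
  have hTtend : Filter.Tendsto T Filter.atTop (nhds 0) := by
    have h1 : ∀ n, T n = (∑' i, q i) - ∑ i ∈ Finset.range n, q i := by
      intro n
      have := (Summable.sum_add_tsum_nat_add n hq).symm
      simp only [hT]
      linarith [Summable.sum_add_tsum_nat_add n hq]
    have h2 : Filter.Tendsto (fun n => ∑ i ∈ Finset.range n, q i) Filter.atTop
        (nhds (∑' i, q i)) := hq.hasSum.tendsto_sum_nat
    have := (tendsto_const_nhds (x := ∑' i, q i) (f := Filter.atTop)).sub h2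
    simp only [sub_self] at this
    exact this.congr fun n => (h1 n).symm
  have hstend : Filter.Tendsto s Filter.atTop (nhds x) := by
    have hlow : Filter.Tendsto (fun n => x - T n) Filter.atTop (nhds x) := by
      simpa using (tendsto_const_nhds (x := x) (f := Filter.atTop)).sub hTtend
    refine tendsto_of_tendsto_of_tendsto_of_le_of_le hlow tendsto_const_nhds
      (fun n => by linarith [hinv n]) (fun n => hsle n)
  have hgsum : Summable g := by
    refine Summable.of_nonneg_of_le (fun n => ?_) (fun n => ?_) hq
    · by_cases h : s n + q n ≤ x <;> simp [hg, h, (hqpos n).le]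
    · by_cases h : s n + q n ≤ x <;> simp [hg, h, (hqpos n).le]
  have hgx : (∑' n, g n) = x := by
    have h2 : Filter.Tendsto (fun n => ∑ i ∈ Finset.range n, g i) Filter.atTop
        (nhds (∑' n, g n)) := hgsum.hasSum.tendsto_sum_nat
    have h3 : Filter.Tendsto s Filter.atTop (nhds (∑' n, g n)) :=
      h2.congr fun n => (hsrange n).symm
    exact tendsto_nhds_unique h3 hstend
  refine ⟨{n | s n + q n ≤ x}, ?_⟩
  have heq : (∑' n, Set.indicator {n | s n + q n ≤ x} q n) = ∑' n, g n := by
    apply tsum_congr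
    intro n
    simp only [Set.indicator_apply, Set.mem_setOf_eq, hg]
  rw [tsum_subtype, heq, hgx]

/-- If `(p_i)_{i ≥ 1}` is a Kakeya sequence with convergent sum `S`, then for every
`x ∈ [0, S]` there is a set `A` of indices (all `≥ 1`) with `Σ_{i ∈ A} p_i = x` and
`Σ_{i ∉ A} p_i = S - x`. -/
theorem stmt_13 (p : ℕ → ℝ) (S : ℝ)
    (hpos : ∀ i, 1 ≤ i → 0 < p i)
    (hlim : Filter.Tendsto p Filter.atTop (nhds 0))
    (hsum : Summable (fun i => p (i + 1)))
    (hkak : ∀ n, 1 ≤ n → p n ≤ ∑' i : ℕ, p (n + 1 + i))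
    (hS : S = ∑' i : ℕ, p (i + 1))
    (x : ℝ) (hx : x ∈ Set.Icc 0 S) :
    ∃ A : Set ℕ, A ⊆ {i : ℕ | 1 ≤ i} ∧
      (∑' i : A, p i) = x ∧ (∑' i : ({i : ℕ | 1 ≤ i} \ A : Set ℕ), p i) = S - x := by
  set q : ℕ → ℝ := fun i => p (i + 1) with hqdef
  have hqpos : ∀ i, 0 < q i := fun i => hpos (i + 1) (Nat.le_add_left 1 i)
  have hqkak : ∀ n, q n ≤ ∑' i : ℕ, q (n + 1 + i) := by
    intro n
    have := hkak (n + 1) (Nat.le_add_left 1 n)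
    calc q n = p (n + 1) := rfl
      _ ≤ ∑' i : ℕ, p (n + 1 + 1 + i) := this
      _ = ∑' i : ℕ, q (n + 1 + i) := by
        apply tsum_congr; intro i; simp only [hqdef]; ring_nf
  obtain ⟨B, hB⟩ := kak_core q hqpos hsum hqkak x hx.1 (hS ▸ hx.2)
  refine ⟨(· + 1) '' B, ?_, ?_, ?_⟩
  · rintro n ⟨m, _, rfl⟩; exact Nat.le_add_left 1 m
  · rw [tsum_image p (Set.injOn_of_injective (add_left_injective 1))]
    exact hB
  · have hC : ({i : ℕ | 1 ≤ i} \ ((· + 1) '' B) : Set ℕ) = (· + 1) '' Bᶜ := by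
      ext n
      constructor
      · rintro ⟨h1, h2⟩
        obtain ⟨m, rfl⟩ := Nat.exists_eq_add_of_le h1
        refine ⟨m, fun hm => h2 ⟨m, hm, by simp [Nat.add_comm]⟩, by simp [Nat.add_comm]⟩
      · rintro ⟨m, hm, rfl⟩
        refine ⟨Nat.le_add_left 1 m, ?_⟩
        rintro ⟨k, hk, hkm⟩
        simp only [] at hkm
        have : k = m := by omega
        exact hm (this ▸ hk)
    rw [hC, tsum_image p (Set.injOn_of_injective (add_left_injective 1))]
    have := Summable.tsum_subtype_add_tsum_subtype_compl hsum B
    have hq' : (∑' i : B, q i) = ∑' i : B, p (i + 1) := rfl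
    have hqc : (∑' i : ↥Bᶜ, q i) = ∑' i : ↥Bᶜ, p (i + 1) := rfl
    rw [hS]
    -- this : ∑' B q + ∑' Bᶜ q = ∑' q
    linarith [hB, this, hq'.symm, hqc.symm]
end
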